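/- arXiv:1304.1289 — 11 statements merged into one kernel-verified Lean document; each statement's English description precedes it below -/
import Mathlib

section
/- Let n ≥ 1 and let F be a finite family of n-tuples v = (v₁, …, vₙ) of vectors of ℤ^n, each forming a ℤ-basis of ℤ^n (equivalently, the integer matrix M_v whose columns are v₁, …, vₙ has determinant ±1), such that the union over v ∈ F of the cones Cone(v) = { Σ_k c_k v_k | c_k ∈ ℝ, c_k ≥ 0 } is all of ℝ^n. Then for every y ∈ (ℂ \ {0})^n there exists v ∈ F such that for every j ∈ {1, …, n}, |∏_{k=1}^n y_k^{A_{jk}}| ≤ 1, where A = M_v⁻¹ is the (integer) inverse matrix of M_v and the powers are integer powers (zpow). -/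
/-- If a finite family `F` of `ℤ`-bases `v = (v₁, …, vₙ)` of `ℤⁿ` is such that the
cones `Cone(v)` cover `ℝⁿ`, then for every `y ∈ (ℂ \ {0})ⁿ` there is `v ∈ F` with
`|∏ₖ yₖ^{A_{jk}}| ≤ 1` for all `j`, where `A = M_v⁻¹` and `M_v` has columns `v₁, …, vₙ`. -/
theorem stmt_1 (n : ℕ) (hn : 1 ≤ n) (F : Finset (Fin n → Fin n → ℤ))
    (hbasis : ∀ v ∈ F,
      (Matrix.of fun i k => v k i).det = 1 ∨ (Matrix.of fun i k => v k i).det = -1)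
    (hcover : ∀ y : Fin n → ℝ, ∃ v ∈ F, ∃ c : Fin n → ℝ, (∀ k, 0 ≤ c k) ∧
      ∀ i, y i = ∑ k, c k * (v k i : ℝ))
    (y : Fin n → ℂ) (hy : ∀ k, y k ≠ 0) :
    ∃ v ∈ F, ∀ j : Fin n,
      ‖∏ k, y k ^ ((Matrix.of fun i k => v k i)⁻¹ j k)‖ ≤ 1 := by
  obtain ⟨v, hv, c, hc, hx⟩ := hcover (fun i => -Real.log ‖y i‖)
  refine ⟨v, hv, fun j => ?_⟩
  set M : Matrix (Fin n) (Fin n) ℤ := Matrix.of fun i k => v k i with hM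
  have hdet : IsUnit M.det := by
    rcases hbasis v hv with h | h <;> rw [show M.det = _ from h]
    · exact isUnit_one
    · exact isUnit_one.neg
  have hAM : M⁻¹ * M = 1 := Matrix.nonsing_inv_mul M hdet
  have habs : ∀ k, (0:ℝ) < ‖y k‖ := fun k => by
    simpa using (hy k)
  -- key identity
  have key : ∑ k, (M⁻¹ j k : ℝ) * (-Real.log ‖y k‖) = c j := by
    calc ∑ k, (M⁻¹ j k : ℝ) * (-Real.log ‖y k‖)
        = ∑ k, ∑ l, c l * ((M⁻¹ j k : ℝ) * (M k l : ℝ)) := by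
          refine Finset.sum_congr rfl fun k _ => ?_
          rw [hx k, Finset.mul_sum]
          exact Finset.sum_congr rfl fun l _ => by simp only [hM, Matrix.of_apply]; ring
      _ = ∑ l, c l * ∑ k, ((M⁻¹ j k : ℝ) * (M k l : ℝ)) := by
          rw [Finset.sum_comm]
          exact Finset.sum_congr rfl fun l _ => by rw [Finset.mul_sum]
      _ = c j := by
          have h1 : ∀ l, ∑ k, ((M⁻¹ j k : ℝ) * (M k l : ℝ)) = (((M⁻¹ * M) j l : ℤ) : ℝ) := by
            intro l
            rw [Matrix.mul_apply]
            push_cast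
            rfl
          simp only [h1, hAM]
          simp [Matrix.one_apply]
  have hpos : (0:ℝ) < ∏ k, ‖y k‖ ^ (M⁻¹ j k) :=
    Finset.prod_pos fun k _ => zpow_pos (habs k) _
  have heq : ‖∏ k, y k ^ (M⁻¹ j k)‖ = ∏ k, ‖y k‖ ^ (M⁻¹ j k) := by
    rw [norm_prod]
    exact Finset.prod_congr rfl fun k _ => norm_zpow _ _
  rw [heq]
  rw [← Real.log_nonpos_iff hpos.le]
  rw [Real.log_prod (fun k _ => (zpow_pos (habs k) _).ne')]
  have : ∑ k, Real.log (‖y k‖ ^ (M⁻¹ j k)) = -c j := by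
    rw [← key, ← Finset.sum_neg_distrib]
    refine Finset.sum_congr rfl fun k _ => ?_
    rw [Real.log_zpow]
    ring
  rw [this]
  simpa using hc j
end

section
/- Let n ≥ 1 and let F be a finite family of n-tuples ṽ = (ṽ₁, …, ṽₙ) of vectors of ℕ^n (nonnegative integer entries), each forming a ℤ-basis of ℤ^n, such that the union over ṽ ∈ F of the cones Cone(ṽ) = { Σ_k c_k ṽ_k | c_k ≥ 0 } contains the nonnegative orthant [0,∞)^n. For ṽ ∈ F define the monomial map μ_ṽ : ℂ^n → ℂ^n by (μ_ṽ(x))_j = ∏_{k=1}^n x_k^{(ṽ_k)_j} (natural-number exponents). Then ⋃_{ṽ ∈ F} μ_ṽ(D̄^n) = D̄^n, where D̄^n = { x ∈ ℂ^n | ∀ j, |x_j| ≤ 1 } is the closed unit polydisc. -/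
/-- If a finite family `F` of `ℤ`-bases `ṽ` of `ℤⁿ` with nonnegative entries is such
that the cones `Cone(ṽ)` cover the nonnegative orthant, then the union of the images of the
closed unit polydisc under the monomial maps `μ_ṽ(x)_j = ∏ₖ xₖ^{(ṽₖ)_j}` equals the closed
unit polydisc. -/
theorem stmt_2 (n : ℕ) (hn : 1 ≤ n) (F : Finset (Fin n → Fin n → ℕ))
    (hbasis : ∀ v ∈ F,
      (Matrix.of fun i k => (v k i : ℤ)).det = 1 ∨ (Matrix.of fun i k => (v k i : ℤ)).det = -1)
    (hcover : ∀ y : Fin n → ℝ, (∀ i, 0 ≤ y i) → ∃ v ∈ F, ∃ c : Fin n → ℝ, (∀ k, 0 ≤ c k) ∧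
      ∀ i, y i = ∑ k, c k * (v k i : ℝ)) :
    (⋃ v ∈ F, (fun x : Fin n → ℂ => fun j : Fin n => ∏ k, x k ^ (v k j)) ''
        {x : Fin n → ℂ | ∀ j, ‖x j‖ ≤ 1})
      = {x : Fin n → ℂ | ∀ j, ‖x j‖ ≤ 1} := by
  set D : Set (Fin n → ℂ) := {x : Fin n → ℂ | ∀ j, ‖x j‖ ≤ 1} with hDdef
  set U : Set (Fin n → ℂ) :=
    ⋃ v ∈ F, (fun x : Fin n → ℂ => fun j : Fin n => ∏ k, x k ^ (v k j)) '' D with hUdef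
  have hDcompact : IsCompact D := by
    have : D = Set.pi Set.univ (fun _ : Fin n => Metric.closedBall (0 : ℂ) 1) := by
      ext x
      simp [hDdef, Set.mem_pi, Complex.dist_eq]
    rw [this]
    exact isCompact_univ_pi fun _ => isCompact_closedBall _ _
  -- forward inclusion
  have hUD : U ⊆ D := by
    intro y hy
    simp only [hUdef, Set.mem_iUnion] at hy
    obtain ⟨v, hv, x, hx, rfl⟩ := hy
    intro j
    calc ‖∏ k, x k ^ v k j‖ = ∏ k, ‖x k‖ ^ (v k j) := by
          simp [map_prod, map_pow]
      _ ≤ ∏ k, (1 : ℝ) ^ (v k j) :=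
          Finset.prod_le_prod (fun k _ => pow_nonneg (norm_nonneg _) _)
            (fun k _ => pow_le_pow_left₀ (norm_nonneg _) (hx k) _)
      _ = 1 := by simp
  -- the union is closed
  have hUclosed : IsClosed U := by
    rw [hUdef]
    apply Set.Finite.isClosed_biUnion F.finite_toSet
    intro v _
    have hcont : Continuous (fun x : Fin n → ℂ => fun j : Fin n => ∏ k, x k ^ (v k j)) :=
      continuous_pi fun j => continuous_finset_prod _ fun k _ => (continuous_apply k).pow _
    exact (hDcompact.image hcont).isClosed
  -- points with nonzero coordinates are in the union
  have hkey : ∀ x ∈ D, (∀ j, x j ≠ 0) → x ∈ U := by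
    intro x hx hne
    have hr0 : ∀ j, 0 < ‖x j‖ := fun j => norm_pos_iff.mpr (hne j)
    set y : Fin n → ℝ := fun j => - Real.log (‖x j‖) with hydef
    have hy : ∀ j, 0 ≤ y j := fun j => neg_nonneg.2 (Real.log_nonpos (hr0 j).le (hx j))
    obtain ⟨v, hv, c, hc, hyc⟩ := hcover y hy
    set A : Matrix (Fin n) (Fin n) ℝ := Matrix.of (fun j k => (v k j : ℝ)) with hAdef
    have hdet : A.det = 1 ∨ A.det = -1 := by
      have hmap : A = (Matrix.of fun i k => (v k i : ℤ)).map (Int.cast : ℤ → ℝ) := by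
        ext i k; simp [hAdef]
      have hcast : A.det = ((Matrix.of fun i k => (v k i : ℤ)).det : ℝ) := by
        rw [hmap]
        simpa using (RingHom.map_det (Int.castRingHom ℝ)
          (Matrix.of fun i k => (v k i : ℤ))).symm
      rcases hbasis v hv with h | h <;> [left; right] <;> rw [hcast, h] <;> norm_num
    have hunit : IsUnit A.det := by
      rcases hdet with h | h <;> simp [h]
    set θ : Fin n → ℝ := fun j => (x j).arg with hθdef
    set φ : Fin n → ℝ := A⁻¹.mulVec θ with hφdef
    have hφ : A.mulVec φ = θ := by
      rw [hφdef, Matrix.mulVec_mulVec, Matrix.mul_nonsing_inv A hunit, Matrix.one_mulVec]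
    set z : Fin n → ℂ := fun k => Complex.exp (-(c k : ℂ) + (φ k : ℂ) * Complex.I) with hzdef
    have hzD : z ∈ D := by
      intro k
      rw [hzdef]
      simp only [Complex.norm_exp]
      have : (-(c k : ℂ) + (φ k : ℂ) * Complex.I).re = -(c k) := by simp
      rw [this]
      exact Real.exp_le_one_iff.mpr (neg_nonpos.mpr (hc k))
    refine Set.mem_biUnion hv ⟨z, hzD, ?_⟩
    funext j
    show (∏ k, z k ^ (v k j)) = x j
    have hprod : ∏ k, z k ^ (v k j)
        = Complex.exp (∑ k, (v k j : ℂ) * (-(c k : ℂ) + (φ k : ℂ) * Complex.I)) := by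
      rw [Complex.exp_sum]
      refine Finset.prod_congr rfl fun k _ => ?_
      rw [hzdef, ← Complex.exp_nat_mul]
    have hsum : ∑ k, (v k j : ℂ) * (-(c k : ℂ) + (φ k : ℂ) * Complex.I)
        = ((Real.log (‖x j‖) : ℝ) : ℂ) + (θ j : ℂ) * Complex.I := by
      have h1 : ∑ k, (v k j : ℝ) * (-(c k)) = Real.log (‖x j‖) := by
        have := hyc j
        rw [hydef] at this
        simp only at this
        have : ∑ k, c k * (v k j : ℝ) = - Real.log (‖x j‖) := this.symm
        calc ∑ k, (v k j : ℝ) * (-(c k)) = - ∑ k, c k * (v k j : ℝ) := by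
              rw [← Finset.sum_neg_distrib]
              exact Finset.sum_congr rfl fun k _ => by ring
          _ = Real.log (‖x j‖) := by rw [this]; ring
      have h2 : ∑ k, (v k j : ℝ) * φ k = θ j := by
        have := congrFun hφ j
        simpa [Matrix.mulVec, dotProduct, hAdef] using this
      calc ∑ k, (v k j : ℂ) * (-(c k : ℂ) + (φ k : ℂ) * Complex.I)
          = ∑ k, (((v k j : ℝ) * (-(c k)) : ℝ) : ℂ) + (∑ k, (((v k j : ℝ) * φ k : ℝ) : ℂ)) * Complex.I := by
            rw [Finset.sum_mul, ← Finset.sum_add_distrib]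
            refine Finset.sum_congr rfl fun k _ => ?_
            push_cast
            ring
        _ = ((Real.log (‖x j‖) : ℝ) : ℂ) + (θ j : ℂ) * Complex.I := by
            rw [← Complex.ofReal_sum, ← Complex.ofReal_sum, h1, h2]
    rw [hprod, hsum, Complex.exp_add, ← Complex.ofReal_exp, Real.exp_log (hr0 j)]
    exact Complex.norm_mul_exp_arg_mul_I (x j)
  -- closure argument
  refine Set.Subset.antisymm hUD ?_
  intro x hx
  rw [← hUclosed.closure_eq]
  have hsub : (D ∩ {w : Fin n → ℂ | ∀ j, w j ≠ 0}) ⊆ U := fun w hw => hkey w hw.1 hw.2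
  refine closure_mono hsub ?_
  rw [Metric.mem_closure_iff]
  intro ε hε
  set δ : ℝ := min (ε / 2) (1 / 2) with hδdef
  have hδpos : 0 < δ := lt_min (by linarith) (by norm_num)
  have hδle : δ ≤ 1 / 2 := min_le_right _ _
  have hδε : δ < ε := lt_of_le_of_lt (min_le_left _ _) (by linarith)
  set b : Fin n → ℂ := fun j => if x j = 0 then (δ : ℂ) else (1 - δ) * x j with hbdef
  refine ⟨b, ⟨?_, ?_⟩, ?_⟩
  · intro j
    rw [hbdef]
    by_cases h : x j = 0
    · simp [h, abs_of_pos hδpos]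
      linarith
    · simp only [h, if_false, norm_mul]
      have h1 : ‖(1 : ℂ) - δ‖ = 1 - δ := by
        rw [← Complex.ofReal_one, ← Complex.ofReal_sub, Complex.norm_real, Real.norm_eq_abs,
          abs_of_nonneg (by linarith)]
      rw [h1]
      calc (1 - δ) * ‖x j‖ ≤ (1 - δ) * 1 :=
            mul_le_mul_of_nonneg_left (hx j) (by linarith)
        _ ≤ 1 := by linarith
  · intro j
    rw [hbdef]
    by_cases h : x j = 0
    · simp only [h, if_true]
      exact_mod_cast ne_of_gt hδpos
    · simp only [h, if_false]
      apply mul_ne_zero _ h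
      intro hcon
      have : (1 : ℂ) - δ = 0 := hcon
      have : (1 : ℝ) - δ = 0 := by exact_mod_cast this
      linarith
  · rw [dist_pi_lt_iff hε]
    intro j
    rw [hbdef]
    by_cases h : x j = 0
    · simp only [h, if_true]
      rw [Complex.dist_eq]
      simp [h, abs_of_pos hδpos]
      linarith
    · simp only [h, if_false]
      rw [Complex.dist_eq]
      have : x j - (1 - (δ : ℂ)) * x j = (δ : ℂ) * x j := by ring
      rw [this, norm_mul, Complex.norm_real, Real.norm_eq_abs, abs_of_pos hδpos]
      calc δ * ‖x j‖ ≤ δ * 1 := mul_le_mul_of_nonneg_left (hx j) hδpos.le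
        _ < ε := by linarith
end

section
/- Let n ≥ 1 and let A be a nonempty subset of ℕ^n, regarded as a subset of ℝ^n. Define cl(A) = { m ∈ [0,∞)^n | ∀ w ∈ [0,∞)^n, (⨅_{a ∈ A} ⟪a, w⟫) ≤ ⟪m, w⟫ }, where ⟪·,·⟫ is the standard inner product on ℝ^n and the infimum is a real infimum (it is ≥ 0 since a, w have nonnegative entries). Then there exists a finite subset F ⊆ cl(A) ∩ ℕ^n such that cl(A) = cl(F). -/
/-- The closure operation `A ↦ A̿ = { m ∈ [0,∞)ⁿ | ∀ w ∈ [0,∞)ⁿ, (⨅_{a ∈ A} ⟪a,w⟫) ≤ ⟪m,w⟫ }`. -/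
noncomputable def cl (n : ℕ) (A : Set (Fin n → ℝ)) : Set (Fin n → ℝ) :=
  {m | (∀ j, 0 ≤ m j) ∧ ∀ w : Fin n → ℝ, (∀ j, 0 ≤ w j) →
    (⨅ a : A, ∑ j, (a : Fin n → ℝ) j * w j) ≤ ∑ j, m j * w j}

/-- For any nonempty `A ⊆ ℕⁿ` there is a finite set `F ⊆ cl(A) ∩ ℕⁿ` with
`cl(A) = cl(F)`. -/
theorem stmt_3 (n : ℕ) (hn : 1 ≤ n) (A : Set (Fin n → ℕ)) (hA : A.Nonempty) :
    ∃ F : Finset (Fin n → ℕ),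
      (∀ f ∈ F, (fun j => (f j : ℝ)) ∈ cl n ((fun a : Fin n → ℕ => fun j => (a j : ℝ)) '' A)) ∧
      cl n ((fun a : Fin n → ℕ => fun j => (a j : ℝ)) '' A)
        = cl n ((fun a : Fin n → ℕ => fun j => (a j : ℝ)) '' (↑F : Set (Fin n → ℕ))) := by
  classical
  set e : (Fin n → ℕ) → (Fin n → ℝ) := fun a : Fin n → ℕ => fun j => (a j : ℝ) with he
  -- the set of minimal elements of A
  set M : Set (Fin n → ℕ) := {a | a ∈ A ∧ ∀ b ∈ A, ¬ b < a} with hMdef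
  have hMA : M ⊆ A := fun a ha => ha.1
  have hanti : IsAntichain (· ≤ ·) M := by
    intro a ha b hb hne hle
    exact hb.2 a ha.1 (lt_of_le_of_ne hle hne)
  have hfin : M.Finite := hanti.finite_of_partiallyWellOrderedOn (Set.isPWO_of_wellQuasiOrderedLE M)
  -- every element of A dominates a minimal element
  have cover : ∀ k : ℕ, ∀ a ∈ A, (∑ j, a j) = k → ∃ m ∈ M, m ≤ a := by
    intro k
    induction k using Nat.strong_induction_on with
    | _ k ih =>
      intro a ha hk
      by_cases h : ∀ b ∈ A, ¬ b < a
      · exact ⟨a, ⟨ha, h⟩, le_refl a⟩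
      · push_neg at h
        obtain ⟨b, hb, hba⟩ := h
        have hle : b ≤ a := hba.le
        obtain ⟨i, hi⟩ := (Pi.lt_def.mp hba).2
        have hsum : (∑ j, b j) < ∑ j, a j :=
          Finset.sum_lt_sum (fun j _ => hle j) ⟨i, Finset.mem_univ i, hi⟩
        obtain ⟨m, hm, hmb⟩ := ih _ (hk ▸ hsum) b hb rfl
        exact ⟨m, hm, hmb.trans hle⟩
  have cover' : ∀ a ∈ A, ∃ m ∈ M, m ≤ a := fun a ha => cover _ a ha rfl
  have hMne : M.Nonempty := by
    obtain ⟨a, ha⟩ := hA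
    obtain ⟨m, hm, _⟩ := cover' a ha
    exact ⟨m, hm⟩
  haveI : Nonempty (e '' A : Set (Fin n → ℝ)) := (hA.image e).to_subtype
  haveI : Nonempty (e '' M : Set (Fin n → ℝ)) := (hMne.image e).to_subtype
  -- boundedness below of the relevant ranges
  have hbddA : ∀ w : Fin n → ℝ, (∀ j, 0 ≤ w j) →
      BddBelow (Set.range fun a : (e '' A : Set (Fin n → ℝ)) => ∑ j, (a : Fin n → ℝ) j * w j) := by
    intro w hw
    refine ⟨0, ?_⟩
    rintro x ⟨a, rfl⟩
    obtain ⟨a0, -, h⟩ := a.2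
    dsimp only
    rw [← h]
    exact Finset.sum_nonneg fun j _ => mul_nonneg (Nat.cast_nonneg _) (hw j)
  have hbddM : ∀ w : Fin n → ℝ, (∀ j, 0 ≤ w j) →
      BddBelow (Set.range fun a : (e '' M : Set (Fin n → ℝ)) => ∑ j, (a : Fin n → ℝ) j * w j) := by
    intro w hw
    refine ⟨0, ?_⟩
    rintro x ⟨a, rfl⟩
    obtain ⟨a0, -, h⟩ := a.2
    dsimp only
    rw [← h]
    exact Finset.sum_nonneg fun j _ => mul_nonneg (Nat.cast_nonneg _) (hw j)
  -- the two infima agree for every w ≥ 0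
  have hinf : ∀ w : Fin n → ℝ, (∀ j, 0 ≤ w j) →
      (⨅ a : (e '' A : Set (Fin n → ℝ)), ∑ j, (a : Fin n → ℝ) j * w j)
        = ⨅ a : (e '' M : Set (Fin n → ℝ)), ∑ j, (a : Fin n → ℝ) j * w j := by
    intro w hw
    apply le_antisymm
    · refine le_ciInf fun f => ?_
      obtain ⟨f0, hf0, hef⟩ := f.2
      have : (f : Fin n → ℝ) ∈ e '' A := ⟨f0, hMA hf0, hef⟩
      exact ciInf_le (hbddA w hw) (⟨(f : Fin n → ℝ), this⟩ : (e '' A : Set (Fin n → ℝ)))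
    · refine le_ciInf fun a => ?_
      obtain ⟨a0, ha0, hea⟩ := a.2
      obtain ⟨m, hm, hma⟩ := cover' a0 ha0
      have hmem : e m ∈ e '' M := ⟨m, hm, rfl⟩
      calc (⨅ a : (e '' M : Set (Fin n → ℝ)), ∑ j, (a : Fin n → ℝ) j * w j)
          ≤ ∑ j, (e m) j * w j :=
            ciInf_le (hbddM w hw) (⟨e m, hmem⟩ : (e '' M : Set (Fin n → ℝ)))
        _ ≤ ∑ j, (a : Fin n → ℝ) j * w j := by
            rw [← hea]
            refine Finset.sum_le_sum fun j _ => ?_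
            exact mul_le_mul_of_nonneg_right (Nat.cast_le.mpr (hma j)) (hw j)
  refine ⟨hfin.toFinset, ?_, ?_⟩
  · intro f hf
    rw [Set.Finite.mem_toFinset] at hf
    constructor
    · intro j; exact Nat.cast_nonneg _
    · intro w hw
      have hmem : e f ∈ e '' A := ⟨f, hMA hf, rfl⟩
      exact ciInf_le (hbddA w hw) (⟨e f, hmem⟩ : (e '' A : Set (Fin n → ℝ)))
  · have hFM : (↑hfin.toFinset : Set (Fin n → ℕ)) = M := hfin.coe_toFinset
    rw [hFM]
    ext x
    simp only [cl, Set.mem_setOf_eq]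
    constructor
    · rintro ⟨h0, h1⟩
      exact ⟨h0, fun w hw => (hinf w hw) ▸ h1 w hw⟩
    · rintro ⟨h0, h1⟩
      exact ⟨h0, fun w hw => (hinf w hw) ▸ h1 w hw⟩
end

section
/- Let n ≥ 1, let I ⊆ {1, …, n}, let B ⊂ ℝ^n be a nonempty compact set such that m_j ≥ 0 for every m ∈ B and every j ∈ I, let Z be a nonempty compact topological space, and let φ : B × Z → ℝ be continuous. For each j ∉ I let K_j be a nonempty compact subset of ℂ \ {0}. Define, for x ∈ ℂ^n and z ∈ Z, ψ(x, z) = log ( sup_{m ∈ B} ( ∏_{j=1}^n |x_j|^{2 m_j} ) · e^{φ(m, z)} ) and g(x) = log ( sup_{m ∈ B} ∏_{j ∈ I} |x_j|^{2 m_j} ), where real powers |x_j|^{2m_j} use the convention 0^0 = 1 (Real.rpow). Then there exist real constants C₁ ≤ C₂ such that g(x) + C₁ ≤ ψ(x, z) ≤ g(x) + C₂ for every z ∈ Z and every x ∈ ℂ^n with |x_j| ≤ 1 for all j ∈ I and x_j ∈ K_j for all j ∉ I. -/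
/-- The sandwich lemma: `ψ(x,z) = log sup_{m ∈ B} (∏_j |x_j|^{2m_j}) e^{φ(m,z)}`
is within bounded distance of `g(x) = log sup_{m ∈ B} ∏_{j ∈ I} |x_j|^{2m_j}` on the region
where `|x_j| ≤ 1` for `j ∈ I` and `x_j` ranges in a compact set `K_j ⊆ ℂ \ {0}` for `j ∉ I`. -/
theorem stmt_4 (n : ℕ) (hn : 1 ≤ n) (I : Finset (Fin n))
    (B : Set (Fin n → ℝ)) (hBne : B.Nonempty) (hBcpt : IsCompact B)
    (hBpos : ∀ m ∈ B, ∀ j ∈ I, 0 ≤ m j)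
    (Z : Type) [TopologicalSpace Z] [CompactSpace Z] [Nonempty Z]
    (φ : (Fin n → ℝ) × Z → ℝ) (hφ : ContinuousOn φ (B ×ˢ (Set.univ : Set Z)))
    (K : Fin n → Set ℂ)
    (hK : ∀ j ∉ I, (K j).Nonempty ∧ IsCompact (K j) ∧ ∀ w ∈ K j, w ≠ 0) :
    ∃ C₁ C₂ : ℝ, C₁ ≤ C₂ ∧
      ∀ z : Z, ∀ x : Fin n → ℂ,
        (∀ j ∈ I, ‖x j‖ ≤ 1) → (∀ j ∉ I, x j ∈ K j) →
        Real.log (⨆ m : B, ∏ j ∈ I, ‖x j‖ ^ (2 * (m : Fin n → ℝ) j)) + C₁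
          ≤ Real.log (⨆ m : B, (∏ j, ‖x j‖ ^ (2 * (m : Fin n → ℝ) j))
              * Real.exp (φ ((m : Fin n → ℝ), z))) ∧
        Real.log (⨆ m : B, (∏ j, ‖x j‖ ^ (2 * (m : Fin n → ℝ) j))
              * Real.exp (φ ((m : Fin n → ℝ), z)))
          ≤ Real.log (⨆ m : B, ∏ j ∈ I, ‖x j‖ ^ (2 * (m : Fin n → ℝ) j)) + C₂ := by
  classical
  haveI : Nonempty B := hBne.to_subtype
  -- bound on coordinates of m
  obtain ⟨M₀, hM₀⟩ := (isBounded_iff_forall_norm_le (s := B)).mp hBcpt.isBounded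
  set M : ℝ := max M₀ 0 with hMdef
  have hM0 : 0 ≤ M := le_max_right _ _
  have hM : ∀ m ∈ B, ∀ j, |m j| ≤ M := by
    intro m hm j
    have := norm_le_pi_norm m j
    have h2 := hM₀ m hm
    simp only [Real.norm_eq_abs] at this
    exact this.trans (h2.trans (le_max_left _ _))
  -- bound on φ
  obtain ⟨b, hb⟩ := (hBcpt.prod isCompact_univ).exists_bound_of_continuousOn hφ
  have hbb : ∀ m ∈ B, ∀ z : Z, |φ (m, z)| ≤ b := by
    intro m hm z
    have := hb (m, z) ⟨hm, Set.mem_univ _⟩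
    simpa [Real.norm_eq_abs] using this
  -- bound on log |x j| for j ∉ I
  have hLex : ∀ j : Fin n, ∃ Lj : ℝ,
      j ∉ I → ∀ w ∈ K j, |Real.log (‖w‖)| ≤ Lj := by
    intro j
    by_cases hj : j ∈ I
    · exact ⟨0, fun h => absurd hj h⟩
    · obtain ⟨hne, hcpt, hnz⟩ := hK j hj
      have hcont : ContinuousOn (fun w : ℂ => Real.log (‖w‖)) (K j) := by
        apply Real.continuousOn_log.comp (continuous_norm.continuousOn)
        intro w hw
        simp [norm_ne_zero_iff.mpr (hnz w hw)]
      obtain ⟨L, hL⟩ := hcpt.exists_bound_of_continuousOn hcont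
      exact ⟨L, fun _ w hw => by simpa [Real.norm_eq_abs] using hL w hw⟩
  choose L hL using hLex
  set D : ℝ := (∑ j ∈ Iᶜ, 2 * M * L j) + b with hDdef
  refine ⟨min (-D) 0, max D 0, le_trans (min_le_right _ _) (le_max_right _ _), ?_⟩
  intro z x hxI hxK
  set tg : B → ℝ := fun m => ∏ j ∈ I, ‖x j‖ ^ (2 * (m : Fin n → ℝ) j) with htgdef
  set tψ : B → ℝ := fun m => (∏ j, ‖x j‖ ^ (2 * (m : Fin n → ℝ) j))
      * Real.exp (φ ((m : Fin n → ℝ), z)) with htψdef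
  have htg0 : ∀ m : B, 0 ≤ tg m := fun m =>
    Finset.prod_nonneg fun j _ => Real.rpow_nonneg (norm_nonneg _) _
  have htg1 : ∀ m : B, tg m ≤ 1 := by
    intro m
    apply Finset.prod_le_one
    · intro j _; exact Real.rpow_nonneg (norm_nonneg _) _
    · intro j hj
      exact Real.rpow_le_one (norm_nonneg _) (hxI j hj)
        (by have := hBpos m m.2 j hj; linarith)
  -- the key sandwich for each term
  have key : ∀ m : B, Real.exp (-D) * tg m ≤ tψ m ∧ tψ m ≤ Real.exp D * tg m := by
    intro m
    have hsplit : (∏ j, ‖x j‖ ^ (2 * (m : Fin n → ℝ) j))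
        = tg m * ∏ j ∈ Iᶜ, ‖x j‖ ^ (2 * (m : Fin n → ℝ) j) := by
      rw [htgdef]
      exact (Finset.prod_mul_prod_compl I _).symm
    have hfac : ∀ j ∈ Iᶜ,
        Real.exp (-(2 * M * L j)) ≤ ‖x j‖ ^ (2 * (m : Fin n → ℝ) j) ∧
        ‖x j‖ ^ (2 * (m : Fin n → ℝ) j) ≤ Real.exp (2 * M * L j) := by
      intro j hj
      rw [Finset.mem_compl] at hj
      have hxj := hxK j hj
      have hpos : 0 < ‖x j‖ :=
        norm_pos_iff.mpr ((hK j hj).2.2 (x j) hxj)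
      rw [Real.rpow_def_of_pos hpos]
      have h1 : |Real.log (‖x j‖)| ≤ L j := hL j hj (x j) hxj
      have h2 : |(m : Fin n → ℝ) j| ≤ M := hM m m.2 j
      have habs : |Real.log (‖x j‖) * (2 * (m : Fin n → ℝ) j)| ≤ 2 * M * L j := by
        rw [abs_mul, abs_mul]
        have h0 : (0:ℝ) ≤ |Real.log (‖x j‖)| := abs_nonneg _
        have h0' : (0:ℝ) ≤ |(m : Fin n → ℝ) j| := abs_nonneg _
        calc |Real.log (‖x j‖)| * (|(2:ℝ)| * |(m : Fin n → ℝ) j|)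
            ≤ L j * (2 * M) := by
              apply mul_le_mul h1 _ (by positivity) ((abs_nonneg _).trans h1)
              rw [abs_two]
              nlinarith
          _ = 2 * M * L j := by ring
      constructor
      · exact Real.exp_le_exp.mpr (neg_le_of_abs_le habs)
      · exact Real.exp_le_exp.mpr ((le_abs_self _).trans habs)
    have hPle : (∏ j ∈ Iᶜ, ‖x j‖ ^ (2 * (m : Fin n → ℝ) j))
        ≤ Real.exp (∑ j ∈ Iᶜ, 2 * M * L j) := by
      rw [Real.exp_sum]
      exact Finset.prod_le_prod (fun j _ => Real.rpow_nonneg (norm_nonneg _) _)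
        (fun j hj => (hfac j hj).2)
    have hPge : Real.exp (-(∑ j ∈ Iᶜ, 2 * M * L j))
        ≤ ∏ j ∈ Iᶜ, ‖x j‖ ^ (2 * (m : Fin n → ℝ) j) := by
      rw [← Finset.sum_neg_distrib, Real.exp_sum]
      exact Finset.prod_le_prod (fun j _ => (Real.exp_pos _).le)
        (fun j hj => (hfac j hj).1)
    have hE1 : Real.exp (φ ((m : Fin n → ℝ), z)) ≤ Real.exp b :=
      Real.exp_le_exp.mpr ((le_abs_self _).trans (hbb m m.2 z))
    have hE2 : Real.exp (-b) ≤ Real.exp (φ ((m : Fin n → ℝ), z)) :=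
      Real.exp_le_exp.mpr (by have := (hbb m m.2 z); rw [abs_le] at this; exact this.1)
    have hts : tψ m = tg m * (∏ j ∈ Iᶜ, ‖x j‖ ^ (2 * (m : Fin n → ℝ) j))
        * Real.exp (φ ((m : Fin n → ℝ), z)) := by
      simp only [htψdef]; rw [hsplit]
    constructor
    · rw [hts, hDdef]
      simp only [neg_add, Real.exp_add]
      have := mul_le_mul hPge hE2 (Real.exp_pos _).le
        (Finset.prod_nonneg fun j _ => Real.rpow_nonneg (norm_nonneg _) _)
      calc Real.exp (-∑ j ∈ Iᶜ, 2 * M * L j) * Real.exp (-b) * tg m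
          ≤ ((∏ j ∈ Iᶜ, ‖x j‖ ^ (2 * (m : Fin n → ℝ) j))
              * Real.exp (φ ((m : Fin n → ℝ), z))) * tg m := by
            apply mul_le_mul_of_nonneg_right (this) (htg0 m)
        _ = tg m * (∏ j ∈ Iᶜ, ‖x j‖ ^ (2 * (m : Fin n → ℝ) j))
              * Real.exp (φ ((m : Fin n → ℝ), z)) := by ring
    · rw [hts, hDdef, Real.exp_add]
      have := mul_le_mul hPle hE1 (Real.exp_pos _).le (Real.exp_pos _).le
      calc tg m * (∏ j ∈ Iᶜ, ‖x j‖ ^ (2 * (m : Fin n → ℝ) j))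
            * Real.exp (φ ((m : Fin n → ℝ), z))
          = ((∏ j ∈ Iᶜ, ‖x j‖ ^ (2 * (m : Fin n → ℝ) j))
              * Real.exp (φ ((m : Fin n → ℝ), z))) * tg m := by ring
        _ ≤ (Real.exp (∑ j ∈ Iᶜ, 2 * M * L j) * Real.exp b) * tg m :=
            mul_le_mul_of_nonneg_right this (htg0 m)
        _ = Real.exp (∑ j ∈ Iᶜ, 2 * M * L j) * Real.exp b * tg m := rfl
  have hbdd_g : BddAbove (Set.range tg) := ⟨1, by rintro _ ⟨m, rfl⟩; exact htg1 m⟩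
  have hbdd_ψ : BddAbove (Set.range tψ) := by
    refine ⟨Real.exp D, ?_⟩
    rintro _ ⟨m, rfl⟩
    calc tψ m ≤ Real.exp D * tg m := (key m).2
      _ ≤ Real.exp D * 1 := mul_le_mul_of_nonneg_left (htg1 m) (Real.exp_pos _).le
      _ = Real.exp D := mul_one _
  set S : ℝ := ⨆ m : B, tg m with hSdef
  set T : ℝ := ⨆ m : B, tψ m with hTdef
  have hS0 : 0 ≤ S := le_trans (htg0 (Classical.arbitrary B))
    (le_ciSup hbdd_g (Classical.arbitrary B))
  have hT_le : T ≤ Real.exp D * S := by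
    apply ciSup_le
    intro m
    exact (key m).2.trans (mul_le_mul_of_nonneg_left (le_ciSup hbdd_g m) (Real.exp_pos _).le)
  have hT_ge : Real.exp (-D) * S ≤ T := by
    have hS_le : S ≤ Real.exp D * T := by
      apply ciSup_le
      intro m
      have h1 : Real.exp (-D) * tg m ≤ tψ m := (key m).1
      have h2 : tg m ≤ Real.exp D * tψ m := by
        have := mul_le_mul_of_nonneg_left h1 (Real.exp_pos D).le
        rwa [← mul_assoc, ← Real.exp_add, add_neg_cancel, Real.exp_zero, one_mul] at this
      exact h2.trans (mul_le_mul_of_nonneg_left (le_ciSup hbdd_ψ m) (Real.exp_pos _).le)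
    have := mul_le_mul_of_nonneg_left hS_le (Real.exp_pos (-D)).le
    rwa [← mul_assoc, ← Real.exp_add, neg_add_cancel, Real.exp_zero, one_mul] at this
  rcases eq_or_lt_of_le hS0 with hS | hS
  · -- degenerate case S = 0
    have hTg0 : ∀ m : B, tg m = 0 := fun m =>
      le_antisymm (le_trans (le_ciSup hbdd_g m) hS.symm.le) (htg0 m)
    have hTψ0 : ∀ m : B, tψ m = 0 := by
      intro m
      refine le_antisymm ?_ ?_
      · have := (key m).2; rw [hTg0 m, mul_zero] at this; exact this
      · have := (key m).1; rw [hTg0 m, mul_zero] at this; linarith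
    have hT : T = 0 := by
      rw [hTdef]
      have : tψ = fun _ : B => (0:ℝ) := funext hTψ0
      rw [this, ciSup_const]
    rw [← hS, hT, Real.log_zero]
    constructor
    · have : min (-D) 0 ≤ 0 := min_le_right _ _
      linarith
    · have : (0:ℝ) ≤ max D 0 := le_max_right _ _
      linarith
  · -- main case S > 0
    have hT0 : 0 < T := lt_of_lt_of_le (by positivity) hT_ge
    constructor
    · calc Real.log S + min (-D) 0 ≤ Real.log S + (-D) := by
            have := min_le_left (-D) (0:ℝ); linarith
        _ = Real.log (Real.exp (-D) * S) := by
            rw [Real.log_mul (Real.exp_ne_zero _) (ne_of_gt hS), Real.log_exp]; ring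
        _ ≤ Real.log T := Real.log_le_log (by positivity) hT_ge
    · calc Real.log T ≤ Real.log (Real.exp D * S) := Real.log_le_log hT0 hT_le
        _ = Real.log S + D := by
            rw [Real.log_mul (Real.exp_ne_zero _) (ne_of_gt hS), Real.log_exp]; ring
        _ ≤ Real.log S + max D 0 := by
            have := le_max_left D (0:ℝ); linarith
end

section
/- Let k ≥ 1, let B ⊂ [0,∞)^k be a nonempty compact set, and let w ∈ (0,∞)^k. Define ψ(x) = log ( sup_{m ∈ B} ∏_{j=1}^k |x_j|^{2 m_j} ) for x ∈ ℂ^k with 0 < |x_j| < 1 for all j. Then sup { t ∈ [0,∞) | ∃ C ∈ ℝ, ∀ x with 0 < |x_j| < 1 for all j : ψ(x) ≤ t · log ( Σ_{j=1}^k |x_j|^{2 w_j} ) + C } = min_{m ∈ B} Σ_{j=1}^k m_j / w_j. In particular, taking w = (1, …, 1), the Lelong number of ψ at the origin, ν(ψ, 0) = sup { t ≥ 0 | ψ(x) ≤ t log(Σ_j |x_j|²) + O(1) near 0 }, equals min_{m ∈ B} Σ_{j=1}^k m_j. -/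
open Real

/-- For `ψ(x) = log sup_{m ∈ B} ∏_j |x_j|^{2m_j}` on the punctured open polydisc
and weights `w_j > 0`, the Kiselman number
`sup { t ≥ 0 | ψ ≤ t log Σ_j |x_j|^{2w_j} + O(1) }` equals `min_{m ∈ B} Σ_j m_j / w_j`. -/
theorem stmt_5 (k : ℕ) (hk : 1 ≤ k)
    (B : Set (Fin k → ℝ)) (hBne : B.Nonempty) (hBcpt : IsCompact B)
    (hBpos : ∀ m ∈ B, ∀ j, 0 ≤ m j)
    (w : Fin k → ℝ) (hw : ∀ j, 0 < w j) :
    sSup {t : ℝ | 0 ≤ t ∧ ∃ C : ℝ,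
        ∀ x : Fin k → ℂ, (∀ j, 0 < ‖x j‖ ∧ ‖x j‖ < 1) →
          Real.log (⨆ m : B, ∏ j, ‖x j‖ ^ (2 * (m : Fin k → ℝ) j))
            ≤ t * Real.log (∑ j, ‖x j‖ ^ (2 * w j)) + C}
      = ⨅ m : B, ∑ j, (m : Fin k → ℝ) j / w j := by
  haveI : Nonempty (Fin k) := Fin.pos_iff_nonempty.mp hk
  haveI : Nonempty B := hBne.to_subtype
  obtain ⟨m₀, hm₀B, hm₀min⟩ := hBcpt.exists_isMinOn hBne
    (by fun_prop : ContinuousOn (fun m : Fin k → ℝ => ∑ j, m j / w j) B)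
  set ν : ℝ := ∑ j, m₀ j / w j with hνdef
  have hν0 : 0 ≤ ν := Finset.sum_nonneg fun j _ => div_nonneg (hBpos m₀ hm₀B j) (hw j).le
  have hmν : ∀ m ∈ B, ν ≤ ∑ j, m j / w j := fun m hm => hm₀min hm
  have hinf : (⨅ m : B, ∑ j, (m : Fin k → ℝ) j / w j) = ν := by
    refine le_antisymm (ciInf_le (f := fun m : B => ∑ j, (m : Fin k → ℝ) j / w j) ⟨0, ?_⟩ ⟨m₀, hm₀B⟩) (le_ciInf fun m => hmν m m.2)
    rintro t ⟨m, rfl⟩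
    exact Finset.sum_nonneg fun j _ => div_nonneg (hBpos m m.2 j) (hw j).le
  rw [hinf]
  -- key upper bound valid for every x
  have hupper : ∀ x : Fin k → ℂ,
      (∀ j, 0 < ‖x j‖ ∧ ‖x j‖ < 1) →
      BddAbove (Set.range fun m : B => ∏ j, ‖x j‖ ^ (2 * (m : Fin k → ℝ) j)) ∧
      Real.log (⨆ m : B, ∏ j, ‖x j‖ ^ (2 * (m : Fin k → ℝ) j))
        ≤ ν * Real.log (∑ j, ‖x j‖ ^ (2 * w j)) := by
    intro x hx
    set a : Fin k → ℝ := fun j => ‖x j‖ with ha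
    set L : ℝ := Real.log (∑ j, a j ^ (2 * w j)) with hL
    have hterm : ∀ j, 2 * w j * Real.log (a j) ≤ L := by
      intro j
      have h1 : a j ^ (2 * w j) ≤ ∑ j', a j' ^ (2 * w j') :=
        Finset.single_le_sum (f := fun j' => a j' ^ (2 * w j'))
          (fun j' _ => (Real.rpow_pos_of_pos (hx j').1 _).le) (Finset.mem_univ j)
      have h2 := Real.log_le_log (Real.rpow_pos_of_pos (hx j).1 _) h1
      rwa [Real.log_rpow (hx j).1] at h2
    obtain ⟨j₀, -, hj₀⟩ := Finset.exists_max_image Finset.univ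
      (fun j => w j * Real.log (a j)) Finset.univ_nonempty
    have hneg : w j₀ * Real.log (a j₀) < 0 :=
      mul_neg_of_pos_of_neg (hw j₀) (Real.log_neg (hx j₀).1 (hx j₀).2)
    have key : ∀ m ∈ B, ∑ j, 2 * m j * Real.log (a j) ≤ ν * L := by
      intro m hm
      calc ∑ j, 2 * m j * Real.log (a j)
          = ∑ j, (m j / w j) * (2 * (w j * Real.log (a j))) := by
            refine Finset.sum_congr rfl fun j _ => ?_
            have hwj : w j ≠ 0 := (hw j).ne'
            field_simp
        _ ≤ ∑ j, (m j / w j) * (2 * (w j₀ * Real.log (a j₀))) := by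
            refine Finset.sum_le_sum fun j _ => ?_
            have := hj₀ j (Finset.mem_univ j)
            exact mul_le_mul_of_nonneg_left (by linarith)
              (div_nonneg (hBpos m hm j) (hw j).le)
        _ = (∑ j, m j / w j) * (2 * (w j₀ * Real.log (a j₀))) := by
            rw [Finset.sum_mul]
        _ ≤ ν * (2 * (w j₀ * Real.log (a j₀))) :=
            mul_le_mul_of_nonpos_right (hmν m hm) (by nlinarith)
        _ ≤ ν * L := by
            have := hterm j₀
            exact mul_le_mul_of_nonneg_left (by linarith) hν0
    have hprod : ∀ m ∈ B, ∏ j, a j ^ (2 * m j) ≤ Real.exp (ν * L) := by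
      intro m hm
      have heq : ∏ j, a j ^ (2 * m j) = Real.exp (∑ j, 2 * m j * Real.log (a j)) := by
        rw [Real.exp_sum]
        refine Finset.prod_congr rfl fun j _ => ?_
        rw [Real.rpow_def_of_pos (hx j).1]
        ring_nf
        simp only [ha]
        ring
      rw [heq]
      exact Real.exp_le_exp.mpr (key m hm)
    have hbdd : BddAbove (Set.range fun m : B => ∏ j, a j ^ (2 * (m : Fin k → ℝ) j)) := by
      refine ⟨Real.exp (ν * L), ?_⟩
      rintro y ⟨m, rfl⟩
      exact hprod m m.2
    refine ⟨hbdd, ?_⟩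
    have hsup_pos : 0 < ⨆ m : B, ∏ j, a j ^ (2 * (m : Fin k → ℝ) j) := by
      have hle := le_ciSup hbdd (⟨m₀, hm₀B⟩ : B)
      have hpp : (0:ℝ) < ∏ j, a j ^ (2 * m₀ j) :=
        Finset.prod_pos fun j _ => Real.rpow_pos_of_pos (hx j).1 _
      exact lt_of_lt_of_le hpp hle
    rw [Real.log_le_iff_le_exp hsup_pos]
    exact ciSup_le fun m => hprod m m.2
  -- a general bound: every t in the set is ≤ ν
  have hbound : ∀ t : ℝ, (0 ≤ t ∧ ∃ C : ℝ,
      ∀ x : Fin k → ℂ, (∀ j, 0 < ‖x j‖ ∧ ‖x j‖ < 1) →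
        Real.log (⨆ m : B, ∏ j, ‖x j‖ ^ (2 * (m : Fin k → ℝ) j))
          ≤ t * Real.log (∑ j, ‖x j‖ ^ (2 * w j)) + C) → t ≤ ν := by
    rintro t ⟨ht0, C, hC⟩
    by_contra hlt
    push_neg at hlt
    obtain ⟨n, hn⟩ := exists_nat_gt ((t * Real.log k + C) / (t - ν))
    set s : ℝ := (n : ℝ) + 1 with hs
    have hs0 : 0 < s := by positivity
    set x : Fin k → ℂ := fun j => ((Real.exp (-s / (2 * w j)) : ℝ) : ℂ) with hxdef
    have hax : ∀ j, ‖x j‖ = Real.exp (-s / (2 * w j)) := by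
      intro j
      rw [hxdef, Complex.norm_real, Real.norm_eq_abs, abs_of_pos (Real.exp_pos _)]
    have hxcond : ∀ j, 0 < ‖x j‖ ∧ ‖x j‖ < 1 := by
      intro j
      rw [hax j]
      refine ⟨Real.exp_pos _, Real.exp_lt_one_iff.mpr ?_⟩
      have h1 : 0 < 2 * w j := by have := hw j; linarith
      exact div_neg_of_neg_of_pos (by linarith) h1
    have hpow : ∀ j (e : ℝ), ‖x j‖ ^ e = Real.exp (-s / (2 * w j) * e) := by
      intro j e
      rw [hax j, Real.rpow_def_of_pos (Real.exp_pos _), Real.log_exp]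
    have hsum : (∑ j, ‖x j‖ ^ (2 * w j)) = (k : ℝ) * Real.exp (-s) := by
      have h1 : ∀ j, ‖x j‖ ^ (2 * w j) = Real.exp (-s) := by
        intro j
        rw [hpow j]
        congr 1
        have hwj : (2:ℝ) * w j ≠ 0 := by have := hw j; positivity
        field_simp
        rw [div_self (hw j).ne']
      rw [Finset.sum_congr rfl fun j _ => h1 j, Finset.sum_const, Finset.card_univ,
        Fintype.card_fin, nsmul_eq_mul]
    have hprod0 : (∏ j, ‖x j‖ ^ (2 * m₀ j)) = Real.exp (-s * ν) := by
      have h1 : ∀ j, ‖x j‖ ^ (2 * m₀ j) = Real.exp (-s * (m₀ j / w j)) := by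
        intro j
        rw [hpow j]
        congr 1
        have hwj : w j ≠ 0 := (hw j).ne'
        field_simp
      rw [Finset.prod_congr rfl fun j _ => h1 j, ← Real.exp_sum, ← Finset.mul_sum]
    have hlow : -s * ν ≤ Real.log (⨆ m : B, ∏ j, ‖x j‖ ^ (2 * (m : Fin k → ℝ) j)) := by
      have hle := le_ciSup (hupper x hxcond).1 (⟨m₀, hm₀B⟩ : B)
      have h2 : Real.exp (-s * ν) ≤ ⨆ m : B, ∏ j, ‖x j‖ ^ (2 * (m : Fin k → ℝ) j) := by
        rw [← hprod0]; exact hle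
      have h3 := Real.log_le_log (Real.exp_pos _) h2
      rwa [Real.log_exp] at h3
    have hineq := hC x hxcond
    rw [hsum, Real.log_mul (by positivity) (Real.exp_pos _).ne', Real.log_exp] at hineq
    have hcomb : -s * ν ≤ t * (Real.log k + -s) + C := le_trans hlow hineq
    have htν : (0:ℝ) < t - ν := by linarith
    have hfin : t * Real.log k + C < (t - ν) * s := by
      have h4 : (t * Real.log k + C) / (t - ν) < s :=
        lt_of_lt_of_le hn (by simp [hs])
      calc t * Real.log k + C = (t * Real.log k + C) / (t - ν) * (t - ν) := by
            field_simp
        _ < s * (t - ν) := mul_lt_mul_of_pos_right h4 htν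
        _ = (t - ν) * s := mul_comm _ _
    nlinarith [hcomb, hfin]
  apply le_antisymm
  · exact csSup_le ⟨ν, hν0, 0, fun x hx => by simpa using (hupper x hx).2⟩ hbound
  · exact le_csSup ⟨ν, fun t ht => hbound t ht⟩ ⟨hν0, 0, fun x hx => by simpa using (hupper x hx).2⟩
end

section
/- Let k ≥ 1, let B ⊂ [0,∞)^k be a nonempty compact set, let t > 0, and let p ∈ ℕ^k. The function x ↦ ( ∏_{j=1}^k |x_j|^{2 p_j} ) · ( sup_{m ∈ B} ∏_{j=1}^k |x_j|^{2 m_j} )^{−t}, defined for x in the open unit polydisc D^k = { x ∈ ℂ^k | ∀ j, |x_j| < 1 } with all coordinates x_j ≠ 0, is integrable on D^k with respect to Lebesgue (volume) measure on ℂ^k if and only if for every w ∈ [0,∞)^k with w ≠ 0 one has t · min_{m ∈ B} ⟪m, w⟫ < Σ_{j=1}^k (p_j + 1) w_j. -/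
open MeasureTheory

namespace Stmt6

open Set

variable {k : ℕ}

/-- the dot product -/
noncomputable def dot (m s : Fin k → ℝ) : ℝ := ∑ j, m j * s j

lemma continuous_dot (s : Fin k → ℝ) : Continuous fun m : Fin k → ℝ => dot m s := by
  exact continuous_finset_sum _ fun j _ => (continuous_apply j).mul continuous_const

section B

variable (B : Set (Fin k → ℝ))

/-- min of the dot product over B -/
noncomputable def binf (s : Fin k → ℝ) : ℝ := ⨅ m : B, dot (m : Fin k → ℝ) s

lemma exists_min (hBne : B.Nonempty) (hBcpt : IsCompact B) (s : Fin k → ℝ) :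
    ∃ m₀ ∈ B, (∀ m ∈ B, dot m₀ s ≤ dot m s) ∧ binf B s = dot m₀ s := by
  obtain ⟨m₀, hm₀B, hmin⟩ := hBcpt.exists_isMinOn hBne (continuous_dot s).continuousOn
  haveI : Nonempty B := hBne.to_subtype
  have hbdd : BddBelow (Set.range fun m : B => dot (m : Fin k → ℝ) s) := by
    refine ⟨dot m₀ s, ?_⟩
    rintro x ⟨m, rfl⟩
    exact hmin m.2
  refine ⟨m₀, hm₀B, fun m hm => hmin hm, le_antisymm ?_ ?_⟩
  · exact ciInf_le hbdd ⟨m₀, hm₀B⟩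
  · exact le_ciInf fun m => hmin m.2

variable {B}

lemma dot_mul_smul (m s : Fin k → ℝ) (a : ℝ) : dot m (a • s) = a * dot m s := by
  simp only [dot, Finset.mul_sum, Pi.smul_apply, smul_eq_mul]
  exact Finset.sum_congr rfl fun j _ => by ring

lemma binf_abs_sub_le (hBne : B.Nonempty) (hBcpt : IsCompact B)
    {C : ℝ} (hC : ∀ m ∈ B, ∀ j, |m j| ≤ C) (s s' : Fin k → ℝ) :
    |binf B s - binf B s'| ≤ (k * C) * dist s s' := by
  have key : ∀ u v : Fin k → ℝ, binf B u - binf B v ≤ (k * C) * dist u v := by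
    intro u v
    obtain ⟨m₀, hm₀B, hmin, heq⟩ := exists_min B hBne hBcpt v
    obtain ⟨m₁, hm₁B, hmin₁, heq₁⟩ := exists_min B hBne hBcpt u
    have h1 : binf B u ≤ dot m₀ u := by rw [heq₁]; exact hmin₁ m₀ hm₀B
    have h2 : dot m₀ u - dot m₀ v ≤ (k * C) * dist u v := by
      have hd : dot m₀ u - dot m₀ v = ∑ j, m₀ j * (u j - v j) := by
        simp only [dot, mul_sub, ← Finset.sum_sub_distrib]
      rw [hd]
      calc ∑ j, m₀ j * (u j - v j) ≤ ∑ _j : Fin k, C * dist u v := by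
            refine Finset.sum_le_sum fun j _ => ?_
            calc m₀ j * (u j - v j) ≤ |m₀ j * (u j - v j)| := le_abs_self _
              _ = |m₀ j| * |u j - v j| := abs_mul _ _
              _ ≤ C * dist u v := by
                  refine mul_le_mul (hC _ hm₀B j) ?_ (abs_nonneg _)
                    ((abs_nonneg _).trans (hC _ hm₀B j))
                  rw [← Real.dist_eq]; exact dist_le_pi_dist u v j
        _ = (k * C) * dist u v := by
            rw [Finset.sum_const, Finset.card_univ, Fintype.card_fin, nsmul_eq_mul]; ring
    calc binf B u - binf B v ≤ dot m₀ u - dot m₀ v := by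
          rw [heq]; exact sub_le_sub_right h1 _
      _ ≤ _ := h2
  rw [abs_sub_le_iff]
  exact ⟨key s s', by simpa [dist_comm] using key s' s⟩

lemma binf_continuous (hBne : B.Nonempty) (hBcpt : IsCompact B)
    {C : ℝ} (hC0 : 0 ≤ C) (hC : ∀ m ∈ B, ∀ j, |m j| ≤ C) : Continuous (binf B) := by
  have hk0 : (0:ℝ) ≤ k * C := mul_nonneg (Nat.cast_nonneg k) hC0
  have h : LipschitzWith (Real.toNNReal (k * C)) (binf B) := by
    refine LipschitzWith.of_dist_le_mul fun x y => ?_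
    rw [Real.dist_eq, Real.coe_toNNReal _ hk0]
    exact binf_abs_sub_le hBne hBcpt hC x y
  exact h.continuous

lemma binf_smul (hBne : B.Nonempty) (hBcpt : IsCompact B) {a : ℝ} (ha : 0 ≤ a) (s : Fin k → ℝ) :
    binf B (a • s) = a * binf B s := by
  haveI : Nonempty B := hBne.to_subtype
  obtain ⟨m₀, hm₀B, hmin, heq⟩ := exists_min B hBne hBcpt s
  obtain ⟨m₁, hm₁B, hmin₁, heq₁⟩ := exists_min B hBne hBcpt (a • s)
  rw [heq, heq₁]
  rcases eq_or_lt_of_le ha with rfl | ha'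
  · rw [dot_mul_smul]; simp
  · have h1 : dot m₁ (a • s) ≤ dot m₀ (a • s) := hmin₁ m₀ hm₀B
    have h2 : dot m₀ s ≤ dot m₁ s := hmin m₁ hm₁B
    simp only [dot_mul_smul] at h1 ⊢
    have := mul_le_mul_of_nonneg_left h2 ha
    exact le_antisymm h1 this

end B

lemma exp_neg_abs_integrable {b : ℝ} (hb : 0 < b) :
    Integrable (fun x : ℝ => Real.exp (-b * |x|)) volume := by
  have h1 : IntegrableOn (fun x : ℝ => Real.exp (-b * x)) (Set.Ici 0) volume :=
    (integrableOn_Ici_iff_integrableOn_Ioi (by simp)).2 (exp_neg_integrableOn_Ioi 0 hb)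
  have h2 : IntegrableOn (fun x : ℝ => Real.exp (-b * -x)) (Set.Iic 0) volume := by
    have hneg : MeasurePreserving (fun x : ℝ => -x) volume volume :=
      Measure.measurePreserving_neg _
    have hemb : MeasurableEmbedding (fun x : ℝ => -x) := (Homeomorph.neg ℝ).measurableEmbedding
    have h3 := (hneg.integrableOn_comp_preimage hemb).2 h1
    have hpre : (fun x : ℝ => -x) ⁻¹' Set.Ici 0 = Set.Iic 0 := by
      ext x; simp [neg_nonneg]
    rw [hpre] at h3
    exact h3
  have h4 : IntegrableOn (fun x : ℝ => Real.exp (-b * |x|)) (Set.Iic 0 ∪ Set.Ici 0) volume := by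
    refine IntegrableOn.union ?_ ?_
    · exact (integrableOn_congr_fun (fun x hx => by rw [abs_of_nonpos hx]) measurableSet_Iic).2 h2
    · exact (integrableOn_congr_fun (fun x hx => by rw [abs_of_nonneg hx]) measurableSet_Ici).2 h1
  rwa [Set.Iic_union_Ici, integrableOn_univ] at h4

lemma volume_T_top (n : ℕ) (j₀ : Fin (n + 1)) (c : Fin n → ℝ) :
    volume {s : Fin (n + 1) → ℝ | 1 < s j₀ ∧
      ∀ i : Fin n, s (j₀.succAbove i) - s j₀ * c i ∈ Set.Ioo (0:ℝ) 1} = ⊤ := by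
  set T' : Set (ℝ × (Fin n → ℝ)) :=
    {q | 1 < q.1 ∧ ∀ i, q.2 i - q.1 * c i ∈ Set.Ioo (0:ℝ) 1} with hT'
  have hT'open : IsOpen T' := by
    have h1 : IsOpen {q : ℝ × (Fin n → ℝ) | 1 < q.1} := isOpen_lt continuous_const continuous_fst
    have h2 : ∀ i, IsOpen {q : ℝ × (Fin n → ℝ) | q.2 i - q.1 * c i ∈ Set.Ioo (0:ℝ) 1} := by
      intro i
      exact IsOpen.preimage (by fun_prop) isOpen_Ioo
    have he : T' = {q : ℝ × (Fin n → ℝ) | 1 < q.1} ∩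
        ⋂ i, {q : ℝ × (Fin n → ℝ) | q.2 i - q.1 * c i ∈ Set.Ioo (0:ℝ) 1} := by
      ext q; simp [hT', Set.mem_iInter]
    rw [he]; exact h1.inter (isOpen_iInter_of_finite h2)
  have hmp := volume_preserving_piFinSuccAbove (fun _ : Fin (n + 1) => ℝ) j₀
  have hpre : (MeasurableEquiv.piFinSuccAbove (fun _ : Fin (n + 1) => ℝ) j₀) ⁻¹' T' =
      {s : Fin (n + 1) → ℝ | 1 < s j₀ ∧
        ∀ i : Fin n, s (j₀.succAbove i) - s j₀ * c i ∈ Set.Ioo (0:ℝ) 1} := rfl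
  rw [← hpre, hmp.measure_preimage hT'open.measurableSet.nullMeasurableSet]
  have hsec : ∀ a : ℝ, (volume : Measure (Fin n → ℝ)) (Prod.mk a ⁻¹' T') =
      (Set.Ioi (1:ℝ)).indicator (fun _ => 1) a := by
    intro a
    by_cases ha : 1 < a
    · have he : Prod.mk a ⁻¹' T' =
          Set.univ.pi fun i => Set.Ioo (a * c i) (a * c i + 1) := by
        ext y
        simp only [hT', Set.mem_preimage, Set.mem_setOf_eq, Set.mem_pi, Set.mem_univ,
          forall_true_left, Set.mem_Ioo, true_implies, ha, true_and]
        refine forall_congr' fun i => ?_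
        constructor
        · rintro ⟨u, v⟩; constructor <;> linarith
        · rintro ⟨u, v⟩; constructor <;> linarith
      rw [he, volume_pi_pi]
      simp [Real.volume_Ioo, Set.indicator_of_mem (Set.mem_Ioi.2 ha)]
    · have he : Prod.mk a ⁻¹' T' = ∅ := by
        ext y; simp [hT', ha]
      rw [he]
      simp [Set.indicator_of_notMem (by simpa using ha : a ∉ Set.Ioi (1:ℝ))]
  rw [Measure.volume_eq_prod, Measure.prod_apply hT'open.measurableSet]
  rw [lintegral_congr hsec, lintegral_indicator measurableSet_Ioi]
  simp [Real.volume_Ioi]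

/-- The core real-variable integrability criterion. -/
lemma core (hk : 1 ≤ k) (G : (Fin k → ℝ) → ℝ) (hGcont : Continuous G)
    (hGhom : ∀ a : ℝ, 0 ≤ a → ∀ s, G (a • s) = a * G s)
    (L : ℝ) (hL : 0 ≤ L) (hGlip : ∀ a b, |G a - G b| ≤ L * dist a b) :
    IntegrableOn (fun s => Real.exp (-2 * G s)) {s : Fin k → ℝ | ∀ j, 0 < s j} volume ↔
      ∀ w : Fin k → ℝ, (∀ j, 0 ≤ w j) → w ≠ 0 → 0 < G w := by
  constructor
  · -- forward direction, by contradiction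
    intro hInt w hw hw0
    by_contra hle
    push_neg at hle
    obtain ⟨j₀, hj₀⟩ : ∃ j, 0 < w j := by
      by_contra h; push_neg at h
      exact hw0 (funext fun j => le_antisymm (h j) (hw j))
    set a := (w j₀)⁻¹ with hadef
    have ha : 0 ≤ a := inv_nonneg.2 hj₀.le
    set w' := a • w with hw'def
    have hw'j₀ : w' j₀ = 1 := by
      simp [hw'def, hadef, inv_mul_cancel₀ hj₀.ne']
    have hw'nn : ∀ j, 0 ≤ w' j := fun j => mul_nonneg ha (hw j)
    have hGw' : G w' ≤ 0 := by
      rw [hw'def, hGhom a ha]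
      have := mul_le_mul_of_nonneg_left hle ha
      simpa using this
    obtain ⟨n, rfl⟩ : ∃ n, k = n + 1 := ⟨k - 1, (Nat.succ_pred_eq_of_pos hk).symm⟩
    set T : Set (Fin (n + 1) → ℝ) := {s | 1 < s j₀ ∧
      ∀ i : Fin n, s (j₀.succAbove i) - s j₀ * (fun i => w' (j₀.succAbove i)) i ∈
        Set.Ioo (0:ℝ) 1} with hT
    have hTvol : volume T = ⊤ := volume_T_top n j₀ _
    have hTsub : T ⊆ {s | ∀ j, 0 < s j} := by
      rintro s ⟨h1, h2⟩ j
      rcases eq_or_ne j j₀ with rfl | hj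
      · linarith
      · obtain ⟨i, rfl⟩ := Fin.exists_succAbove_eq hj
        have h3 := (h2 i).1
        have hnn : 0 ≤ s j₀ * w' (j₀.succAbove i) :=
          mul_nonneg (by linarith) (hw'nn _)
        simp only at h3
        linarith
    have hbound : ∀ s ∈ T, Real.exp (-2 * L) ≤ Real.exp (-2 * G s) := by
      intro s hs
      obtain ⟨h1, h2⟩ := hs
      have hdist : dist s (s j₀ • w') ≤ 1 := by
        rw [dist_pi_le_iff zero_le_one]
        intro i
        rcases eq_or_ne i j₀ with rfl | hi
        · simp [Real.dist_eq, hw'j₀]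
        · obtain ⟨i', rfl⟩ := Fin.exists_succAbove_eq hi
          have h3 := h2 i'
          simp only [Set.mem_Ioo] at h3
          rw [Real.dist_eq, Pi.smul_apply, smul_eq_mul, abs_le]
          constructor <;> [linarith [h3.1]; linarith [h3.2]]
      have hGsw : G (s j₀ • w') ≤ 0 := by
        rw [hGhom _ (by linarith : (0:ℝ) ≤ s j₀)]
        have := mul_le_mul_of_nonneg_left hGw' (by linarith : (0:ℝ) ≤ s j₀)
        simpa using this
      have hGs : G s ≤ L := by
        have hlip := hGlip s (s j₀ • w')
        have h4 : G s - G (s j₀ • w') ≤ |G s - G (s j₀ • w')| := le_abs_self _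
        have h5 : L * dist s (s j₀ • w') ≤ L * 1 :=
          mul_le_mul_of_nonneg_left hdist hL
        linarith
      exact Real.exp_le_exp.2 (by linarith)
    have hint2 : IntegrableOn (fun s => Real.exp (-2 * G s)) T volume := hInt.mono_set hTsub
    have hfin := hint2.measure_ge_lt_top (Real.exp_pos (-2 * L))
    have hmono : volume.restrict T T ≤
        volume.restrict T {s | Real.exp (-2 * L) ≤ Real.exp (-2 * G s)} :=
      measure_mono fun s hs => hbound s hs
    rw [Measure.restrict_apply_self, hTvol] at hmono
    exact absurd (lt_of_le_of_lt hmono hfin) (by simp)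
  · -- backward direction
    intro hpos
    haveI hne : Nonempty (Fin k) := ⟨⟨0, hk⟩⟩
    set K := Metric.sphere (0 : Fin k → ℝ) 1 ∩ {s | ∀ j, 0 ≤ s j} with hK
    have hKcl : IsClosed {s : Fin k → ℝ | ∀ j, 0 ≤ s j} := by
      have he : {s : Fin k → ℝ | ∀ j, 0 ≤ s j} = ⋂ j, {s | 0 ≤ s j} := by
        ext; simp [Set.mem_iInter]
      rw [he]
      exact isClosed_iInter fun j => isClosed_le continuous_const (continuous_apply j)
    have hKcpt : IsCompact K := (isCompact_sphere 0 1).inter_right hKcl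
    have hKne : K.Nonempty := by
      refine ⟨(fun _ => (1:ℝ)), ?_, fun j => by norm_num⟩
      simp [mem_sphere_iff_norm, pi_norm_const]
    obtain ⟨s₀, hs₀K, hmin⟩ := hKcpt.exists_isMinOn hKne hGcont.continuousOn
    set c := G s₀ with hc
    have hs₀norm : ‖s₀‖ = 1 := by simpa [mem_sphere_iff_norm] using hs₀K.1
    have hcpos : 0 < c := by
      refine hpos s₀ hs₀K.2 fun h => ?_
      rw [h] at hs₀norm; simp at hs₀norm
    have hlow : ∀ s : Fin k → ℝ, (∀ j, 0 ≤ s j) → s ≠ 0 → c * ‖s‖ ≤ G s := by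
      intro s hs hs0
      have hn : 0 < ‖s‖ := norm_pos_iff.2 hs0
      have h1 : G s = ‖s‖ * G (‖s‖⁻¹ • s) := by
        rw [← hGhom _ hn.le, smul_smul, mul_inv_cancel₀ hn.ne', one_smul]
      have hmem : ‖s‖⁻¹ • s ∈ K := by
        refine ⟨?_, fun j => mul_nonneg (inv_nonneg.2 hn.le) (hs j)⟩
        simp [mem_sphere_iff_norm, norm_smul, abs_of_pos (inv_pos.2 hn),
          inv_mul_cancel₀ hn.ne']
      have h2 : c ≤ G (‖s‖⁻¹ • s) := hmin hmem
      rw [h1, mul_comm]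
      exact mul_le_mul_of_nonneg_left h2 hn.le
    have hkpos : (0:ℝ) < k := by exact_mod_cast hk
    set b := 2 * c / k with hb
    have hbpos : 0 < b := by positivity
    have hg : Integrable (fun s : Fin k → ℝ => ∏ j, Real.exp (-b * |s j|)) volume :=
      Integrable.fintype_prod (f := fun _ x => Real.exp (-b * |x|))
        fun _ => exp_neg_abs_integrable hbpos
    have horth : MeasurableSet {s : Fin k → ℝ | ∀ j, 0 < s j} := by
      have he : {s : Fin k → ℝ | ∀ j, 0 < s j} = ⋂ j, {s | 0 < s j} := by
        ext; simp [Set.mem_iInter]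
      rw [he]
      exact MeasurableSet.iInter fun j =>
        (isOpen_lt continuous_const (continuous_apply j)).measurableSet
    refine Integrable.mono' hg.integrableOn ?_ ?_
    · exact (Continuous.aestronglyMeasurable (by continuity)).restrict
    · refine (ae_restrict_iff' horth).2 (Filter.Eventually.of_forall fun s hs => ?_)
      have hs' : ∀ j, 0 < s j := hs
      have hsnn : ∀ j, 0 ≤ s j := fun j => (hs' j).le
      have hs0 : s ≠ 0 := by
        intro h
        have := hs' ⟨0, hk⟩
        rw [h] at this
        simp at this
      rw [Real.norm_eq_abs, abs_of_pos (Real.exp_pos _), ← Real.exp_sum]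
      apply Real.exp_le_exp.2
      have h1 : c * ‖s‖ ≤ G s := hlow s hsnn hs0
      have h2 : ∑ j, |s j| ≤ (k : ℝ) * ‖s‖ := by
        calc ∑ j, |s j| ≤ ∑ _j : Fin k, ‖s‖ := by
              refine Finset.sum_le_sum fun j _ => ?_
              rw [← Real.norm_eq_abs]
              exact norm_le_pi_norm s j
          _ = (k : ℝ) * ‖s‖ := by
              rw [Finset.sum_const, Finset.card_univ, Fintype.card_fin, nsmul_eq_mul]
      have hsum : ∑ j, -b * |s j| = -b * ∑ j, |s j| := by rw [← Finset.mul_sum]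
      rw [hsum]
      have h3 : b * ∑ j, |s j| ≤ 2 * c * ‖s‖ := by
        calc b * ∑ j, |s j| ≤ b * ((k:ℝ) * ‖s‖) := mul_le_mul_of_nonneg_left h2 hbpos.le
          _ = 2 * c * ‖s‖ := by
              rw [hb]; field_simp
      linarith

/-- determinant of the diagonal ℝ-linear map given by coordinatewise complex multiplication -/
lemma det_diag_mul (c : Fin k → ℂ) (L : (Fin k → ℂ) →ₗ[ℝ] (Fin k → ℂ))
    (hL : ∀ x j, L x j = x j * c j) :
    LinearMap.det L = ∏ j, Complex.normSq (c j) := by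
  classical
  let e : ((_ : Fin k) × Fin 2) ≃ (Fin 2 × Fin k) :=
    (Equiv.sigmaEquivProd (Fin k) (Fin 2)).trans (Equiv.prodComm _ _)
  let b := (Pi.basis fun _ : Fin k => Complex.basisOneI).reindex e
  have hmat : LinearMap.toMatrix b b L =
      Matrix.blockDiagonal (fun j => !![(c j).re, -(c j).im; (c j).im, (c j).re]) := by
    ext ⟨r, i⟩ ⟨u, j⟩
    rw [LinearMap.toMatrix_apply, Module.Basis.repr_reindex_apply, Module.Basis.reindex_apply]
    have he1 : e.symm (u, j) = ⟨j, u⟩ := rfl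
    have he2 : e.symm (r, i) = ⟨i, r⟩ := rfl
    rw [he1, he2, Pi.basis_apply, Pi.basis_repr, hL, Matrix.blockDiagonal_apply]
    rcases eq_or_ne i j with rfl | hij
    · rw [if_pos rfl, Pi.single_eq_same]
      fin_cases u <;> fin_cases r <;>
        simp [Complex.coe_basisOneI_repr, Complex.coe_basisOneI, Complex.mul_re,
          Complex.mul_im]
    · rw [if_neg hij, Pi.single_eq_of_ne hij]
      simp
  rw [← LinearMap.det_toMatrix b, hmat, Matrix.det_blockDiagonal]
  refine Finset.prod_congr rfl fun j _ => ?_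
  rw [Matrix.det_fin_two_of, Complex.normSq_apply]
  ring

/-- the parametrization of the punctured slit polydisc -/
noncomputable def Phi (z : Fin k → ℂ) : Fin k → ℂ := fun j => Complex.exp (-(z j))

/-- the source domain -/
def Sset (k : ℕ) : Set (Fin k → ℂ) := {z | ∀ j, 0 < (z j).re ∧ |(z j).im| < Real.pi}

lemma Sset_open : IsOpen (Sset k) := by
  have he : Sset k = ⋂ j, ({z : Fin k → ℂ | 0 < (z j).re} ∩ {z | |(z j).im| < Real.pi}) := by
    ext z; simp [Sset, Set.mem_iInter, forall_and]
  rw [he]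
  refine isOpen_iInter_of_finite fun j => IsOpen.inter ?_ ?_
  · exact isOpen_lt continuous_const (Complex.continuous_re.comp (continuous_apply j))
  · exact isOpen_lt ((Complex.continuous_im.comp (continuous_apply j)).abs) continuous_const

/-- multiplication by a complex constant as a real-linear CLM -/
noncomputable def clmMul (c : ℂ) : ℂ →L[ℝ] ℂ :=
  ((1 : ℂ →L[ℂ] ℂ).smulRight c).restrictScalars ℝ

lemma clmMul_apply (c w : ℂ) : clmMul c w = w * c := by
  simp [clmMul]

/-- the derivative of Phi -/
noncomputable def PhiDeriv (z : Fin k → ℂ) : (Fin k → ℂ) →L[ℝ] (Fin k → ℂ) :=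
  ContinuousLinearMap.pi fun j =>
    (clmMul (-Complex.exp (-(z j)))).comp (ContinuousLinearMap.proj j)

lemma hasFDerivAt_Phi (z : Fin k → ℂ) : HasFDerivAt Phi (PhiDeriv z) z := by
  apply hasFDerivAt_pi''
  intro j
  have h1 : HasDerivAt (fun w : ℂ => Complex.exp (-w)) (-Complex.exp (-(z j))) (z j) := by
    simpa [Function.comp_def] using (Complex.hasDerivAt_exp (-(z j))).comp (z j) (hasDerivAt_neg (z j))
  have h2 := (h1.hasFDerivAt.restrictScalars ℝ).comp z
    ((ContinuousLinearMap.proj j : (Fin k → ℂ) →L[ℝ] ℂ).hasFDerivAt)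
  convert h2 using 1
  · rfl
  · refine ContinuousLinearMap.ext fun x => ?_; simp [PhiDeriv, clmMul_apply]

lemma PhiDeriv_det (z : Fin k → ℂ) :
    (PhiDeriv z).det = ∏ j, Real.exp (-2 * (z j).re) := by
  have h1 : LinearMap.det ((PhiDeriv z) : (Fin k → ℂ) →ₗ[ℝ] (Fin k → ℂ)) =
      ∏ j, Complex.normSq (-Complex.exp (-(z j))) := by
    apply det_diag_mul
    intro x j
    simp [PhiDeriv, clmMul, ContinuousLinearMap.proj_pi]
  rw [ContinuousLinearMap.det, h1]
  refine Finset.prod_congr rfl fun j _ => ?_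
  rw [Complex.normSq_neg, Complex.normSq_eq_norm_sq, Complex.norm_exp]
  rw [← Real.exp_nat_mul]
  congr 1
  simp [Complex.neg_re]

lemma Phi_injOn : Set.InjOn (Phi) (Sset k) := by
  intro z hz z' hz' h
  funext j
  have hj : Complex.exp (-(z j)) = Complex.exp (-(z' j)) := congrFun h j
  obtain ⟨m, hm⟩ := Complex.exp_eq_exp_iff_exists_int.1 hj
  have him := congrArg Complex.im hm
  simp only [Complex.neg_im, Complex.add_im, Complex.mul_im, Complex.intCast_re,
    Complex.intCast_im, Complex.mul_re, Complex.I_re, Complex.I_im, Complex.ofReal_re,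
    Complex.ofReal_im, Complex.re_ofNat, Complex.im_ofNat] at him
  -- him : -(z j).im = -(z' j).im + m * (2 * π)
  have h1 := (hz j).2
  have h2 := (hz' j).2
  have hm0 : m = 0 := by
    have hpi := Real.pi_pos
    have habs : |(m : ℝ)| * (2 * Real.pi) < 2 * Real.pi := by
      have : (m : ℝ) * (2 * Real.pi) = -(z j).im + (z' j).im := by linarith
      have habs2 : |(m : ℝ) * (2 * Real.pi)| < 2 * Real.pi := by
        rw [this]
        have := abs_lt.1 h1
        have := abs_lt.1 h2
        rw [abs_lt]
        constructor <;> linarith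
      rwa [abs_mul, abs_of_pos (by positivity : (0:ℝ) < 2 * Real.pi)] at habs2
    have : |(m : ℝ)| < 1 := by
      have h2pi : (0:ℝ) < 2 * Real.pi := by positivity
      by_contra hcon
      push_neg at hcon
      nlinarith
    have h6 : |m| < 1 := by exact_mod_cast this
    rwa [Int.abs_lt_one_iff] at h6
  rw [hm0] at hm
  simp at hm
  exact hm

lemma Phi_image :
    Phi '' (Sset k) = {x : Fin k → ℂ | ∀ j, ‖x j‖ < 1 ∧ x j ∈ Complex.slitPlane} := by
  ext x
  constructor
  · rintro ⟨z, hz, rfl⟩ j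
    obtain ⟨h1, h2⟩ := hz j
    constructor
    · show ‖Complex.exp (-(z j))‖ < 1
      rw [Complex.norm_exp]
      have : (-(z j)).re < 0 := by simp [Complex.neg_re]; linarith
      calc Real.exp ((-(z j)).re) < Real.exp 0 := Real.exp_lt_exp.2 this
        _ = 1 := Real.exp_zero
    · show Complex.exp (-(z j)) ∈ Complex.slitPlane
      rw [Complex.mem_slitPlane_iff]
      rcases eq_or_ne (z j).im 0 with h0 | h0
      · left
        rw [Complex.exp_re]
        have him0 : (-(z j)).im = 0 := by simp [h0]
        rw [him0, Real.cos_zero, mul_one]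
        positivity
      · right
        rw [Complex.exp_im]
        have hsin : Real.sin (-(z j)).im ≠ 0 := by
          simp only [Complex.neg_im]
          rw [Real.sin_neg, neg_ne_zero]
          intro hs
          have habs := abs_lt.1 h2
          exact h0 ((Real.sin_eq_zero_iff_of_lt_of_lt (by linarith) (by linarith)).1 hs)
        exact mul_ne_zero (Real.exp_ne_zero _) hsin
  · intro hx
    have hx0 : ∀ j, x j ≠ 0 := by
      intro j h0
      have := (hx j).2
      rw [h0] at this
      simp [Complex.mem_slitPlane_iff] at this
    refine ⟨fun j => -Complex.log (x j), fun j => ?_, funext fun j => ?_⟩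
    · obtain ⟨h1, h2⟩ := hx j
      constructor
      · simp only [Complex.neg_re, Complex.log_re]
        have habs : 0 < ‖x j‖ := by
          simpa [AbsoluteValue.pos_iff] using hx0 j
        exact neg_pos.2 (Real.log_neg habs h1)
      · simp only [Complex.neg_im, Complex.log_im, abs_neg]
        rw [abs_lt]
        exact ⟨Complex.neg_pi_lt_arg _,
          lt_of_le_of_ne (Complex.arg_le_pi _) (Complex.slitPlane_arg_ne_pi h2)⟩
    · show Complex.exp (-(-Complex.log (x j))) = x j
      rw [neg_neg, Complex.exp_log (hx0 j)]

lemma slit_compl_null : (volume : Measure ℂ) {ζ : ℂ | ζ ∉ Complex.slitPlane} = 0 := by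
  have hsub : {ζ : ℂ | ζ ∉ Complex.slitPlane} ⊆ Complex.im ⁻¹' {0} := by
    intro ζ hζ
    rw [Set.mem_setOf_eq, Complex.mem_slitPlane_iff] at hζ
    push_neg at hζ
    exact hζ.2
  refine measure_mono_null hsub ?_
  have hmp : MeasurePreserving (Complex.measurableEquivRealProd.symm) volume volume :=
    Complex.volume_preserving_equiv_real_prod.symm _
  have hms : MeasurableSet (Complex.im ⁻¹' ({0} : Set ℝ)) :=
    Complex.measurable_im (measurableSet_singleton 0)
  rw [← hmp.measure_preimage hms.nullMeasurableSet]
  have he : (Complex.measurableEquivRealProd.symm) ⁻¹' (Complex.im ⁻¹' {0}) =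
      (Set.univ : Set ℝ) ×ˢ ({0} : Set ℝ) := by
    ext ⟨a, b⟩
    simp [Complex.measurableEquivRealProd, Complex.ext_iff, eq_comm]
  rw [he, Measure.volume_eq_prod, Measure.prod_prod]
  simp

lemma polydisc_ae_eq :
    ({x : Fin k → ℂ | ∀ j, ‖x j‖ < 1} : Set (Fin k → ℂ)) =ᵐ[volume]
      Phi '' (Sset k) := by
  rw [Phi_image]
  have hsub : {x : Fin k → ℂ | ∀ j, ‖x j‖ < 1 ∧ x j ∈ Complex.slitPlane} ⊆
      {x : Fin k → ℂ | ∀ j, ‖x j‖ < 1} := fun x hx j => (hx j).1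
  have hdiff : volume (({x : Fin k → ℂ | ∀ j, ‖x j‖ < 1} : Set (Fin k → ℂ)) \ {x | ∀ j, ‖x j‖ < 1 ∧ x j ∈ Complex.slitPlane} : Set (Fin k → ℂ)) = 0 := by
    refine measure_mono_null (fun x hx => ?_)
      (?_ : volume (⋃ j, Function.eval j ⁻¹' {ζ : ℂ | ζ ∉ Complex.slitPlane}) = 0)
    · obtain ⟨h1, h2⟩ := hx
      simp only [Set.mem_setOf_eq, not_forall] at h2
      obtain ⟨j, hj⟩ := h2
      rw [Set.mem_iUnion]
      refine ⟨j, ?_⟩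
      simp only [Set.mem_preimage, Function.eval, Set.mem_setOf_eq]
      intro hslit
      exact hj ⟨h1 j, hslit⟩
    · refine measure_iUnion_null fun j => ?_
      rw [volume_pi]
      exact Measure.pi_eval_preimage_null _ slit_compl_null
  have h1 : ({x : Fin k → ℂ | ∀ j, ‖x j‖ < 1} : Set (Fin k → ℂ)) =ᵐ[volume]
      ({x | ∀ j, ‖x j‖ < 1 ∧ x j ∈ Complex.slitPlane} : Set (Fin k → ℂ)) := by
    refine MeasureTheory.ae_eq_set.2 ⟨hdiff, ?_⟩
    rw [Set.diff_eq_empty.2 hsub]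
    simp
  exact h1

/-- Fubini: integrability on `Sset` of a function of the real parts. -/
lemma fubini_step (H : (Fin k → ℝ) → ℝ) (hH : Continuous H) :
    IntegrableOn (fun z : Fin k → ℂ => H fun j => (z j).re) (Sset k) volume ↔
      IntegrableOn H {s : Fin k → ℝ | ∀ j, 0 < s j} volume := by
  set e1 : (Fin k → ℂ) ≃ᵐ (Fin k → ℝ × ℝ) :=
    MeasurableEquiv.piCongrRight fun _ => Complex.measurableEquivRealProd with he1def
  have he1 : MeasurePreserving e1 volume volume := by
    have h := MeasureTheory.measurePreserving_pi (fun _ : Fin k => (volume : Measure ℂ))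
      (fun _ : Fin k => (volume : Measure (ℝ × ℝ)))
      (fun _ : Fin k => Complex.volume_preserving_equiv_real_prod)
    rw [volume_pi (α := fun _ : Fin k => ℂ)]
    rw [volume_pi (α := fun _ : Fin k => ℝ × ℝ)]
    exact h
  set e2 := MeasurableEquiv.arrowProdEquivProdArrow ℝ ℝ (Fin k) with he2def
  have he2 : MeasurePreserving e2 volume volume :=
    volume_measurePreserving_arrowProdEquivProdArrow ℝ ℝ (Fin k)
  set e := e1.trans e2 with hedef
  have he : MeasurePreserving e volume volume := he2.comp he1
  set O : Set (Fin k → ℝ) := {s | ∀ j, 0 < s j} with hOdef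
  set Θ : Set (Fin k → ℝ) := {θ | ∀ j, |θ j| < Real.pi} with hΘdef
  have hOmeas : MeasurableSet O := by
    have heq : O = ⋂ j, {s : Fin k → ℝ | 0 < s j} := by ext; simp [hOdef, Set.mem_iInter]
    rw [heq]
    exact MeasurableSet.iInter fun j =>
      (isOpen_lt continuous_const (continuous_apply j)).measurableSet
  have hΘmeas : MeasurableSet Θ := by
    have heq : Θ = ⋂ j, {θ : Fin k → ℝ | |θ j| < Real.pi} := by ext; simp [hΘdef, Set.mem_iInter]
    rw [heq]
    exact MeasurableSet.iInter fun j =>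
      (isOpen_lt (continuous_apply j).abs continuous_const).measurableSet
  have hΘvol : volume Θ = ENNReal.ofReal (2 * Real.pi) ^ k := by
    have heq : Θ = Set.univ.pi fun _ : Fin k => Set.Ioo (-Real.pi) Real.pi := by
      ext θ; simp [hΘdef, Set.mem_pi, abs_lt]
    rw [heq, volume_pi_pi]
    simp only [Real.volume_Ioo, sub_neg_eq_add]
    rw [Finset.prod_const, Finset.card_univ, Fintype.card_fin]
    congr 1
    ring
  have hΘ0 : volume Θ ≠ 0 := by
    rw [hΘvol]
    have : (0:ℝ) < 2 * Real.pi := by positivity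
    simp [pow_eq_zero_iff, ENNReal.ofReal_eq_zero, not_le, this, (not_le.2 Real.pi_pos : ¬ Real.pi ≤ 0)]
  have hΘtop : volume Θ ≠ ⊤ := by
    rw [hΘvol]
    exact ENNReal.pow_ne_top ENNReal.ofReal_ne_top
  have hpre : e ⁻¹' (O ×ˢ Θ) = Sset k := by
    ext z
    constructor
    · rintro ⟨h1, h2⟩
      exact fun j => ⟨h1 j, h2 j⟩
    · intro h
      exact ⟨fun j => (h j).1, fun j => (h j).2⟩
  have key : IntegrableOn (fun q : (Fin k → ℝ) × (Fin k → ℝ) => H q.1) (O ×ˢ Θ) volume ↔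
      IntegrableOn H O volume := by
    unfold IntegrableOn
    rw [Measure.volume_eq_prod, ← Measure.prod_restrict]
    have hΘu : (volume.restrict Θ) Set.univ = volume Θ := by
      rw [Measure.restrict_apply_univ]
    have hfi : HasFiniteIntegral (fun q : (Fin k → ℝ) × (Fin k → ℝ) => H q.1)
        ((volume.restrict O).prod (volume.restrict Θ)) ↔
        HasFiniteIntegral H (volume.restrict O) := by
      simp only [hasFiniteIntegral_def]
      have haem : AEMeasurable (fun q : (Fin k → ℝ) × (Fin k → ℝ) => ‖H q.1‖ₑ)
          ((volume.restrict O).prod (volume.restrict Θ)) := by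
        have hm : Measurable fun q : (Fin k → ℝ) × (Fin k → ℝ) => H q.1 :=
          hH.measurable.comp measurable_fst
        exact hm.enorm.aemeasurable
      rw [lintegral_prod _ haem]
      simp only [lintegral_const, hΘu]
      rw [lintegral_mul_const' _ _ hΘtop]
      constructor
      · intro h
        by_contra htop
        push_neg at htop
        rw [top_le_iff] at htop
        rw [htop, ENNReal.top_mul hΘ0] at h
        exact absurd h (by simp)
      · intro h
        exact ENNReal.mul_lt_top h hΘtop.lt_top
    constructor
    · intro h
      exact ⟨hH.aestronglyMeasurable, hfi.1 h.hasFiniteIntegral⟩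
    · intro h
      exact ⟨(hH.comp continuous_fst).aestronglyMeasurable, hfi.2 h.hasFiniteIntegral⟩
  have hcomp := he.integrableOn_comp_preimage e.measurableEmbedding
    (f := fun q : (Fin k → ℝ) × (Fin k → ℝ) => H q.1) (s := O ×ˢ Θ)
  rw [hpre] at hcomp
  exact hcomp.trans key

lemma sup_eq (hBne : B.Nonempty) (hBcpt : IsCompact B) (s : Fin k → ℝ) :
    (⨆ m : B, ∏ j, Real.exp (-((s j))) ^ (2 * (m : Fin k → ℝ) j)) =
      Real.exp (-2 * binf B s) := by
  haveI : Nonempty B := hBne.to_subtype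
  have hterm : ∀ m : Fin k → ℝ,
      (∏ j, Real.exp (-(s j)) ^ (2 * m j)) = Real.exp (-2 * dot m s) := by
    intro m
    have hpt : ∀ j : Fin k, Real.exp (-(s j)) ^ (2 * m j) = Real.exp (-(s j) * (2 * m j)) :=
      fun j => by rw [Real.rpow_def_of_pos (Real.exp_pos _), Real.log_exp]
    rw [Finset.prod_congr rfl (fun j _ => hpt j), ← Real.exp_sum]
    congr 1
    rw [dot, Finset.mul_sum]
    exact Finset.sum_congr rfl fun j _ => by ring
  obtain ⟨m₀, hm₀B, hmin, heq⟩ := exists_min B hBne hBcpt s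
  rw [heq]
  have hbdd : BddAbove (Set.range fun m : B =>
      ∏ j, Real.exp (-(s j)) ^ (2 * (m : Fin k → ℝ) j)) := by
    refine ⟨Real.exp (-2 * dot m₀ s), ?_⟩
    rintro x ⟨m, rfl⟩
    exact le_of_eq_of_le (hterm _)
      (Real.exp_le_exp.2 (by have := hmin m m.2; linarith))
  apply le_antisymm
  · refine ciSup_le fun m => ?_
    exact le_of_eq_of_le (hterm _)
      (Real.exp_le_exp.2 (by have := hmin m m.2; linarith))
  · exact le_of_eq_of_le (hterm m₀).symm (le_ciSup hbdd (⟨m₀, hm₀B⟩ : B))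

end Stmt6

/-- Howald–Guenancia type criterion: the monomial-type function
`x ↦ (∏_j |x_j|^{2p_j}) (sup_{m ∈ B} ∏_j |x_j|^{2m_j})^{-t}` is integrable on the open unit
polydisc iff `t · min_{m ∈ B} ⟪m,w⟫ < Σ_j (p_j + 1) w_j` for every `w ∈ [0,∞)^k \ {0}`. -/
theorem stmt_6 (k : ℕ) (hk : 1 ≤ k)
    (B : Set (Fin k → ℝ)) (hBne : B.Nonempty) (hBcpt : IsCompact B)
    (hBpos : ∀ m ∈ B, ∀ j, 0 ≤ m j)
    (t : ℝ) (ht : 0 < t) (p : Fin k → ℕ) :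
    IntegrableOn
        (fun x : Fin k → ℂ =>
          (∏ j, ‖x j‖ ^ (2 * (p j : ℝ))) *
            (⨆ m : B, ∏ j, ‖x j‖ ^ (2 * (m : Fin k → ℝ) j)) ^ (-t))
        {x : Fin k → ℂ | ∀ j, ‖x j‖ < 1} volume
      ↔ ∀ w : Fin k → ℝ, (∀ j, 0 ≤ w j) → w ≠ 0 →
          t * (⨅ m : B, ∑ j, (m : Fin k → ℝ) j * w j) < ∑ j, ((p j : ℝ) + 1) * w j := by
  classical
  obtain ⟨C, hC0, hC⟩ : ∃ C : ℝ, 0 ≤ C ∧ ∀ m ∈ B, ∀ j, |m j| ≤ C := by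
    obtain ⟨r, hr⟩ := hBcpt.isBounded.subset_closedBall 0
    refine ⟨max r 0, le_max_right _ _, fun m hm j => ?_⟩
    have h1 : ‖m‖ ≤ r := by simpa using hr hm
    have h2 : |m j| ≤ ‖m‖ := by rw [← Real.norm_eq_abs]; exact norm_le_pi_norm m j
    exact h2.trans (h1.trans (le_max_left _ _))
  set G : (Fin k → ℝ) → ℝ :=
    fun s => (∑ j, ((p j : ℝ) + 1) * s j) - t * Stmt6.binf B s with hG
  have hGcont : Continuous G := by
    refine Continuous.sub ?_
      (continuous_const.mul (Stmt6.binf_continuous hBne hBcpt hC0 hC))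
    exact continuous_finset_sum _ fun j _ => continuous_const.mul (continuous_apply j)
  have hGhom : ∀ a : ℝ, 0 ≤ a → ∀ s, G (a • s) = a * G s := by
    intro a ha s
    rw [hG]
    simp only
    rw [Stmt6.binf_smul hBne hBcpt ha]
    have hsum : ∑ j, ((p j : ℝ) + 1) * (a • s) j = a * ∑ j, ((p j : ℝ) + 1) * s j := by
      rw [Finset.mul_sum]
      refine Finset.sum_congr rfl fun j _ => ?_
      simp only [Pi.smul_apply, smul_eq_mul]
      ring
    rw [hsum]
    ring
  set L : ℝ := (∑ j, ((p j : ℝ) + 1)) + t * (k * C) with hLdef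
  have hL : 0 ≤ L := by
    have h1 : (0:ℝ) ≤ ∑ j, ((p j : ℝ) + 1) :=
      Finset.sum_nonneg fun j _ => by positivity
    have h2 : (0:ℝ) ≤ t * (k * C) := by positivity
    linarith
  have hGlip : ∀ x y, |G x - G y| ≤ L * dist x y := by
    intro x y
    have h1 : |(∑ j, ((p j:ℝ)+1) * x j) - ∑ j, ((p j:ℝ)+1) * y j| ≤
        (∑ j, ((p j:ℝ)+1)) * dist x y := by
      rw [← Finset.sum_sub_distrib]
      refine (Finset.abs_sum_le_sum_abs _ _).trans ?_
      rw [Finset.sum_mul]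
      refine Finset.sum_le_sum fun j _ => ?_
      rw [← mul_sub, abs_mul, abs_of_nonneg (by positivity : (0:ℝ) ≤ (p j:ℝ)+1)]
      refine mul_le_mul_of_nonneg_left ?_ (by positivity)
      rw [← Real.dist_eq]
      exact dist_le_pi_dist x y j
    have h2 := Stmt6.binf_abs_sub_le hBne hBcpt hC x y
    have h3 : G x - G y = ((∑ j, ((p j:ℝ)+1) * x j) - ∑ j, ((p j:ℝ)+1) * y j) -
        t * (Stmt6.binf B x - Stmt6.binf B y) := by rw [hG]; ring
    rw [h3]
    calc |((∑ j, ((p j:ℝ)+1) * x j) - ∑ j, ((p j:ℝ)+1) * y j) -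
          t * (Stmt6.binf B x - Stmt6.binf B y)| =
        |((∑ j, ((p j:ℝ)+1) * x j) - ∑ j, ((p j:ℝ)+1) * y j) +
          -(t * (Stmt6.binf B x - Stmt6.binf B y))| := by rw [sub_eq_add_neg]
      _ ≤ |(∑ j, ((p j:ℝ)+1) * x j) - ∑ j, ((p j:ℝ)+1) * y j| +
          |-(t * (Stmt6.binf B x - Stmt6.binf B y))| := abs_add_le _ _
      _ = |(∑ j, ((p j:ℝ)+1) * x j) - ∑ j, ((p j:ℝ)+1) * y j| +
          t * |Stmt6.binf B x - Stmt6.binf B y| := by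
            rw [abs_neg, abs_mul, abs_of_pos ht]
      _ ≤ (∑ j, ((p j:ℝ)+1)) * dist x y + t * ((k * C) * dist x y) := by
            refine add_le_add h1 (mul_le_mul_of_nonneg_left h2 ht.le)
      _ = L * dist x y := by rw [hLdef]; ring
  have hcore := Stmt6.core hk G hGcont hGhom L hL hGlip
  have hS : MeasurableSet (Stmt6.Sset k) := Stmt6.Sset_open.measurableSet
  have hjac := integrableOn_image_iff_integrableOn_abs_det_fderiv_smul volume hS
    (fun x _ => (Stmt6.hasFDerivAt_Phi x).hasFDerivWithinAt) Stmt6.Phi_injOn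
    (fun x : Fin k → ℂ =>
      (∏ j, ‖x j‖ ^ (2 * (p j : ℝ))) *
        (⨆ m : B, ∏ j, ‖x j‖ ^ (2 * (m : Fin k → ℝ) j)) ^ (-t))
  have hset : volume.restrict {x : Fin k → ℂ | ∀ j, ‖x j‖ < 1} =
      volume.restrict (Stmt6.Phi '' Stmt6.Sset k) :=
    Measure.restrict_congr_set Stmt6.polydisc_ae_eq
  have heq1 : IntegrableOn
      (fun x : Fin k → ℂ =>
        (∏ j, ‖x j‖ ^ (2 * (p j : ℝ))) *
          (⨆ m : B, ∏ j, ‖x j‖ ^ (2 * (m : Fin k → ℝ) j)) ^ (-t))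
      {x : Fin k → ℂ | ∀ j, ‖x j‖ < 1} volume ↔
      IntegrableOn
      (fun x : Fin k → ℂ =>
        (∏ j, ‖x j‖ ^ (2 * (p j : ℝ))) *
          (⨆ m : B, ∏ j, ‖x j‖ ^ (2 * (m : Fin k → ℝ) j)) ^ (-t))
      (Stmt6.Phi '' Stmt6.Sset k) volume := by
    unfold IntegrableOn
    rw [hset]
  have heqOn : Set.EqOn
      (fun z : Fin k → ℂ => |(Stmt6.PhiDeriv z).det| •
        ((∏ j, ‖Stmt6.Phi z j‖ ^ (2 * (p j : ℝ))) *
          (⨆ m : B, ∏ j, ‖Stmt6.Phi z j‖ ^ (2 * (m : Fin k → ℝ) j)) ^ (-t)))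
      (fun z : Fin k → ℂ => Real.exp (-2 * G (fun j => (z j).re)))
      (Stmt6.Sset k) := by
    intro z hz
    simp only
    have habs : ∀ j, ‖Stmt6.Phi z j‖ = Real.exp (-((z j).re)) := by
      intro j
      rw [show Stmt6.Phi z j = Complex.exp (-(z j)) from rfl, Complex.norm_exp,
        Complex.neg_re]
    have hdet : |(Stmt6.PhiDeriv z).det| = Real.exp (∑ j, -2 * (z j).re) := by
      rw [Stmt6.PhiDeriv_det, abs_of_pos (Finset.prod_pos fun j _ => Real.exp_pos _),
        Real.exp_sum]
    have hfac : (∏ j, ‖Stmt6.Phi z j‖ ^ (2 * (p j : ℝ))) =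
        Real.exp (∑ j, -((z j).re) * (2 * (p j:ℝ))) := by
      rw [Real.exp_sum]
      refine Finset.prod_congr rfl fun j _ => ?_
      rw [habs j, Real.rpow_def_of_pos (Real.exp_pos _), Real.log_exp]
    have hsup : (⨆ m : B, ∏ j, ‖Stmt6.Phi z j‖ ^ (2 * (m : Fin k → ℝ) j)) =
        Real.exp (-2 * Stmt6.binf B (fun j => (z j).re)) := by
      rw [← Stmt6.sup_eq hBne hBcpt (fun j => (z j).re)]
      have hfun : (fun m : B => ∏ j, ‖Stmt6.Phi z j‖ ^ (2 * (m : Fin k → ℝ) j)) =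
          (fun m : B => ∏ j, Real.exp (-((z j).re)) ^ (2 * (m : Fin k → ℝ) j)) :=
        funext fun m => Finset.prod_congr rfl fun j _ => by rw [habs j]
      rw [iSup, iSup, hfun]
    rw [smul_eq_mul, hdet, hfac, hsup, Real.rpow_def_of_pos (Real.exp_pos _), Real.log_exp]
    rw [← Real.exp_add, ← Real.exp_add]
    congr 1
    have h1 : ∑ j, -2 * (z j).re + ∑ j, -((z j).re) * (2 * (p j:ℝ)) =
        -2 * ∑ j, ((p j:ℝ)+1) * (z j).re := by
      rw [← Finset.sum_add_distrib, Finset.mul_sum]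
      exact Finset.sum_congr rfl fun j _ => by ring
    rw [hG]
    simp only
    linarith
  have heq2 := integrableOn_congr_fun (μ := volume) heqOn hS
  have hfub := Stmt6.fubini_step (fun s => Real.exp (-2 * G s))
    (Real.continuous_exp.comp (continuous_const.mul hGcont))
  refine (heq1.trans (hjac.trans (heq2.trans hfub))).trans (hcore.trans ?_)
  refine forall_congr' fun w => forall_congr' fun hw => forall_congr' fun hw0 => ?_
  rw [hG]
  simp only
  rw [sub_pos]
  exact Iff.rfl
end

section
/- Fix an integer a > 1. Let H = { (α, β) ∈ ℝ² | α ≥ 0, β ≥ 0, a²(α+β)² = (1−α)² + (1−β)² } and ψ(x₁, x₂) = log ( sup_{(α,β) ∈ H} |x₁|^{2α} |x₂|^{2β} ). Then sup { t > 0 | the function (x₁,x₂) ↦ e^{−t ψ(x₁,x₂)} is integrable on the open unit polydisc of ℂ² } = √2 · a + 1. In particular this singularity exponent is irrational. -/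
open MeasureTheory

/-- The set `H` of the Nakayama example. -/
def Hset (a : ℤ) : Set (ℝ × ℝ) :=
  {c | 0 ≤ c.1 ∧ 0 ≤ c.2 ∧ (a : ℝ) ^ 2 * (c.1 + c.2) ^ 2 = (1 - c.1) ^ 2 + (1 - c.2) ^ 2}

/-- The weight `ψ(x₁,x₂) = log sup_{(α,β) ∈ H} |x₁|^{2α}|x₂|^{2β}`. -/
noncomputable def psiN (a : ℤ) (x : ℂ × ℂ) : ℝ :=
  Real.log (⨆ c : Hset a,
    ‖x.1‖ ^ (2 * (c : ℝ × ℝ).1) * ‖x.2‖ ^ (2 * (c : ℝ × ℝ).2))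

open Set Metric
open scoped ENNReal NNReal

section alg
variable {a : ℤ} (ha : 1 < a)

noncomputable def cE (a : ℤ) : ℝ := Real.sqrt 2 * (a : ℝ) + 1

lemma sqrt2_sq : Real.sqrt 2 ^ 2 = 2 := Real.sq_sqrt (by norm_num)

include ha

lemma ha2 : (2 : ℝ) ≤ (a : ℝ) := by exact_mod_cast ha

lemma cE_gt_one : 1 < cE a := by
  have h := ha2 ha
  have h2 : (1:ℝ) ≤ Real.sqrt 2 := by
    nlinarith [Real.sqrt_nonneg 2, sqrt2_sq]
  unfold cE; nlinarith

lemma cE_pos : 0 < cE a := lt_trans one_pos (cE_gt_one ha)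

lemma p0_mem : ((cE a)⁻¹, (cE a)⁻¹) ∈ Hset a := by
  have hc := cE_pos ha
  have hc' : cE a ≠ 0 := ne_of_gt hc
  refine ⟨by positivity, by positivity, ?_⟩
  have h1 : (1:ℝ) - (cE a)⁻¹ = Real.sqrt 2 * a / cE a := by
    field_simp [cE]
    unfold cE; ring
  dsimp only
  rw [h1]
  field_simp
  nlinarith [sqrt2_sq]

lemma sum_lb {p : ℝ × ℝ} (hp : p ∈ Hset a) : 2 / cE a ≤ p.1 + p.2 := by
  obtain ⟨h1, h2, h3⟩ := hp
  have hc := cE_pos ha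
  have ha0 : (0:ℝ) ≤ a := by linarith [ha2 ha]
  have hs : 0 ≤ p.1 + p.2 := by linarith
  set s := p.1 + p.2 with hsdef
  have key : (2 - s) ^ 2 ≤ (Real.sqrt 2 * a * s) ^ 2 := by
    nlinarith [sq_nonneg ((1 - p.1) - (1 - p.2)), sqrt2_sq, sq_nonneg (Real.sqrt 2)]
  have h4 : 2 - s ≤ Real.sqrt 2 * a * s := by
    have := Real.sqrt_le_sqrt key
    rw [Real.sqrt_sq_eq_abs, Real.sqrt_sq (by positivity)] at this
    calc 2 - s ≤ |2 - s| := le_abs_self _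
    _ ≤ _ := this
  rw [div_le_iff₀ hc]
  unfold cE
  nlinarith

lemma sum_ub {p : ℝ × ℝ} (hp : p ∈ Hset a) : p.1 + p.2 ≤ 3 := by
  obtain ⟨h1, h2, h3⟩ := hp
  have ha4 : (4:ℝ) ≤ (a:ℝ)^2 := by nlinarith [ha2 ha]
  nlinarith [sq_nonneg (p.1 + p.2), sq_nonneg (p.1 - p.2), mul_le_mul_of_nonneg_right ha4 (sq_nonneg (p.1 + p.2))]

lemma Hset_nonempty : (Hset a).Nonempty := ⟨_, p0_mem ha⟩

end alg

section Sfun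
variable {a : ℤ} (ha : 1 < a)

noncomputable def term (a : ℤ) (c : Hset a) (x : ℂ × ℂ) : ℝ :=
  ‖x.1‖ ^ (2 * (c : ℝ × ℝ).1) * ‖x.2‖ ^ (2 * (c : ℝ × ℝ).2)

noncomputable def Sfun (a : ℤ) (x : ℂ × ℂ) : ℝ := ⨆ c : Hset a, term a c x

lemma psiN_eq (x : ℂ × ℂ) : psiN a x = Real.log (Sfun a x) := rfl

lemma term_nonneg (c : Hset a) (x : ℂ × ℂ) : 0 ≤ term a c x := by
  unfold term; positivity

include ha

lemma term_le (c : Hset a) (x : ℂ × ℂ) :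
    term a c x ≤ (max 1 (‖x.1‖)) ^ (6:ℝ) * (max 1 (‖x.2‖)) ^ (6:ℝ) := by
  obtain ⟨h1, h2, h3⟩ := c.2
  have hs := sum_ub ha c.2
  unfold term
  have k1 : ‖x.1‖ ^ (2 * (c : ℝ × ℝ).1) ≤ (max 1 (‖x.1‖)) ^ (6:ℝ) := by
    calc ‖x.1‖ ^ (2 * (c : ℝ × ℝ).1)
        ≤ (max 1 (‖x.1‖)) ^ (2 * (c : ℝ × ℝ).1) :=
          Real.rpow_le_rpow (norm_nonneg _) (le_max_right _ _) (by linarith)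
      _ ≤ _ := Real.rpow_le_rpow_of_exponent_le (le_max_left _ _) (by linarith)
  have k2 : ‖x.2‖ ^ (2 * (c : ℝ × ℝ).2) ≤ (max 1 (‖x.2‖)) ^ (6:ℝ) := by
    calc ‖x.2‖ ^ (2 * (c : ℝ × ℝ).2)
        ≤ (max 1 (‖x.2‖)) ^ (2 * (c : ℝ × ℝ).2) :=
          Real.rpow_le_rpow (norm_nonneg _) (le_max_right _ _) (by linarith)
      _ ≤ _ := Real.rpow_le_rpow_of_exponent_le (le_max_left _ _) (by linarith)
  have := Real.rpow_nonneg (le_trans zero_le_one (le_max_left 1 (‖x.1‖))) (6:ℝ)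
  exact mul_le_mul k1 k2 (by positivity) (by positivity)

lemma bddAbove_term (x : ℂ × ℂ) : BddAbove (Set.range fun c : Hset a => term a c x) :=
  ⟨_, by rintro y ⟨c, rfl⟩; exact term_le ha c x⟩

lemma Sfun_measurable : Measurable (Sfun a) := by
  have : Nonempty (Hset a) := ⟨_, p0_mem ha⟩
  apply LowerSemicontinuous.measurable
  apply lowerSemicontinuous_ciSup (fun x => bddAbove_term ha x)
  intro c
  apply Continuous.lowerSemicontinuous
  unfold term
  obtain ⟨h1, h2, _⟩ := c.2
  exact ((Real.continuous_rpow_const (by linarith)).comp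
      (continuous_norm.comp continuous_fst)).mul
    ((Real.continuous_rpow_const (by linarith)).comp
      (continuous_norm.comp continuous_snd))

lemma Sfun_lb (x : ℂ × ℂ) :
    ‖x.1‖ ^ (2 * (cE a)⁻¹) * ‖x.2‖ ^ (2 * (cE a)⁻¹) ≤ Sfun a x := by
  exact le_ciSup (bddAbove_term ha x) (⟨_, p0_mem ha⟩ : Hset a)

lemma Sfun_nonneg (x : ℂ × ℂ) : 0 ≤ Sfun a x :=
  le_trans (by positivity) (Sfun_lb ha x)

lemma Sfun_le_one {x : ℂ × ℂ} (h1 : ‖x.1‖ ≤ 1) (h2 : ‖x.2‖ ≤ 1) :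
    Sfun a x ≤ 1 := by
  have : Nonempty (Hset a) := ⟨_, p0_mem ha⟩
  apply ciSup_le
  intro c
  obtain ⟨hc1, hc2, _⟩ := c.2
  unfold term
  have r1 := Real.rpow_le_one (norm_nonneg x.1) h1 (by linarith : 0 ≤ 2 * (c : ℝ × ℝ).1)
  have r2 := Real.rpow_le_one (norm_nonneg x.2) h2 (by linarith : 0 ≤ 2 * (c : ℝ × ℝ).2)
  have r3 := Real.rpow_nonneg (norm_nonneg x.1) (2 * (c : ℝ × ℝ).1)
  nlinarith

lemma Sfun_ub {x : ℂ × ℂ} (h1 : ‖x.1‖ ≤ 1) (h2 : ‖x.2‖ ≤ 1) :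
    Sfun a x ≤ (max (‖x.1‖) (‖x.2‖)) ^ (4 / cE a) := by
  have : Nonempty (Hset a) := ⟨_, p0_mem ha⟩
  set M := max (‖x.1‖) (‖x.2‖) with hM
  have hM0 : 0 ≤ M := le_trans (norm_nonneg _) (le_max_left _ _)
  have hM1 : M ≤ 1 := max_le h1 h2
  have hc := cE_pos ha
  apply ciSup_le
  intro c
  obtain ⟨hc1, hc2, _⟩ := c.2
  have hsum := sum_lb ha c.2
  unfold term
  calc ‖x.1‖ ^ (2 * (c : ℝ × ℝ).1) * ‖x.2‖ ^ (2 * (c : ℝ × ℝ).2)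
      ≤ M ^ (2 * (c : ℝ × ℝ).1) * M ^ (2 * (c : ℝ × ℝ).2) := by
        apply mul_le_mul
        · exact Real.rpow_le_rpow (norm_nonneg _) (le_max_left _ _) (by linarith)
        · exact Real.rpow_le_rpow (norm_nonneg _) (le_max_right _ _) (by linarith)
        · positivity
        · positivity
    _ = M ^ (2 * (c : ℝ × ℝ).1 + 2 * (c : ℝ × ℝ).2) := by
        have h2c : 0 < 2 / cE a := by positivity
        rw [Real.rpow_add' hM0 (by nlinarith : 2 * (c : ℝ × ℝ).1 + 2 * (c : ℝ × ℝ).2 ≠ 0)]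
    _ ≤ M ^ (4 / cE a) := by
        apply Real.rpow_le_rpow_of_exponent_ge' hM0 hM1
        · positivity
        · rw [div_le_iff₀ hc] at hsum ⊢
          nlinarith

end Sfun

section ballint

lemma meas_rpow {α : Type*} [MeasurableSpace α] {g : α → ℝ} (hg : Measurable g)
    (h0 : ∀ x, 0 ≤ g x) (e : ℝ) : Measurable fun x => g x ^ e := by
  have heq : (fun x => g x ^ e) =
      fun x => if g x = 0 then (0:ℝ) ^ e else Real.exp (Real.log (g x) * e) := by
    ext x
    rcases eq_or_ne (g x) 0 with h | h
    · rw [if_pos h, h]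
    · rw [if_neg h, Real.rpow_def_of_pos ((h0 x).lt_of_ne (Ne.symm h))]
  rw [heq]
  exact Measurable.ite (hg (measurableSet_singleton 0)) measurable_const
    ((hg.log.mul_const e).exp)

lemma pow_rpow_comm {r : ℝ} (hr : 0 ≤ r) (n : ℕ) (e : ℝ) : (r ^ n) ^ e = (r ^ e) ^ n := by
  rw [← Real.rpow_natCast r n, ← Real.rpow_mul hr, ← Real.rpow_natCast (r ^ e) n,
    ← Real.rpow_mul hr, mul_comm]

lemma cover_annuli {z : ℂ} (hz1 : ‖z‖ < 1) (hz0 : z ≠ 0) :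
    ∃ n : ℕ, ‖z‖ ≤ (2:ℝ)⁻¹ ^ n ∧ (2:ℝ)⁻¹ ^ (n+1) < ‖z‖ := by
  have ht : 0 < ‖z‖ := norm_pos_iff.mpr hz0
  have hP : ∃ n : ℕ, (2:ℝ)⁻¹ ^ (n+1) < ‖z‖ := by
    obtain ⟨n, hn⟩ := exists_pow_lt_of_lt_one ht (by norm_num : (2:ℝ)⁻¹ < 1)
    exact ⟨n, lt_of_le_of_lt (pow_le_pow_of_le_one (by norm_num) (by norm_num) (Nat.le_succ n)) hn⟩
  refine ⟨Nat.find hP, ?_, Nat.find_spec hP⟩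
  rcases Nat.eq_zero_or_pos (Nat.find hP) with h0 | h0
  · rw [h0]; simpa using hz1.le
  · have := Nat.find_min hP (Nat.pred_lt h0.ne')
    push_neg at this
    rw [← Nat.succ_pred_eq_of_pos h0]
    exact this

lemma integrableOn_abs_rpow_ball {e : ℝ} (he2 : -2 < e) (he0 : e < 0) :
    IntegrableOn (fun z : ℂ => ‖z‖ ^ e) (ball (0:ℂ) 1) volume := by
  constructor
  · exact (meas_rpow continuous_norm.measurable (fun z => norm_nonneg z)
      e).aestronglyMeasurable
  · rw [hasFiniteIntegral_iff_norm]
    set r : ℝ := (2:ℝ)⁻¹ with hr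
    set A : ℕ → Set ℂ := fun n => closedBall 0 (r ^ n) \ closedBall 0 (r ^ (n+1)) with hA
    have step1 : (∫⁻ z in ball (0:ℂ) 1, ENNReal.ofReal ‖‖z‖ ^ e‖ ∂volume)
        = ∫⁻ z in ball (0:ℂ) 1 \ {0}, ENNReal.ofReal ‖‖z‖ ^ e‖ ∂volume := by
      refine (setLIntegral_congr ?_).symm
      exact (diff_ae_eq_self (μ := volume)).mpr
        (measure_mono_null Set.inter_subset_right (measure_singleton 0))
    rw [step1]
    have hsub : ball (0:ℂ) 1 \ {0} ⊆ ⋃ n, A n := by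
      intro z hz
      obtain ⟨n, h1, h2⟩ := cover_annuli (by simpa [mem_ball_zero_iff] using hz.1)
        (by simpa using hz.2)
      exact Set.mem_iUnion.mpr ⟨n, by
        simp only [hA, Set.mem_diff, mem_closedBall_zero_iff, not_le]
        exact ⟨h1, h2⟩⟩
    have hbound : ∀ n : ℕ, (∫⁻ z in A n, ENNReal.ofReal ‖‖z‖ ^ e‖ ∂volume)
        ≤ (ENNReal.ofReal (r ^ e) * NNReal.pi) * ENNReal.ofReal ((r ^ e * r ^ 2) ^ n) := by
      intro n
      have hAm : MeasurableSet (A n) := measurableSet_closedBall.diff measurableSet_closedBall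
      have hptw : ∀ z ∈ A n, ENNReal.ofReal ‖‖z‖ ^ e‖
          ≤ ENNReal.ofReal ((r ^ (n+1)) ^ e) := by
        intro z hz
        simp only [hA, Set.mem_diff, mem_closedBall_zero_iff, not_le] at hz
        apply ENNReal.ofReal_le_ofReal
        rw [Real.norm_eq_abs, abs_of_nonneg (Real.rpow_nonneg (norm_nonneg z) e)]
        exact Real.rpow_le_rpow_of_nonpos (by positivity) hz.2.le he0.le
      calc (∫⁻ z in A n, ENNReal.ofReal ‖‖z‖ ^ e‖ ∂volume)
          ≤ ∫⁻ _ in A n, ENNReal.ofReal ((r ^ (n+1)) ^ e) ∂volume :=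
            setLIntegral_mono' hAm hptw
        _ = ENNReal.ofReal ((r ^ (n+1)) ^ e) * volume (A n) := setLIntegral_const _ _
        _ ≤ ENNReal.ofReal ((r ^ (n+1)) ^ e) * volume (closedBall (0:ℂ) (r ^ n)) := by
            exact mul_le_mul_right (measure_mono Set.diff_subset) _
        _ = ENNReal.ofReal ((r ^ (n+1)) ^ e) * (ENNReal.ofReal ((r ^ n) ^ 2) * NNReal.pi) := by
            rw [Complex.volume_closedBall, ← ENNReal.ofReal_pow (by positivity)]
        _ = ENNReal.ofReal ((r ^ (n+1)) ^ e * (r ^ n) ^ 2) * NNReal.pi := by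
            rw [ENNReal.ofReal_mul (by positivity)]; ring
        _ = (ENNReal.ofReal (r ^ e) * NNReal.pi) * ENNReal.ofReal ((r ^ e * r ^ 2) ^ n) := by
            have hre : ((r:ℝ) ^ (n+1)) ^ e * (r ^ n) ^ 2 = r ^ e * (r ^ e * r ^ 2) ^ n := by
              rw [pow_rpow_comm (by norm_num) (n+1) e, ← pow_mul r n 2, mul_comm n 2,
                pow_mul r 2 n]; ring
            rw [hre, ENNReal.ofReal_mul (Real.rpow_nonneg (by norm_num) e)]; ring
    have hq : ENNReal.ofReal (r ^ e * r ^ 2) < 1 := by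
      rw [ENNReal.ofReal_lt_one]
      have : r ^ e * r ^ 2 = r ^ (e + 2) := by
        rw [Real.rpow_add (by norm_num : (0:ℝ) < r)]
        norm_num [← Real.rpow_natCast r 2]
      rw [this]
      exact Real.rpow_lt_one (by norm_num) (by norm_num) (by linarith)
    calc (∫⁻ z in ball (0:ℂ) 1 \ {0}, ENNReal.ofReal ‖‖z‖ ^ e‖ ∂volume)
        ≤ ∫⁻ z in ⋃ n, A n, ENNReal.ofReal ‖‖z‖ ^ e‖ ∂volume :=
          lintegral_mono_set hsub
      _ ≤ ∑' n, ∫⁻ z in A n, ENNReal.ofReal ‖‖z‖ ^ e‖ ∂volume :=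
          lintegral_iUnion_le _ _
      _ ≤ ∑' n, (ENNReal.ofReal (r ^ e) * NNReal.pi) * ENNReal.ofReal ((r ^ e * r ^ 2) ^ n) :=
          ENNReal.tsum_le_tsum hbound
      _ = (ENNReal.ofReal (r ^ e) * NNReal.pi) * ∑' n, ENNReal.ofReal (r ^ e * r ^ 2) ^ n := by
          rw [ENNReal.tsum_mul_left]
          congr 1
          exact tsum_congr fun n => by rw [ENNReal.ofReal_pow (by positivity)]
      _ = (ENNReal.ofReal (r ^ e) * NNReal.pi) * (1 - ENNReal.ofReal (r ^ e * r ^ 2))⁻¹ := by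
          rw [ENNReal.tsum_geometric]
      _ < ⊤ := by
          apply ENNReal.mul_lt_top
          · exact ENNReal.mul_lt_top ENNReal.ofReal_lt_top ENNReal.coe_lt_top
          · rw [lt_top_iff_ne_top]
            exact ENNReal.inv_ne_top.mpr (by simp [tsub_eq_zero_iff_le, hq.not_ge])

end ballint

section main
variable {a : ℤ} (ha : 1 < a)

lemma polydisc_eq : {x : ℂ × ℂ | ‖x.1‖ < 1 ∧ ‖x.2‖ < 1}
    = (ball (0:ℂ) 1) ×ˢ (ball (0:ℂ) 1) := by
  ext x
  simp [Set.mem_prod, mem_ball_zero_iff]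

lemma nullset : volume {x : ℂ × ℂ | x.1 = 0 ∨ x.2 = 0} = 0 := by
  have : {x : ℂ × ℂ | x.1 = 0 ∨ x.2 = 0}
      = ({(0:ℂ)} ×ˢ (Set.univ : Set ℂ)) ∪ ((Set.univ : Set ℂ) ×ˢ {(0:ℂ)}) := by
    ext x
    simp only [Set.mem_setOf_eq, Set.mem_union, Set.mem_prod, Set.mem_singleton_iff,
      Set.mem_univ, and_true, true_and]
  rw [this]
  apply measure_union_null
  · rw [Measure.volume_eq_prod, Measure.prod_prod]
    simp
  · rw [Measure.volume_eq_prod, Measure.prod_prod]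
    simp

include ha

lemma integrable_of_lt {t : ℝ} (ht0 : 0 < t) (htc : t < cE a) :
    IntegrableOn (fun x : ℂ × ℂ => Real.exp (-(t * psiN a x)))
      {x : ℂ × ℂ | ‖x.1‖ < 1 ∧ ‖x.2‖ < 1} volume := by
  have hc := cE_pos ha
  set e : ℝ := (2 * (cE a)⁻¹) * (-t) with he
  have he0 : e < 0 := by
    apply mul_neg_of_pos_of_neg
    · positivity
    · linarith
  have he2 : -2 < e := by
    rw [he]
    have h1 : 2 * (cE a)⁻¹ * (-t) = -(2 * t / cE a) := by ring
    rw [h1, neg_lt_neg_iff, div_lt_iff₀ hc]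
    nlinarith
  rw [polydisc_eq, IntegrableOn]
  have hprod : Integrable (fun x : ℂ × ℂ => ‖x.1‖ ^ e * ‖x.2‖ ^ e)
      (volume.restrict ((ball (0:ℂ) 1) ×ˢ (ball (0:ℂ) 1))) := by
    rw [Measure.volume_eq_prod, ← Measure.prod_restrict]
    exact Integrable.mul_prod (integrableOn_abs_rpow_ball he2 he0) (integrableOn_abs_rpow_ball he2 he0)
  refine hprod.mono' ?_ ?_
  · exact ((((Sfun_measurable ha).log.const_mul t).neg).exp).aestronglyMeasurable
  · have h1 : ∀ᵐ x : ℂ × ℂ ∂(volume.restrict ((ball (0:ℂ) 1) ×ˢ (ball (0:ℂ) 1))),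
        x ∈ (ball (0:ℂ) 1) ×ˢ (ball (0:ℂ) 1) :=
      ae_restrict_mem (measurableSet_ball.prod measurableSet_ball)
    have h2 : ∀ᵐ x : ℂ × ℂ ∂(volume.restrict ((ball (0:ℂ) 1) ×ˢ (ball (0:ℂ) 1))),
        ¬(x.1 = 0 ∨ x.2 = 0) := by
      refine ae_restrict_of_ae ?_
      rw [ae_iff]
      have := nullset
      convert this using 2
      ext x; simp only [Set.mem_setOf_eq]; tauto
    filter_upwards [h1, h2] with x hx hxN
    push_neg at hxN
    obtain ⟨hx1, hx2⟩ : ‖x.1‖ < 1 ∧ ‖x.2‖ < 1 := by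
      simpa [Set.mem_prod, mem_ball_zero_iff] using hx
    have ha1 : 0 < ‖x.1‖ := norm_pos_iff.mpr hxN.1
    have ha2 : 0 < ‖x.2‖ := norm_pos_iff.mpr hxN.2
    have hlb := Sfun_lb ha x
    have hS0 : 0 < Sfun a x := lt_of_lt_of_le (by positivity) hlb
    have hfx : Real.exp (-(t * psiN a x)) = (Sfun a x) ^ (-t) := by
      rw [psiN_eq, Real.rpow_def_of_pos hS0]
      ring_nf
    rw [Real.norm_eq_abs, abs_of_pos (Real.exp_pos _), hfx]
    calc (Sfun a x) ^ (-t)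
        ≤ (‖x.1‖ ^ (2 * (cE a)⁻¹) * ‖x.2‖ ^ (2 * (cE a)⁻¹)) ^ (-t) :=
          Real.rpow_le_rpow_of_nonpos (by positivity) hlb (by linarith)
      _ = ‖x.1‖ ^ e * ‖x.2‖ ^ e := by
          rw [Real.mul_rpow (by positivity) (by positivity), he,
            ← Real.rpow_mul (norm_nonneg _), ← Real.rpow_mul (norm_nonneg _)]

end main

section diverge

lemma one_le_pi' : (1 : ℝ≥0∞) ≤ (NNReal.pi : ℝ≥0∞) := by
  rw [ENNReal.one_le_coe_iff, ← NNReal.coe_le_coe, NNReal.coe_one, NNReal.coe_real_pi]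
  linarith [Real.pi_gt_three]

lemma lint_top : (∫⁻ x : ℂ × ℂ in (ball (0:ℂ) 1) ×ˢ (ball (0:ℂ) 1),
    ENNReal.ofReal ((max (‖x.1‖) (‖x.2‖)) ^ (-4:ℝ)) ∂volume) = ⊤ := by
  set r : ℝ := (2:ℝ)⁻¹ with hr
  have hr0 : (0:ℝ) < r := by norm_num
  have hr1 : r < 1 := by norm_num
  set B : ℕ → Set (ℂ × ℂ) := fun n =>
    (ball (0:ℂ) (r ^ (n+1))) ×ˢ (ball (0:ℂ) (r ^ n) \ closedBall (0:ℂ) (r ^ (n+1))) with hB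
  have hBm : ∀ n, MeasurableSet (B n) := fun n =>
    measurableSet_ball.prod (measurableSet_ball.diff measurableSet_closedBall)
  have hBsub : (⋃ n, B n) ⊆ (ball (0:ℂ) 1) ×ˢ (ball (0:ℂ) 1) := by
    rintro x hx
    obtain ⟨n, hn⟩ := Set.mem_iUnion.mp hx
    refine ⟨?_, ?_⟩
    · exact ball_subset_ball (pow_le_one₀ hr0.le hr1.le) hn.1
    · exact ball_subset_ball (pow_le_one₀ hr0.le hr1.le) hn.2.1
  have hdisj : Pairwise (Function.onFun Disjoint B) := by
    have key : ∀ m n, m < n → Disjoint (B m) (B n) := by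
      intro m n h
      rw [Set.disjoint_left]
      rintro x hm hn
      have h1 : r ^ (m+1) < ‖x.2‖ := by
        have := hm.2.2; rwa [mem_closedBall_zero_iff, not_le] at this
      have h2 : ‖x.2‖ < r ^ n := by
        have := hn.2.1; rwa [mem_ball_zero_iff] at this
      have h3 : r ^ n ≤ r ^ (m+1) := pow_le_pow_of_le_one hr0.le hr1.le h
      linarith
    intro m n hmn
    rcases hmn.lt_or_gt with h | h
    · exact key _ _ h
    · exact (key _ _ h).symm
  have hlow : ∀ n : ℕ, ENNReal.ofReal (3/16 : ℝ)
      ≤ ∫⁻ x : ℂ × ℂ in B n,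
          ENNReal.ofReal ((max (‖x.1‖) (‖x.2‖)) ^ (-4:ℝ)) ∂volume := by
    intro n
    have hconst : ∀ x ∈ B n, ENNReal.ofReal ((r ^ n) ^ (-4:ℝ))
        ≤ ENNReal.ofReal ((max (‖x.1‖) (‖x.2‖)) ^ (-4:ℝ)) := by
      intro x hx
      have h1 : ‖x.1‖ < r ^ (n+1) := by
        have := hx.1; rwa [mem_ball_zero_iff] at this
      have h2 : ‖x.2‖ < r ^ n := by
        have := hx.2.1; rwa [mem_ball_zero_iff] at this
      have h3 : r ^ (n+1) < ‖x.2‖ := by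
        have := hx.2.2
        rwa [mem_closedBall_zero_iff, not_le] at this
      have hM0 : 0 < max (‖x.1‖) (‖x.2‖) :=
        lt_of_lt_of_le (lt_trans (by positivity) h3) (le_max_right _ _)
      have hM1 : max (‖x.1‖) (‖x.2‖) ≤ r ^ n := by
        apply max_le
        · exact le_trans h1.le (pow_le_pow_of_le_one hr0.le hr1.le (Nat.le_succ n))
        · exact h2.le
      exact ENNReal.ofReal_le_ofReal
        (Real.rpow_le_rpow_of_nonpos hM0 hM1 (by norm_num))
    have hvol : volume (B n) = (ENNReal.ofReal ((r ^ (n+1)) ^ 2) * NNReal.pi)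
        * (ENNReal.ofReal ((r ^ n) ^ 2 - (r ^ (n+1)) ^ 2) * NNReal.pi) := by
      rw [hB, Measure.volume_eq_prod, Measure.prod_prod]
      congr 1
      · rw [Complex.volume_ball, ← ENNReal.ofReal_pow (by positivity)]
      · rw [measure_diff (closedBall_subset_ball (pow_lt_pow_right_of_lt_one₀ hr0 hr1 (Nat.lt_succ_self n)))
          measurableSet_closedBall.nullMeasurableSet
          (by rw [Complex.volume_closedBall]; exact ENNReal.mul_ne_top (ENNReal.pow_ne_top ENNReal.ofReal_ne_top) ENNReal.coe_ne_top),
          Complex.volume_ball, Complex.volume_closedBall,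
          ← ENNReal.ofReal_pow (by positivity), ← ENNReal.ofReal_pow (by positivity),
          ← ENNReal.sub_mul (fun _ _ => ENNReal.coe_ne_top),
          ← ENNReal.ofReal_sub _ (by positivity)]
    calc ENNReal.ofReal (3/16 : ℝ)
        = ENNReal.ofReal ((r ^ n) ^ (-4:ℝ) * ((r ^ (n+1)) ^ 2 * ((r ^ n) ^ 2 - (r ^ (n+1)) ^ 2))) := by
          congr 1
          have hneg : ((r:ℝ) ^ n) ^ (-4:ℝ) = (((r:ℝ) ^ n) ^ (4:ℕ))⁻¹ := by
            rw [Real.rpow_neg (by positivity), ← Real.rpow_natCast (r ^ n) 4]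
            norm_num
          rw [hneg, hr]
          have h2n : (0:ℝ) < 2 ^ n := by positivity
          field_simp
          ring
      _ ≤ ENNReal.ofReal ((r ^ n) ^ (-4:ℝ) * ((r ^ (n+1)) ^ 2 * ((r ^ n) ^ 2 - (r ^ (n+1)) ^ 2)))
          * ((NNReal.pi : ℝ≥0∞) * NNReal.pi) := by
          nth_rewrite 1 [← mul_one (ENNReal.ofReal _)]
          exact mul_le_mul_right (one_le_mul one_le_pi' one_le_pi') _
      _ = ENNReal.ofReal ((r ^ n) ^ (-4:ℝ)) * volume (B n) := by
          rw [hvol, ENNReal.ofReal_mul (by positivity), ENNReal.ofReal_mul (by positivity)]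
          ring
      _ = ∫⁻ _ in B n, ENNReal.ofReal ((r ^ n) ^ (-4:ℝ)) ∂volume := (setLIntegral_const _ _).symm
      _ ≤ _ := setLIntegral_mono' (hBm n) hconst
  refine top_le_iff.mp ?_
  calc (⊤ : ℝ≥0∞) = ∑' _ : ℕ, ENNReal.ofReal (3/16 : ℝ) :=
        (ENNReal.tsum_const_eq_top_of_ne_zero (by simp)).symm
    _ ≤ ∑' n, ∫⁻ x : ℂ × ℂ in B n,
          ENNReal.ofReal ((max (‖x.1‖) (‖x.2‖)) ^ (-4:ℝ)) ∂volume :=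
        ENNReal.tsum_le_tsum hlow
    _ = ∫⁻ x : ℂ × ℂ in ⋃ n, B n,
          ENNReal.ofReal ((max (‖x.1‖) (‖x.2‖)) ^ (-4:ℝ)) ∂volume :=
        (lintegral_iUnion hBm hdisj _).symm
    _ ≤ _ := lintegral_mono_set hBsub

end diverge

section final
variable {a : ℤ} (ha : 1 < a)
include ha

lemma not_integrable_of_ge {t : ℝ} (htc : cE a ≤ t) :
    ¬ IntegrableOn (fun x : ℂ × ℂ => Real.exp (-(t * psiN a x)))
      {x : ℂ × ℂ | ‖x.1‖ < 1 ∧ ‖x.2‖ < 1} volume := by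
  intro hI
  have hc := cE_pos ha
  rw [polydisc_eq, IntegrableOn] at hI
  set g : ℂ × ℂ → ℝ := fun x => (max (‖x.1‖) (‖x.2‖)) ^ (-4:ℝ) with hg
  have hgmeas : Measurable g :=
    meas_rpow (((continuous_norm.comp continuous_fst).max
      (continuous_norm.comp continuous_snd)).measurable)
      (fun x => le_trans (norm_nonneg _) (le_max_left _ _)) _
  have hgint : Integrable g (volume.restrict ((ball (0:ℂ) 1) ×ˢ (ball (0:ℂ) 1))) := by
    refine hI.mono' hgmeas.aestronglyMeasurable ?_
    have h1 : ∀ᵐ x : ℂ × ℂ ∂(volume.restrict ((ball (0:ℂ) 1) ×ˢ (ball (0:ℂ) 1))),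
        x ∈ (ball (0:ℂ) 1) ×ˢ (ball (0:ℂ) 1) :=
      ae_restrict_mem (measurableSet_ball.prod measurableSet_ball)
    have h2 : ∀ᵐ x : ℂ × ℂ ∂(volume.restrict ((ball (0:ℂ) 1) ×ˢ (ball (0:ℂ) 1))),
        ¬(x.1 = 0 ∨ x.2 = 0) := by
      refine ae_restrict_of_ae ?_
      rw [ae_iff]
      have := nullset
      convert this using 2
      ext x; simp only [Set.mem_setOf_eq]; tauto
    filter_upwards [h1, h2] with x hx hxN
    push_neg at hxN
    obtain ⟨hx1, hx2⟩ : ‖x.1‖ < 1 ∧ ‖x.2‖ < 1 := by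
      simpa [Set.mem_prod, mem_ball_zero_iff] using hx
    have ha1 : 0 < ‖x.1‖ := norm_pos_iff.mpr hxN.1
    have ha2 : 0 < ‖x.2‖ := norm_pos_iff.mpr hxN.2
    set M : ℝ := max (‖x.1‖) (‖x.2‖) with hM
    have hM0 : 0 < M := lt_of_lt_of_le ha1 (le_max_left _ _)
    have hM1 : M ≤ 1 := max_le hx1.le hx2.le
    have hub := Sfun_ub ha hx1.le hx2.le
    have hS0 : 0 < Sfun a x := lt_of_lt_of_le (by positivity) (Sfun_lb ha x)
    have hlog : Real.log (Sfun a x) ≤ (4 / cE a) * Real.log M := by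
      calc Real.log (Sfun a x) ≤ Real.log (M ^ (4 / cE a)) :=
            Real.log_le_log hS0 hub
        _ = (4 / cE a) * Real.log M := Real.log_rpow hM0 _
    have hlogM : Real.log M ≤ 0 := Real.log_nonpos hM0.le hM1
    have hkey : Real.log M * (-4) ≤ -(t * Real.log (Sfun a x)) := by
      have e1 : t * Real.log (Sfun a x) ≤ t * ((4 / cE a) * Real.log M) :=
        mul_le_mul_of_nonneg_left hlog (by linarith)
      have e2 : t * ((4 / cE a) * Real.log M) ≤ cE a * ((4 / cE a) * Real.log M) := by
        apply mul_le_mul_of_nonpos_right htc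
        have : 0 ≤ 4 / cE a := by positivity
        nlinarith
      have e3 : cE a * ((4 / cE a) * Real.log M) = 4 * Real.log M := by
        field_simp
      linarith
    have hgx : g x = Real.exp (Real.log M * (-4)) := by
      show M ^ (-4:ℝ) = _
      rw [Real.rpow_def_of_pos hM0]
    rw [Real.norm_eq_abs, hgx, abs_of_pos (Real.exp_pos _), psiN_eq]
    exact Real.exp_le_exp.mpr hkey
  have hfin := hgint.lintegral_lt_top
  rw [hg] at hfin
  rw [lint_top] at hfin
  exact (lt_irrefl _ hfin)

theorem stmt_10' :
    sSup {t : ℝ | 0 < t ∧ IntegrableOn (fun x : ℂ × ℂ => Real.exp (-(t * psiN a x)))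
        {x : ℂ × ℂ | ‖x.1‖ < 1 ∧ ‖x.2‖ < 1} volume}
      = Real.sqrt 2 * (a : ℝ) + 1 ∧ Irrational (Real.sqrt 2 * (a : ℝ) + 1) := by
  constructor
  · have hseteq : {t : ℝ | 0 < t ∧ IntegrableOn (fun x : ℂ × ℂ => Real.exp (-(t * psiN a x)))
        {x : ℂ × ℂ | ‖x.1‖ < 1 ∧ ‖x.2‖ < 1} volume} = Set.Ioo 0 (cE a) := by
      ext t
      simp only [Set.mem_setOf_eq, Set.mem_Ioo]
      constructor
      · rintro ⟨ht0, hint⟩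
        refine ⟨ht0, ?_⟩
        by_contra h
        push_neg at h
        exact not_integrable_of_ge ha h hint
      · rintro ⟨ht0, htc⟩
        exact ⟨ht0, integrable_of_lt ha ht0 htc⟩
    rw [hseteq, csSup_Ioo (cE_pos ha)]
    rfl
  · have h0 : a ≠ 0 := by omega
    have := (irrational_sqrt_two.mul_intCast h0).add_intCast 1
    simpa using this

end final

/-- The singularity exponent of `ψ` in the Nakayama example equals `√2 a + 1`,
an irrational number. -/
theorem stmt_10 (a : ℤ) (ha : 1 < a) :
    sSup {t : ℝ | 0 < t ∧ IntegrableOn (fun x : ℂ × ℂ => Real.exp (-(t * psiN a x)))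
        {x : ℂ × ℂ | ‖x.1‖ < 1 ∧ ‖x.2‖ < 1} volume}
      = Real.sqrt 2 * (a : ℝ) + 1 ∧ Irrational (Real.sqrt 2 * (a : ℝ) + 1) :=
  stmt_10' ha
end

section
/- Let u < v be positive integers. Define N : ℝ² → ℝ³ by N(m₁, m₂) = (1 − m₁ − m₂)·(−u, −u, −u) + m₁·(u+v, u+v, v−2u) + m₂·(v−u, v−u, v+2u), and let Nef = { (a, b, c) ∈ ℝ³ | ab + bc + ca ≥ 0, a + b + c ≥ 0 }. Then { m ∈ ℝ² | m₁ ≥ 0, m₂ ≥ 0, m₁ + m₂ ≤ 1, N(m) ∈ Nef } equals the convex hull in ℝ² of the five points (1,0), (0,1), (0, u/v), (u/(2(u+v)), u/(2(u+v))), (u/v, 0). -/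
lemma combo3 {s : Set (ℝ × ℝ)} (hs : Convex ℝ s) {P Q R : ℝ × ℝ}
    (hP : P ∈ s) (hQ : Q ∈ s) (hR : R ∈ s) {a b c : ℝ}
    (ha : 0 ≤ a) (hb : 0 ≤ b) (hc : 0 ≤ c) (habc : a + b + c = 1) :
    a • P + b • Q + c • R ∈ s := by
  have h := hs.sum_mem (t := (Finset.univ : Finset (Fin 3)))
    (w := ![a, b, c]) (z := ![P, Q, R])
    (fun i _ => by fin_cases i <;> simpa)
    (by simp [Fin.sum_univ_three, habc])
    (fun i _ => by fin_cases i <;> simpa)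
  simpa [Fin.sum_univ_three] using h

lemma sign_aux {x y : ℝ} (hxy : 0 ≤ x * y) (hs : 0 ≤ x + y) : 0 ≤ x ∧ 0 ≤ y := by
  constructor <;> nlinarith [hxy, hs]

set_option maxHeartbeats 2000000 in
/-- In Example 6.1 of the paper, the set
`{ m ∈ ℝ² | m₁, m₂ ≥ 0, m₁ + m₂ ≤ 1, N(m) ∈ Nef }` equals the convex hull of the five points
`(1,0), (0,1), (0, u/v), (u/(2(u+v)), u/(2(u+v))), (u/v, 0)`. -/
theorem stmt_11 (u v : ℕ) (hu : 0 < u) (huv : u < v) :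
    {m : ℝ × ℝ | 0 ≤ m.1 ∧ 0 ≤ m.2 ∧ m.1 + m.2 ≤ 1 ∧
      (((1 - m.1 - m.2) * (-(u : ℝ)) + m.1 * ((u : ℝ) + (v : ℝ)) + m.2 * ((v : ℝ) - (u : ℝ)),
        (1 - m.1 - m.2) * (-(u : ℝ)) + m.1 * ((u : ℝ) + (v : ℝ)) + m.2 * ((v : ℝ) - (u : ℝ)),
        (1 - m.1 - m.2) * (-(u : ℝ)) + m.1 * ((v : ℝ) - 2 * (u : ℝ))
          + m.2 * ((v : ℝ) + 2 * (u : ℝ))) ∈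
        {x : ℝ × ℝ × ℝ | 0 ≤ x.1 * x.2.1 + x.2.1 * x.2.2 + x.2.2 * x.1 ∧
          0 ≤ x.1 + x.2.1 + x.2.2})}
    = convexHull ℝ {((1 : ℝ), (0 : ℝ)), ((0 : ℝ), (1 : ℝ)), ((0 : ℝ), (u : ℝ) / (v : ℝ)),
        ((u : ℝ) / (2 * ((u : ℝ) + (v : ℝ))), (u : ℝ) / (2 * ((u : ℝ) + (v : ℝ)))),
        ((u : ℝ) / (v : ℝ), (0 : ℝ))} := by
  have hU : (0 : ℝ) < u := by exact_mod_cast hu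
  have hV : (0 : ℝ) < v := by exact_mod_cast hu.trans huv
  have hUV : (u : ℝ) < v := by exact_mod_cast huv
  have hVU : (0 : ℝ) < v - u := by linarith
  have hUpV : (0 : ℝ) < u + v := by linarith
  have hu0 : (u : ℝ) ≠ 0 := hU.ne'
  have hv0 : (v : ℝ) ≠ 0 := hV.ne'
  have hvu0 : (v : ℝ) - u ≠ 0 := hVU.ne'
  have huv0 : (u : ℝ) + v ≠ 0 := hUpV.ne'
  have h2uv0 : 2 * ((u : ℝ) + v) ≠ 0 := by positivity
  -- Step 1: reduce the nef condition to two linear inequalities.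
  have hset : {m : ℝ × ℝ | 0 ≤ m.1 ∧ 0 ≤ m.2 ∧ m.1 + m.2 ≤ 1 ∧
      (((1 - m.1 - m.2) * (-(u : ℝ)) + m.1 * ((u : ℝ) + (v : ℝ)) + m.2 * ((v : ℝ) - (u : ℝ)),
        (1 - m.1 - m.2) * (-(u : ℝ)) + m.1 * ((u : ℝ) + (v : ℝ)) + m.2 * ((v : ℝ) - (u : ℝ)),
        (1 - m.1 - m.2) * (-(u : ℝ)) + m.1 * ((v : ℝ) - 2 * (u : ℝ))
          + m.2 * ((v : ℝ) + 2 * (u : ℝ))) ∈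
        {x : ℝ × ℝ × ℝ | 0 ≤ x.1 * x.2.1 + x.2.1 * x.2.2 + x.2.2 * x.1 ∧
          0 ≤ x.1 + x.2.1 + x.2.2})}
      = {m : ℝ × ℝ | 0 ≤ m.1 ∧ 0 ≤ m.2 ∧ m.1 + m.2 ≤ 1 ∧
          0 ≤ (2 * u + v) * m.1 + v * m.2 - u ∧
          0 ≤ v * m.1 + (v + 2 * u) * m.2 - u} := by
    ext ⟨m1, m2⟩
    simp only [Set.mem_setOf_eq]
    constructor
    · rintro ⟨h1, h2, h3, h4, h5⟩
      refine ⟨h1, h2, h3, ?_⟩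
      have hxy : 0 ≤ ((2 * u + v) * m1 + v * m2 - u) * (v * m1 + (v + 2 * u) * m2 - u) := by
        nlinarith [h4]
      have hs : 0 ≤ ((2 * u + v) * m1 + v * m2 - u) + (v * m1 + (v + 2 * u) * m2 - u) := by
        linarith [h5]
      exact sign_aux hxy hs
    · rintro ⟨h1, h2, h3, hx, hy⟩
      refine ⟨h1, h2, h3, ?_, ?_⟩
      · nlinarith [mul_nonneg hx hy]
      · linarith [hx, hy]
  rw [hset]
  apply Set.Subset.antisymm
  · -- pentagon ⊆ hull
    rintro ⟨m1, m2⟩ ⟨h1, h2, h3, hx, hy⟩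
    simp only at h1 h2 h3 hx hy
    have hconv := convex_convexHull ℝ
      ({((1 : ℝ), (0 : ℝ)), ((0 : ℝ), (1 : ℝ)), ((0 : ℝ), (u : ℝ) / (v : ℝ)),
        ((u : ℝ) / (2 * ((u : ℝ) + (v : ℝ))), (u : ℝ) / (2 * ((u : ℝ) + (v : ℝ)))),
        ((u : ℝ) / (v : ℝ), (0 : ℝ))} : Set (ℝ × ℝ))
    have hsub := subset_convexHull ℝ
      ({((1 : ℝ), (0 : ℝ)), ((0 : ℝ), (1 : ℝ)), ((0 : ℝ), (u : ℝ) / (v : ℝ)),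
        ((u : ℝ) / (2 * ((u : ℝ) + (v : ℝ))), (u : ℝ) / (2 * ((u : ℝ) + (v : ℝ)))),
        ((u : ℝ) / (v : ℝ), (0 : ℝ))} : Set (ℝ × ℝ))
    have hP1 := hsub (by left; rfl)
    have hP2 := hsub (by right; left; rfl)
    have hP3 := hsub (by right; right; left; rfl)
    have hP4 := hsub (by right; right; right; left; rfl)
    have hP5 := hsub (by right; right; right; right; rfl)
    by_cases hg1 : 0 ≤ (u : ℝ) * m1 + v * m2 - u
    · -- triangle P1 P2 P3
      have key : ((m1, m2) : ℝ × ℝ) = m1 • ((1 : ℝ), (0 : ℝ))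
          + (((u : ℝ) * m1 + v * m2 - u) / (v - u)) • ((0 : ℝ), (1 : ℝ))
          + ((v * (1 - m1 - m2)) / (v - u)) • ((0 : ℝ), (u : ℝ) / (v : ℝ)) := by
        simp only [Prod.smul_mk, Prod.mk_add_mk, Prod.mk.injEq, smul_eq_mul]
        constructor <;> (field_simp; try ring)
      rw [key]
      exact combo3 hconv hP1 hP2 hP3 h1
        (div_nonneg hg1 hVU.le)
        (div_nonneg (mul_nonneg hV.le (by linarith)) hVU.le)
        (by field_simp; ring)
    · push_neg at hg1
      by_cases hg2 : 0 ≤ (u : ℝ) * m1 + (u + 2 * v) * m2 - u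
      · -- triangle P1 P3 P4
        have key : ((m1, m2) : ℝ × ℝ)
            = (((2 * u + v) * m1 + v * m2 - u) / (u + v)) • ((1 : ℝ), (0 : ℝ))
            + ((v * ((u : ℝ) * m1 + (u + 2 * v) * m2 - u)) / (u * (u + v)))
                • ((0 : ℝ), (u : ℝ) / (v : ℝ))
            + ((-2 * ((u : ℝ) * m1 + v * m2 - u)) / u)
                • ((u : ℝ) / (2 * ((u : ℝ) + (v : ℝ))), (u : ℝ) / (2 * ((u : ℝ) + (v : ℝ)))) := by
          simp only [Prod.smul_mk, Prod.mk_add_mk, Prod.mk.injEq, smul_eq_mul]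
          constructor <;> (field_simp; try ring)
        rw [key]
        exact combo3 hconv hP1 hP3 hP4
          (div_nonneg hx hUpV.le)
          (div_nonneg (mul_nonneg hV.le hg2) (by positivity))
          (div_nonneg (by linarith) hU.le)
          (by field_simp; ring)
      · push_neg at hg2
        -- triangle P1 P4 P5
        have key : ((m1, m2) : ℝ × ℝ)
            = ((v * m1 + (v + 2 * u) * m2 - u) / (v - u)) • ((1 : ℝ), (0 : ℝ))
            + ((2 * (u + v) * m2) / u)
                • ((u : ℝ) / (2 * ((u : ℝ) + (v : ℝ))), (u : ℝ) / (2 * ((u : ℝ) + (v : ℝ))))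
            + ((-(v : ℝ) * ((u : ℝ) * m1 + (u + 2 * v) * m2 - u)) / (u * (v - u)))
                • ((u : ℝ) / (v : ℝ), (0 : ℝ)) := by
          simp only [Prod.smul_mk, Prod.mk_add_mk, Prod.mk.injEq, smul_eq_mul]
          constructor <;> (field_simp; try ring)
        rw [key]
        exact combo3 hconv hP1 hP4 hP5
          (div_nonneg hy hVU.le)
          (div_nonneg (by positivity) hU.le)
          (div_nonneg (by nlinarith) (by positivity))
          (by field_simp; ring)
  · -- hull ⊆ pentagon
    apply convexHull_min
    · rintro p hp
      simp only [Set.mem_insert_iff, Set.mem_singleton_iff] at hp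
      rcases hp with h | h | h | h | h <;> subst h <;>
          simp only [Set.mem_setOf_eq] <;> refine ⟨?_, ?_, ?_, ?_, ?_⟩
      · norm_num
      · norm_num
      · norm_num
      · linarith
      · linarith
      · norm_num
      · norm_num
      · norm_num
      · linarith
      · linarith
      · norm_num
      · positivity
      · rw [zero_add, div_le_one hV]; linarith
      · have e : (2 * (u : ℝ) + v) * 0 + v * (u / v) - u = 0 := by field_simp; ring
        linarith
      · have e : (v : ℝ) * 0 + (v + 2 * u) * (u / v) - u = 2 * u * u / v := by
          field_simp; ring
        rw [e]; positivity
      · positivity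
      · positivity
      · rw [← add_div, div_le_one (by positivity)]; linarith
      · have e : (2 * (u : ℝ) + v) * (u / (2 * (u + v))) + v * (u / (2 * (u + v))) - u = 0 := by
          field_simp; ring
        linarith
      · have e : (v : ℝ) * (u / (2 * (u + v))) + (v + 2 * u) * (u / (2 * (u + v))) - u = 0 := by
          field_simp; ring
        linarith
      · positivity
      · norm_num
      · rw [add_zero, div_le_one hV]; linarith
      · have e : (2 * (u : ℝ) + v) * (u / v) + v * 0 - u = 2 * u * u / v := by
          field_simp; ring
        rw [e]; positivity
      · have e : (v : ℝ) * (u / v) + (v + 2 * u) * 0 - u = 0 := by field_simp; ring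
        linarith
    · clear hset
      rintro ⟨p1, p2⟩ hp ⟨q1, q2⟩ hq a b ha hb hab
      simp only [Set.mem_setOf_eq] at hp hq
      obtain ⟨hp1, hp2, hp3, hp4, hp5⟩ := hp
      obtain ⟨hq1, hq2, hq3, hq4, hq5⟩ := hq
      have habu : a * (u : ℝ) + b * (u : ℝ) = (u : ℝ) := by rw [← add_mul, hab, one_mul]
      refine Set.mem_setOf_eq ▸ ?_
      simp only [Prod.smul_mk, Prod.mk_add_mk, smul_eq_mul]
      refine ⟨by positivity, by positivity, ?_, ?_, ?_⟩
      · linarith [mul_nonneg ha (by linarith : (0:ℝ) ≤ 1 - p1 - p2),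
          mul_nonneg hb (by linarith : (0:ℝ) ≤ 1 - q1 - q2)]
      · linarith [mul_nonneg ha hp4, mul_nonneg hb hq4, habu]
      · linarith [mul_nonneg ha hp5, mul_nonneg hb hq5, habu]
end

section
/- Let u < v be positive integers and t > 0. The function (x, y) ↦ ( |x|^{2(2u+2v)} + |y|^{2(2u+2v)} + |x|^{2v} |y|^{2v} )^{− t u / (2v(u+v))} is integrable on the open unit polydisc { (x,y) ∈ ℂ² | |x| < 1, |y| < 1 } if and only if t < 2(1 + v/u). In particular, sup { t > 0 | this function is integrable } = 2(1 + v/u). -/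
open MeasureTheory


namespace Stmt12Aux

open Set Metric Real
open scoped ENNReal NNReal

noncomputable def rr (n : ℕ) : ℝ := (1/2 : ℝ) ^ n

lemma rr_pos (n : ℕ) : 0 < rr n := pow_pos (by norm_num) n

lemma rr_le_one (n : ℕ) : rr n ≤ 1 := pow_le_one₀ (by norm_num) (by norm_num)

lemma rr_anti {m n : ℕ} (h : m ≤ n) : rr n ≤ rr m :=
  pow_le_pow_of_le_one (by norm_num) (by norm_num) h

lemma rr_succ (n : ℕ) : rr (n+1) = rr n * (1/2) := pow_succ _ _

def A (n : ℕ) : Set ℂ := ball 0 (rr n) \ ball 0 (rr (n+1))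

lemma measurableSet_A (n : ℕ) : MeasurableSet (A n) :=
  measurableSet_ball.diff measurableSet_ball

lemma mem_A_iff {z : ℂ} {n : ℕ} :
    z ∈ A n ↔ rr (n+1) ≤ ‖z‖ ∧ ‖z‖ < rr n := by
  simp [A, mem_ball_zero_iff, not_lt, and_comm]

lemma A_subset_unit (n : ℕ) : A n ⊆ ball 0 1 :=
  (diff_subset).trans (ball_subset_ball (rr_le_one n))

lemma A_disjoint : ∀ m n : ℕ, m ≠ n → Disjoint (A m) (A n) := by
  have key : ∀ m n : ℕ, m < n → Disjoint (A m) (A n) := by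
    intro m n hmn
    rw [Set.disjoint_left]
    intro z hzm hzn
    have h1 := (mem_A_iff.mp hzm).1
    have h2 := (mem_A_iff.mp hzn).2
    have : rr n ≤ rr (m+1) := rr_anti hmn
    linarith
  intro m n hmn
  rcases lt_or_gt_of_ne hmn with h | h
  · exact key m n h
  · exact (key n m h).symm

lemma exists_mem_A {z : ℂ} (hz : z ≠ 0) (h1 : ‖z‖ < 1) : ∃ n, z ∈ A n := by
  classical
  have habs : 0 < ‖z‖ := norm_pos_iff.mpr hz
  have hex : ∃ k, rr k ≤ ‖z‖ := by
    obtain ⟨k, hk⟩ := exists_pow_lt_of_lt_one habs (by norm_num : (1/2:ℝ) < 1)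
    exact ⟨k, hk.le⟩
  have hk0 : rr (Nat.find hex) ≤ ‖z‖ := Nat.find_spec hex
  have hne : Nat.find hex ≠ 0 := by
    intro h0
    rw [h0] at hk0
    simp only [rr, pow_zero] at hk0
    linarith
  obtain ⟨n, hn⟩ := Nat.exists_eq_succ_of_ne_zero hne
  rw [hn] at hk0
  have hmin : ¬ rr n ≤ ‖z‖ := Nat.find_min hex (by omega)
  exact ⟨n, mem_A_iff.mpr ⟨hk0, not_le.mp hmin⟩⟩

lemma pi_le_four' : (NNReal.pi : ℝ≥0∞) ≤ 4 := by
  have h : (NNReal.pi : ℝ) ≤ 4 := by rw [NNReal.coe_real_pi]; exact Real.pi_le_four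
  have h2 : NNReal.pi ≤ (4:ℝ≥0) := by exact_mod_cast h
  exact_mod_cast h2

lemma vol_A_le (n : ℕ) : volume (A n) ≤ ENNReal.ofReal (4 * rr n ^ 2) := by
  calc volume (A n) ≤ volume (ball (0:ℂ) (rr n)) := measure_mono diff_subset
    _ = ENNReal.ofReal (rr n) ^ 2 * NNReal.pi := Complex.volume_ball 0 (rr n)
    _ ≤ ENNReal.ofReal (rr n) ^ 2 * 4 := by gcongr; exact pi_le_four'
    _ = ENNReal.ofReal (4 * rr n ^ 2) := by
        rw [← ENNReal.ofReal_pow (rr_pos n).le, show (4:ℝ≥0∞) = ENNReal.ofReal 4 by norm_num,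
          ← ENNReal.ofReal_mul (by positivity)]
        ring_nf

lemma vol_A_eq (n : ℕ) :
    volume (A n) = ENNReal.ofReal (3/4 * rr n ^ 2) * NNReal.pi := by
  have hsub : ball (0:ℂ) (rr (n+1)) ⊆ ball 0 (rr n) :=
    ball_subset_ball (rr_anti (Nat.le_succ n))
  rw [A, measure_diff hsub measurableSet_ball.nullMeasurableSet measure_ball_lt_top.ne,
    Complex.volume_ball, Complex.volume_ball,
    ← ENNReal.ofReal_pow (rr_pos n).le, ← ENNReal.ofReal_pow (rr_pos (n+1)).le,
    ← ENNReal.sub_mul (fun _ _ => ENNReal.coe_ne_top),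
    ← ENNReal.ofReal_sub _ (by positivity)]
  congr 2
  rw [rr_succ]
  ring

lemma rpow_neg_anti {x y s : ℝ} (hx : 0 < x) (hxy : x ≤ y) (hs : 0 ≤ s) :
    y ^ (-s) ≤ x ^ (-s) :=
  Real.rpow_le_rpow_of_nonpos hx hxy (neg_nonpos.mpr hs)

lemma pow_rpow_comm {x : ℝ} (hx : 0 ≤ x) (K : ℕ) (c : ℝ) :
    (x ^ K) ^ c = (x ^ c) ^ K := by
  rw [← Real.rpow_natCast x K, ← Real.rpow_mul hx, mul_comm ((K:ℕ):ℝ) c,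
    Real.rpow_mul hx, Real.rpow_natCast]


noncomputable def f (u v : ℕ) (x : ℂ × ℂ) : ℝ :=
  ‖x.1‖ ^ (2*(2*u+2*v)) + ‖x.2‖ ^ (2*(2*u+2*v)) +
    ‖x.1‖ ^ (2*v) * ‖x.2‖ ^ (2*v)

noncomputable def F (u v : ℕ) (s : ℝ) (x : ℂ × ℂ) : ℝ := f u v x ^ (-s)

variable {u v : ℕ} {s : ℝ}

lemma f_nonneg (x : ℂ × ℂ) : 0 ≤ f u v x := by unfold f; positivity

lemma F_nonneg (x : ℂ × ℂ) : 0 ≤ F u v s x := Real.rpow_nonneg (f_nonneg x) _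

lemma measurable_F : Measurable (F u v s) := by
  have h1 : Measurable fun x : ℂ × ℂ => ‖x.1‖ :=
    continuous_norm.measurable.comp measurable_fst
  have h2 : Measurable fun x : ℂ × ℂ => ‖x.2‖ :=
    continuous_norm.measurable.comp measurable_snd
  have h3 : Measurable fun y : ℝ => y ^ (-s) := by measurability
  exact h3.comp (((h1.pow_const _).add (h2.pow_const _)).add
    ((h1.pow_const _).mul (h2.pow_const _)))

lemma f_lower (x : ℂ × ℂ) :
    ‖x.1‖ ^ (2*v) * ‖x.2‖ ^ (2*v) ≤ f u v x := by
  have h1 : (0:ℝ) ≤ ‖x.1‖ ^ (2*(2*u+2*v)) := by positivity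
  have h2 : (0:ℝ) ≤ ‖x.2‖ ^ (2*(2*u+2*v)) := by positivity
  unfold f; linarith

lemma F_le_on {m n : ℕ} {x : ℂ × ℂ} (hs : 0 ≤ s) (hx : x.1 ∈ A m) (hy : x.2 ∈ A n) :
    F u v s x ≤ (rr (m+1) ^ (2*v)) ^ (-s) * (rr (n+1) ^ (2*v)) ^ (-s) := by
  have hxa := (mem_A_iff.mp hx).1
  have hya := (mem_A_iff.mp hy).1
  have h1 : (0:ℝ) < rr (m+1) ^ (2*v) * rr (n+1) ^ (2*v) :=
    mul_pos (pow_pos (rr_pos _) _) (pow_pos (rr_pos _) _)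
  have h2 : rr (m+1) ^ (2*v) * rr (n+1) ^ (2*v) ≤ f u v x := by
    refine le_trans ?_ (f_lower x)
    have h3 : rr (m+1) ^ (2*v) ≤ ‖x.1‖ ^ (2*v) :=
      pow_le_pow_left₀ (rr_pos (m+1)).le hxa _
    have h4 : rr (n+1) ^ (2*v) ≤ ‖x.2‖ ^ (2*v) :=
      pow_le_pow_left₀ (rr_pos (n+1)).le hya _
    have h5 : (0:ℝ) ≤ rr (m+1) ^ (2*v) := (pow_pos (rr_pos _) _).le
    have h6 : (0:ℝ) ≤ ‖x.2‖ ^ (2*v) := by positivity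
    nlinarith
  calc F u v s x ≤ (rr (m+1) ^ (2*v) * rr (n+1) ^ (2*v)) ^ (-s) := rpow_neg_anti h1 h2 hs
    _ = _ := Real.mul_rpow (pow_pos (rr_pos _) _).le (pow_pos (rr_pos _) _).le

lemma F_ge_on {n : ℕ} {x : ℂ × ℂ} (hs : 0 ≤ s) (hx : x.1 ∈ A n) (hy : x.2 ∈ A n) :
    (3 * rr n ^ (4*v)) ^ (-s) ≤ F u v s x := by
  obtain ⟨hx1, hx2⟩ := mem_A_iff.mp hx
  obtain ⟨hy1, hy2⟩ := mem_A_iff.mp hy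
  have ha0 : (0:ℝ) ≤ ‖x.1‖ := norm_nonneg _
  have hb0 : (0:ℝ) ≤ ‖x.2‖ := norm_nonneg _
  have ha1 : ‖x.1‖ ≤ 1 := hx2.le.trans (rr_le_one n)
  have hb1 : ‖x.2‖ ≤ 1 := hy2.le.trans (rr_le_one n)
  have e1 : ‖x.1‖ ^ (2*(2*u+2*v)) ≤ rr n ^ (4*v) :=
    le_trans (pow_le_pow_of_le_one ha0 ha1 (by omega))
      (pow_le_pow_left₀ ha0 hx2.le _)
  have e2 : ‖x.2‖ ^ (2*(2*u+2*v)) ≤ rr n ^ (4*v) :=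
    le_trans (pow_le_pow_of_le_one hb0 hb1 (by omega))
      (pow_le_pow_left₀ hb0 hy2.le _)
  have e3 : ‖x.1‖ ^ (2*v) * ‖x.2‖ ^ (2*v) ≤ rr n ^ (4*v) := by
    have h3 : ‖x.1‖ ^ (2*v) ≤ rr n ^ (2*v) := pow_le_pow_left₀ ha0 hx2.le _
    have h4 : ‖x.2‖ ^ (2*v) ≤ rr n ^ (2*v) := pow_le_pow_left₀ hb0 hy2.le _
    have h5 : rr n ^ (2*v) * rr n ^ (2*v) = rr n ^ (4*v) := by
      rw [← pow_add]; congr 1; omega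
    have h6 : (0:ℝ) ≤ ‖x.1‖ ^ (2*v) := by positivity
    have h7 : (0:ℝ) ≤ rr n ^ (2*v) := (pow_pos (rr_pos _) _).le
    nlinarith
  have key : f u v x ≤ 3 * rr n ^ (4*v) := by unfold f; linarith
  have hf0 : 0 < f u v x := by
    refine lt_of_lt_of_le ?_ (f_lower x)
    have hxa0 : 0 < ‖x.1‖ := lt_of_lt_of_le (rr_pos (n+1)) hx1
    have hya0 : 0 < ‖x.2‖ := lt_of_lt_of_le (rr_pos (n+1)) hy1
    positivity
  exact rpow_neg_anti hf0 key hs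


lemma Gval (m : ℕ) :
    4 * rr m ^ 2 * (rr (m+1) ^ (2*v)) ^ (-s) =
      (4 * ((1/2:ℝ) ^ (-s)) ^ (2*v)) * ((((1/2:ℝ) ^ (-s)) ^ (2*v)) / 4) ^ m := by
  have h1 : rr (m+1) ^ (2*v) = (1/2:ℝ) ^ ((m+1)*(2*v)) := by rw [rr, ← pow_mul]
  have h2 : rr m ^ 2 = (1/4:ℝ) ^ m := by
    rw [rr, ← pow_mul, mul_comm, pow_mul]; norm_num
  rw [h1, h2, pow_rpow_comm (by norm_num : (0:ℝ) ≤ 1/2)]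
  ring

lemma ratio_lt_one (hv : 0 < v) (hvs : (v:ℝ)*s < 1) :
    (((1/2:ℝ) ^ (-s)) ^ (2*v)) / 4 < 1 := by
  rw [div_lt_one (by norm_num)]
  rw [← pow_rpow_comm (by norm_num : (0:ℝ) ≤ 1/2) (2*v) (-s)]
  have h2 : (1/2:ℝ) ^ (2*v) = (1/4:ℝ) ^ v := by rw [pow_mul]; norm_num
  rw [h2, pow_rpow_comm (by norm_num : (0:ℝ) ≤ 1/4) v (-s)]
  have h3 : (1/4:ℝ) ^ (-s) = (4:ℝ) ^ s := by
    rw [one_div, Real.inv_rpow (by norm_num), Real.rpow_neg (by norm_num), inv_inv]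
  rw [h3, ← Real.rpow_natCast ((4:ℝ) ^ s) v, ← Real.rpow_mul (by norm_num)]
  calc (4:ℝ) ^ (s * (v:ℝ)) < 4 ^ (1:ℝ) :=
        Real.rpow_lt_rpow_of_exponent_lt (by norm_num) (by rw [mul_comm]; exact hvs)
    _ = 4 := Real.rpow_one 4

lemma cover_subset :
    (ball (0:ℂ) 1 ×ˢ ball (0:ℂ) 1) ⊆
      (({(0:ℂ)} ×ˢ (univ : Set ℂ)) ∪ ((univ : Set ℂ) ×ˢ {(0:ℂ)})) ∪
        ⋃ p : ℕ × ℕ, A p.1 ×ˢ A p.2 := by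
  rintro x ⟨hx1, hx2⟩
  rw [mem_ball_zero_iff] at hx1 hx2
  by_cases h1 : x.1 = 0
  · exact Or.inl (Or.inl ⟨h1, trivial⟩)
  by_cases h2 : x.2 = 0
  · exact Or.inl (Or.inr ⟨trivial, h2⟩)
  obtain ⟨m, hm⟩ := exists_mem_A h1 hx1
  obtain ⟨n, hn⟩ := exists_mem_A h2 hx2
  exact Or.inr (mem_iUnion.mpr ⟨(m, n), hm, hn⟩)

lemma null_axes :
    volume ((({(0:ℂ)} ×ˢ (univ : Set ℂ)) ∪ ((univ : Set ℂ) ×ˢ {(0:ℂ)}))) = 0 := by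
  apply measure_union_null <;>
    rw [Measure.volume_eq_prod, Measure.prod_prod] <;>
    simp [measure_singleton]

lemma integrable_side (hs : 0 ≤ s) (hv : 0 < v) (hvs : (v:ℝ)*s < 1) :
    IntegrableOn (F u v s) (ball (0:ℂ) 1 ×ˢ ball (0:ℂ) 1) volume := by
  refine ⟨(measurable_F).aestronglyMeasurable, ?_⟩
  rw [hasFiniteIntegral_iff_ofReal (Filter.Eventually.of_forall fun x => F_nonneg x)]
  set Gr : ℕ → ℝ := fun m => 4 * rr m ^ 2 * (rr (m+1) ^ (2*v)) ^ (-s) with hGr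
  have hGr0 : ∀ m, 0 ≤ Gr m := fun m => by
    have := rr_pos m; have := rr_pos (m+1)
    have h1 : (0:ℝ) ≤ (rr (m+1) ^ (2*v)) ^ (-s) :=
      Real.rpow_nonneg (pow_pos (rr_pos _) _).le _
    positivity
  have hpiece : ∀ p : ℕ × ℕ, (∫⁻ x in A p.1 ×ˢ A p.2, ENNReal.ofReal (F u v s x)) ≤
      ENNReal.ofReal (Gr p.1) * ENNReal.ofReal (Gr p.2) := by
    rintro ⟨m, n⟩
    have hP0 : (0:ℝ) ≤ (rr (m+1) ^ (2*v)) ^ (-s) * (rr (n+1) ^ (2*v)) ^ (-s) :=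
      mul_nonneg (Real.rpow_nonneg (pow_pos (rr_pos _) _).le _)
        (Real.rpow_nonneg (pow_pos (rr_pos _) _).le _)
    calc (∫⁻ x in A m ×ˢ A n, ENNReal.ofReal (F u v s x))
        ≤ ∫⁻ _ in A m ×ˢ A n,
            ENNReal.ofReal ((rr (m+1) ^ (2*v)) ^ (-s) * (rr (n+1) ^ (2*v)) ^ (-s)) :=
          setLIntegral_mono' ((measurableSet_A m).prod (measurableSet_A n))
            (fun x hx => ENNReal.ofReal_le_ofReal (F_le_on hs hx.1 hx.2))
      _ = ENNReal.ofReal ((rr (m+1) ^ (2*v)) ^ (-s) * (rr (n+1) ^ (2*v)) ^ (-s)) *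
            volume (A m ×ˢ A n) := setLIntegral_const _ _
      _ ≤ ENNReal.ofReal ((rr (m+1) ^ (2*v)) ^ (-s) * (rr (n+1) ^ (2*v)) ^ (-s)) *
            (ENNReal.ofReal (4 * rr m ^ 2) * ENNReal.ofReal (4 * rr n ^ 2)) := by
          gcongr
          rw [Measure.volume_eq_prod, Measure.prod_prod]
          exact mul_le_mul' (vol_A_le m) (vol_A_le n)
      _ = ENNReal.ofReal (Gr m) * ENNReal.ofReal (Gr n) := by
          rw [← ENNReal.ofReal_mul (by positivity), ← ENNReal.ofReal_mul hP0,
            ← ENNReal.ofReal_mul (hGr0 m)]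
          congr 1
          simp only [hGr]
          ring
  set q : ℝ≥0∞ := ENNReal.ofReal ((((1/2:ℝ) ^ (-s)) ^ (2*v)) / 4) with hq
  have hc0 : (0:ℝ) ≤ ((1/2:ℝ) ^ (-s)) ^ (2*v) :=
    (pow_pos (Real.rpow_pos_of_pos (by norm_num) _) _).le
  have hGrq : ∀ m, ENNReal.ofReal (Gr m) =
      ENNReal.ofReal (4 * ((1/2:ℝ) ^ (-s)) ^ (2*v)) * q ^ m := by
    intro m
    rw [hGr]
    simp only
    rw [Gval m, ENNReal.ofReal_mul (by positivity), hq, ENNReal.ofReal_pow (by positivity)]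
  have hS : (∑' m : ℕ, ENNReal.ofReal (Gr m)) < ⊤ := by
    simp_rw [hGrq]
    rw [ENNReal.tsum_mul_left, ENNReal.tsum_geometric]
    refine ENNReal.mul_lt_top ENNReal.ofReal_lt_top ?_
    rw [ENNReal.inv_lt_top, tsub_pos_iff_lt]
    exact ENNReal.ofReal_lt_one.mpr (ratio_lt_one hv hvs)
  calc (∫⁻ x in ball (0:ℂ) 1 ×ˢ ball (0:ℂ) 1, ENNReal.ofReal (F u v s x))
      ≤ ∫⁻ x in (({(0:ℂ)} ×ˢ (univ : Set ℂ)) ∪ ((univ : Set ℂ) ×ˢ {(0:ℂ)})) ∪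
          ⋃ p : ℕ × ℕ, A p.1 ×ˢ A p.2, ENNReal.ofReal (F u v s x) :=
        lintegral_mono_set cover_subset
    _ ≤ (∫⁻ x in (({(0:ℂ)} ×ˢ (univ : Set ℂ)) ∪ ((univ : Set ℂ) ×ˢ {(0:ℂ)})),
          ENNReal.ofReal (F u v s x)) +
        ∫⁻ x in ⋃ p : ℕ × ℕ, A p.1 ×ˢ A p.2, ENNReal.ofReal (F u v s x) :=
        lintegral_union_le _ _ _
    _ ≤ 0 + ∑' p : ℕ × ℕ, ∫⁻ x in A p.1 ×ˢ A p.2, ENNReal.ofReal (F u v s x) := by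
        gcongr
        · exact le_of_eq (setLIntegral_measure_zero _ _ null_axes)
        · exact lintegral_iUnion_le _ _
    _ ≤ 0 + ∑' p : ℕ × ℕ, ENNReal.ofReal (Gr p.1) * ENNReal.ofReal (Gr p.2) := by
        gcongr
        exact hpiece _
    _ < ⊤ := by
        rw [zero_add,
          ENNReal.tsum_prod (f := fun m n => ENNReal.ofReal (Gr m) * ENNReal.ofReal (Gr n))]
        simp_rw [ENNReal.tsum_mul_left]
        rw [ENNReal.tsum_mul_right]
        exact ENNReal.mul_lt_top hS hS


lemma Lval (n : ℕ) (hs : 0 ≤ s) (hv : 0 < v) (hvs : 1 ≤ (v:ℝ)*s) :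
    (3:ℝ) ^ (-s) * (3/4)^2 ≤ (3 * rr n ^ (4*v)) ^ (-s) * (3/4 * rr n ^ 2)^2 := by
  have hr0 := rr_pos n
  have h1 : ((3:ℝ) * rr n ^ (4*v)) ^ (-s) = 3 ^ (-s) * (rr n ^ (4*v)) ^ (-s) :=
    Real.mul_rpow (by norm_num) (by positivity)
  have h2 : ((rr n ^ (4:ℕ)) : ℝ)⁻¹ ≤ (rr n ^ (4*v)) ^ (-s) := by
    have e1 : (rr n ^ (4*v) : ℝ) ^ (-s) = rr n ^ (((4*v : ℕ):ℝ) * (-s)) := by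
      rw [← Real.rpow_natCast (rr n) (4*v), ← Real.rpow_mul hr0.le]
    have e2 : ((rr n : ℝ)) ^ ((-4 : ℝ)) = (rr n ^ (4:ℕ))⁻¹ := by
      rw [Real.rpow_neg hr0.le]
      congr 1
      rw [show ((4:ℝ)) = ((4:ℕ):ℝ) by norm_num, Real.rpow_natCast]
    rw [e1, ← e2]
    apply Real.rpow_le_rpow_of_exponent_ge hr0 (rr_le_one n)
    push_cast
    nlinarith
  have h3 : (0:ℝ) < (3:ℝ) ^ (-s) := Real.rpow_pos_of_pos (by norm_num) _
  have h4 : (rr n ^ (4:ℕ) : ℝ) ≠ 0 := by positivity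
  calc (3:ℝ) ^ (-s) * (3/4)^2
      = 3 ^ (-s) * ((rr n ^ (4:ℕ))⁻¹ * (3/4 * rr n ^ 2)^2) := by
        field_simp
    _ ≤ 3 ^ (-s) * ((rr n ^ (4*v)) ^ (-s) * (3/4 * rr n ^ 2)^2) := by
        have h5 : (0:ℝ) ≤ (3/4 * rr n ^ 2)^2 := sq_nonneg _
        have := mul_le_mul_of_nonneg_right h2 h5
        nlinarith
    _ = (3 * rr n ^ (4*v)) ^ (-s) * (3/4 * rr n ^ 2)^2 := by rw [h1]; ring

lemma not_integrable_side (hs : 0 ≤ s) (hv : 0 < v) (hvs : 1 ≤ (v:ℝ)*s) :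
    ¬ IntegrableOn (F u v s) (ball (0:ℂ) 1 ×ˢ ball (0:ℂ) 1) volume := by
  intro hInt
  have hfin := hInt.2
  rw [hasFiniteIntegral_iff_ofReal (Filter.Eventually.of_forall fun x => F_nonneg x)] at hfin
  set c : ℝ≥0∞ := ENNReal.ofReal ((3:ℝ)^(-s) * (3/4)^2) * (NNReal.pi : ℝ≥0∞)^2 with hc
  have hc0 : c ≠ 0 := by
    apply mul_ne_zero
    · rw [Ne, ENNReal.ofReal_eq_zero, not_le]
      have h3 : (0:ℝ) < (3:ℝ) ^ (-s) := Real.rpow_pos_of_pos (by norm_num) _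
      positivity
    · apply pow_ne_zero
      rw [Ne, ENNReal.coe_eq_zero]
      intro h
      apply Real.pi_ne_zero
      rw [← NNReal.coe_real_pi, h, NNReal.coe_zero]
  have hpiece : ∀ n : ℕ, c ≤ ∫⁻ x in A n ×ˢ A n, ENNReal.ofReal (F u v s x) := by
    intro n
    have hL0 : (0:ℝ) ≤ (3 * rr n ^ (4*v)) ^ (-s) :=
      Real.rpow_nonneg (mul_nonneg (by norm_num) (pow_nonneg (rr_pos n).le _)) _
    have hw0 : (0:ℝ) ≤ 3/4 * rr n ^ 2 :=
      mul_nonneg (by norm_num) (sq_nonneg _)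
    have e1 : ENNReal.ofReal ((3 * rr n ^ (4*v)) ^ (-s)) * volume (A n ×ˢ A n)
        = ENNReal.ofReal ((3 * rr n ^ (4*v)) ^ (-s) * (3/4 * rr n ^ 2)^2) *
            (NNReal.pi : ℝ≥0∞)^2 := by
      rw [Measure.volume_eq_prod, Measure.prod_prod, vol_A_eq]
      calc ENNReal.ofReal ((3 * rr n ^ (4*v)) ^ (-s)) *
            (ENNReal.ofReal (3/4 * rr n ^ 2) * NNReal.pi *
              (ENNReal.ofReal (3/4 * rr n ^ 2) * NNReal.pi))
          = ENNReal.ofReal ((3 * rr n ^ (4*v)) ^ (-s)) * ENNReal.ofReal (3/4 * rr n ^ 2) *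
              ENNReal.ofReal (3/4 * rr n ^ 2) * (NNReal.pi : ℝ≥0∞)^2 := by ring
        _ = ENNReal.ofReal ((3 * rr n ^ (4*v)) ^ (-s) * (3/4 * rr n ^ 2) * (3/4 * rr n ^ 2)) *
              (NNReal.pi : ℝ≥0∞)^2 := by
            rw [← ENNReal.ofReal_mul hL0, ← ENNReal.ofReal_mul (mul_nonneg hL0 hw0)]
        _ = ENNReal.ofReal ((3 * rr n ^ (4*v)) ^ (-s) * (3/4 * rr n ^ 2)^2) *
              (NNReal.pi : ℝ≥0∞)^2 := by
            congr 1
            congr 1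
            ring
    calc c ≤ ENNReal.ofReal ((3 * rr n ^ (4*v)) ^ (-s)) * volume (A n ×ˢ A n) := by
          rw [e1, hc]
          exact mul_le_mul_left (ENNReal.ofReal_le_ofReal (Lval n hs hv hvs)) _
      _ = ∫⁻ _ in A n ×ˢ A n, ENNReal.ofReal ((3 * rr n ^ (4*v)) ^ (-s)) :=
          (setLIntegral_const _ _).symm
      _ ≤ ∫⁻ x in A n ×ˢ A n, ENNReal.ofReal (F u v s x) :=
          setLIntegral_mono' ((measurableSet_A n).prod (measurableSet_A n))
            (fun x hx => ENNReal.ofReal_le_ofReal (F_ge_on hs hx.1 hx.2))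
  have hdisj : Pairwise (Function.onFun Disjoint (fun n : ℕ => A n ×ˢ A n)) :=
    fun m n hmn => Set.disjoint_left.mpr fun {x} hx1 hx2 =>
      Set.disjoint_left.mp (A_disjoint m n hmn) hx1.1 hx2.1
  have htop : (⊤:ℝ≥0∞) ≤ ∫⁻ x in ball (0:ℂ) 1 ×ˢ ball (0:ℂ) 1, ENNReal.ofReal (F u v s x) := by
    calc (⊤:ℝ≥0∞) = ∑' _ : ℕ, c := (ENNReal.tsum_const_eq_top_of_ne_zero hc0).symm
      _ ≤ ∑' n : ℕ, ∫⁻ x in A n ×ˢ A n, ENNReal.ofReal (F u v s x) :=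
          ENNReal.tsum_le_tsum hpiece
      _ = ∫⁻ x in ⋃ n : ℕ, A n ×ˢ A n, ENNReal.ofReal (F u v s x) :=
          (lintegral_iUnion (fun n => (measurableSet_A n).prod (measurableSet_A n)) hdisj _).symm
      _ ≤ _ := lintegral_mono_set
          (iUnion_subset fun n => prod_mono (A_subset_unit n) (A_subset_unit n))
  exact absurd (lt_of_le_of_lt htop hfin) (lt_irrefl ⊤)

end Stmt12Aux


open Stmt12Aux Metric in
/-- In Example 6.1 of the paper, the function
`(x,y) ↦ (|x|^{2(2u+2v)} + |y|^{2(2u+2v)} + |x|^{2v}|y|^{2v})^{-tu/(2v(u+v))}`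
is integrable on the open unit polydisc iff `t < 2(1 + v/u)`; in particular the supremum of
such `t` is `2(1 + v/u)`. -/
theorem stmt_12 (u v : ℕ) (hu : 0 < u) (huv : u < v) :
    (∀ t : ℝ, 0 < t →
      (IntegrableOn
          (fun x : ℂ × ℂ =>
            (‖x.1‖ ^ (2 * (2 * u + 2 * v)) + ‖x.2‖ ^ (2 * (2 * u + 2 * v)) +
              ‖x.1‖ ^ (2 * v) * ‖x.2‖ ^ (2 * v)) ^
                (-(t * (u : ℝ) / (2 * (v : ℝ) * ((u : ℝ) + (v : ℝ))))))
          {x : ℂ × ℂ | ‖x.1‖ < 1 ∧ ‖x.2‖ < 1} volume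
        ↔ t < 2 * (1 + (v : ℝ) / (u : ℝ)))) ∧
    sSup {t : ℝ | 0 < t ∧ IntegrableOn
        (fun x : ℂ × ℂ =>
          (‖x.1‖ ^ (2 * (2 * u + 2 * v)) + ‖x.2‖ ^ (2 * (2 * u + 2 * v)) +
            ‖x.1‖ ^ (2 * v) * ‖x.2‖ ^ (2 * v)) ^
              (-(t * (u : ℝ) / (2 * (v : ℝ) * ((u : ℝ) + (v : ℝ))))))
        {x : ℂ × ℂ | ‖x.1‖ < 1 ∧ ‖x.2‖ < 1} volume}
      = 2 * (1 + (v : ℝ) / (u : ℝ)) := by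
  have hv : 0 < v := lt_trans hu huv
  have hu' : (0:ℝ) < u := Nat.cast_pos.mpr hu
  have hv' : (0:ℝ) < v := Nat.cast_pos.mpr hv
  have hB : (0:ℝ) < 2 * (1 + (v:ℝ)/(u:ℝ)) := by positivity
  have hPeq : {x : ℂ × ℂ | ‖x.1‖ < 1 ∧ ‖x.2‖ < 1}
      = Metric.ball (0:ℂ) 1 ×ˢ Metric.ball (0:ℂ) 1 := by
    ext x
    simp [Set.mem_prod, mem_ball_zero_iff]
  have key : ∀ t : ℝ, 0 < t →
      ((v:ℝ) * (t * (u:ℝ) / (2 * (v:ℝ) * ((u:ℝ)+(v:ℝ)))) < 1 ↔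
        t < 2 * (1 + (v:ℝ)/(u:ℝ))) := by
    intro t ht
    have h : (v:ℝ) * (t * (u:ℝ) / (2 * (v:ℝ) * ((u:ℝ)+(v:ℝ)))) =
        t * (u:ℝ) / (2*((u:ℝ)+(v:ℝ))) := by
      field_simp
    have hE : (2:ℝ) * (1 + (v:ℝ)/(u:ℝ)) = (2*((u:ℝ)+(v:ℝ)))/(u:ℝ) := by
      field_simp
    rw [h, div_lt_one (by positivity), hE, lt_div_iff₀ hu']
  have main : ∀ t : ℝ, 0 < t →
      (IntegrableOn
          (fun x : ℂ × ℂ =>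
            (‖x.1‖ ^ (2 * (2 * u + 2 * v)) + ‖x.2‖ ^ (2 * (2 * u + 2 * v)) +
              ‖x.1‖ ^ (2 * v) * ‖x.2‖ ^ (2 * v)) ^
                (-(t * (u : ℝ) / (2 * (v : ℝ) * ((u : ℝ) + (v : ℝ))))))
          {x : ℂ × ℂ | ‖x.1‖ < 1 ∧ ‖x.2‖ < 1} volume
        ↔ t < 2 * (1 + (v : ℝ) / (u : ℝ))) := by
    intro t ht
    have hs0 : 0 ≤ t * (u:ℝ) / (2 * (v:ℝ) * ((u:ℝ)+(v:ℝ))) := by positivity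
    rw [hPeq]
    constructor
    · intro hI
      by_contra hlt
      have h1 : 1 ≤ (v:ℝ) * (t * (u:ℝ) / (2 * (v:ℝ) * ((u:ℝ)+(v:ℝ)))) := by
        rcases le_or_gt 1 ((v:ℝ) * (t * (u:ℝ) / (2 * (v:ℝ) * ((u:ℝ)+(v:ℝ))))) with h | h
        · exact h
        · exact absurd ((key t ht).mp h) hlt
      exact Stmt12Aux.not_integrable_side (u := u) hs0 hv h1 hI
    · intro hlt
      exact Stmt12Aux.integrable_side (u := u) hs0 hv ((key t ht).mpr hlt)
  refine ⟨main, ?_⟩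
  have hset : {t : ℝ | 0 < t ∧ IntegrableOn
        (fun x : ℂ × ℂ =>
          (‖x.1‖ ^ (2 * (2 * u + 2 * v)) + ‖x.2‖ ^ (2 * (2 * u + 2 * v)) +
            ‖x.1‖ ^ (2 * v) * ‖x.2‖ ^ (2 * v)) ^
              (-(t * (u : ℝ) / (2 * (v : ℝ) * ((u : ℝ) + (v : ℝ))))))
        {x : ℂ × ℂ | ‖x.1‖ < 1 ∧ ‖x.2‖ < 1} volume}
      = Set.Ioo 0 (2 * (1 + (v:ℝ)/(u:ℝ))) := by
    ext t
    simp only [Set.mem_setOf_eq, Set.mem_Ioo]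
    constructor
    · rintro ⟨ht, hI⟩
      exact ⟨ht, (main t ht).mp hI⟩
    · rintro ⟨ht, hlt⟩
      exact ⟨ht, (main t ht).mpr hlt⟩
  rw [hset]
  exact csSup_Ioo hB
end

section
/- Define N : ℝ² → ℝ³ by N(m₁, m₂) = (1 − m₁ − m₂)·(4, 4, 1) + m₂·(−1, 9, 1), and let Nef = { (a, b, c) ∈ ℝ³ | ab + bc + ca ≥ 0, a + b + c ≥ 0 }. Then { m ∈ ℝ² | m₁ ≥ 0, m₂ ≥ 0, m₁ + m₂ ≤ 1, N(m) ∈ Nef } equals the convex hull in ℝ² of the three points (0, 0), (1, 0), (0, 2√6/5). -/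
/-- In Example 6.3 of the paper, the set
`{ m ∈ ℝ² | m₁, m₂ ≥ 0, m₁ + m₂ ≤ 1, N(m) ∈ Nef }` equals the convex hull of the three points
`(0,0), (1,0), (0, 2√6/5)`. -/
theorem stmt_14 :
    {m : ℝ × ℝ | 0 ≤ m.1 ∧ 0 ≤ m.2 ∧ m.1 + m.2 ≤ 1 ∧
      (((1 - m.1 - m.2) * 4 + m.2 * (-1),
        (1 - m.1 - m.2) * 4 + m.2 * 9,
        (1 - m.1 - m.2) * 1 + m.2 * 1) ∈
        {x : ℝ × ℝ × ℝ | 0 ≤ x.1 * x.2.1 + x.2.1 * x.2.2 + x.2.2 * x.1 ∧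
          0 ≤ x.1 + x.2.1 + x.2.2})}
    = convexHull ℝ {((0 : ℝ), (0 : ℝ)), ((1 : ℝ), (0 : ℝ)),
        ((0 : ℝ), 2 * Real.sqrt 6 / 5)} := by
  have hs : Real.sqrt 6 * Real.sqrt 6 = 6 := Real.mul_self_sqrt (by norm_num)
  have hs0 : (0:ℝ) < Real.sqrt 6 := Real.sqrt_pos.mpr (by norm_num)
  set s : ℝ := Real.sqrt 6 with hsdef
  have hs2 : (2:ℝ) ≤ s := by nlinarith
  have hs3 : s ≤ 5/2 := by nlinarith
  have hT : {m : ℝ × ℝ | 0 ≤ m.1 ∧ 0 ≤ m.2 ∧ m.1 + m.2 ≤ 1 ∧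
      (((1 - m.1 - m.2) * 4 + m.2 * (-1),
        (1 - m.1 - m.2) * 4 + m.2 * 9,
        (1 - m.1 - m.2) * 1 + m.2 * 1) ∈
        {x : ℝ × ℝ × ℝ | 0 ≤ x.1 * x.2.1 + x.2.1 * x.2.2 + x.2.2 * x.1 ∧
          0 ≤ x.1 + x.2.1 + x.2.2})}
      = {m : ℝ × ℝ | 0 ≤ m.1 ∧ 0 ≤ m.2 ∧ 2*s*m.1 + 5*m.2 ≤ 2*s} := by
    ext m
    simp only [Set.mem_setOf_eq]
    constructor
    · rintro ⟨h1, h2, h3, h4, h5⟩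
      refine ⟨h1, h2, ?_⟩
      have hu : (0:ℝ) ≤ 1 - m.1 := by linarith
      have hQ : 25 * m.2^2 ≤ 24 * (1 - m.1)^2 := by nlinarith [h4]
      have key : 5 * m.2 ≤ 2*s*(1 - m.1) := by
        have h25 : (5 * m.2)^2 ≤ (2*s*(1 - m.1))^2 := by nlinarith
        exact (pow_le_pow_iff_left₀ (by positivity)
          (mul_nonneg (by positivity) hu) two_ne_zero).mp h25
      linarith
    · rintro ⟨h1, h2, h3⟩
      have h4 : m.1 + m.2 ≤ 1 := by nlinarith
      have h5 : 5*m.2 ≤ 2*s*(1-m.1) := by linarith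
      refine ⟨h1, h2, h4, ?_, ?_⟩
      · nlinarith [mul_nonneg hs0.le (by linarith : (0:ℝ) ≤ 1 - m.1),
          mul_le_mul h5 h5 (by linarith) (by nlinarith)]
      · nlinarith
  rw [hT]
  apply Set.Subset.antisymm
  · rintro m ⟨h1, h2, h3⟩
    rw [convexHull_insert (by simp), convexHull_pair, mem_convexJoin]
    have hm1 : m.1 ≤ 1 := by nlinarith
    set c : ℝ := 5*m.2/(2*s) with hc
    have hc0 : 0 ≤ c := by positivity
    have hc1 : c ≤ 1 - m.1 := by
      rw [hc, div_le_iff₀ (by positivity)]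
      nlinarith
    have ht1 : m.1 + c ≤ 1 := by linarith
    rcases eq_or_lt_of_le (by positivity : (0:ℝ) ≤ m.1 + c) with h0 | h0
    · have hm10 : m.1 = 0 := by linarith
      have hm20 : m.2 = 0 := by
        have hcc : c = 0 := by linarith
        rw [hc] at hcc
        field_simp at hcc
        linarith
      refine ⟨(0,0), rfl, ((1:ℝ),(0:ℝ)), left_mem_segment ℝ _ _, ?_⟩
      have : m = ((0:ℝ),(0:ℝ)) := Prod.ext hm10 hm20
      rw [this]
      exact left_mem_segment ℝ _ _
    · set t : ℝ := m.1 + c with htdef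
      have ht0 : t ≠ 0 := ne_of_gt h0
      refine ⟨(0,0), rfl, (m.1/t, c/t * (2*s/5)), ?_, ?_⟩
      · refine ⟨m.1/t, c/t, by positivity, by positivity, by field_simp; exact htdef.symm, ?_⟩
        simp only [Prod.smul_mk, Prod.mk_add_mk, smul_eq_mul, Prod.mk.injEq]
        constructor <;> ring
      · refine ⟨1 - t, t, by linarith, le_of_lt h0, by ring, ?_⟩
        have heq : (1-t) • ((0:ℝ),(0:ℝ)) + t • (m.1/t, c/t * (2*s/5)) = (m.1, m.2) := by
          simp only [Prod.smul_mk, Prod.mk_add_mk, smul_eq_mul, Prod.mk.injEq]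
          refine ⟨?_, ?_⟩
          · rw [mul_zero, zero_add, mul_div_cancel₀ _ ht0]
          · rw [mul_zero, zero_add, ← mul_assoc, mul_div_cancel₀ _ ht0, hc]
            field_simp
        rw [heq]
  · apply convexHull_min
    · rintro x (rfl | rfl | rfl) <;> refine ⟨?_, ?_, ?_⟩ <;> simp <;> linarith
    · rintro x ⟨hx1, hx2, hx3⟩ y ⟨hy1, hy2, hy3⟩ a b ha hb hab
      refine ⟨?_, ?_, ?_⟩
      · simpa using add_nonneg (mul_nonneg ha hx1) (mul_nonneg hb hy1)
      · simpa using add_nonneg (mul_nonneg ha hx2) (mul_nonneg hb hy2)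
      · have h1 := mul_le_mul_of_nonneg_left hx3 ha
        have h2 := mul_le_mul_of_nonneg_left hy3 hb
        simp only [Prod.fst_add, Prod.snd_add, Prod.smul_fst, Prod.smul_snd, smul_eq_mul]
        nlinarith
end

section
/- Let α = 1 − 2√6/5 (a positive irrational real number). For every p, q ∈ ℕ and every t > 0, the function (x, y) ↦ |x|^{2p} |y|^{2q} ( |x|^{2α} + |y|² )^{−t} is integrable on the open unit polydisc { (x,y) ∈ ℂ² | |x| < 1, |y| < 1 } if and only if t < (p+1)/α + (q+1). In particular, sup { t > 0 | (x,y) ↦ (|x|^{2α} + |y|²)^{−t} is integrable on the open unit polydisc } = 1 + 1/α. -/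
open MeasureTheory


open MeasureTheory Set Metric
open scoped ENNReal

noncomputable section

namespace Stmt15Aux

def kC : ℝ≥0∞ := (volume : Measure ℂ).toSphere Set.univ

lemma kC_ne_zero : kC ≠ 0 := by
  rw [kC, Measure.toSphere_apply_univ]
  exact mul_ne_zero (by simp [Complex.finrank_real_complex]) (measure_ball_pos _ _ one_pos).ne'

lemma kC_ne_top : kC ≠ ⊤ := measure_ne_top _ _

lemma lintegral_comp_abs (f : ℝ → ℝ≥0∞) (hf : Measurable f) :
    ∫⁻ z : ℂ, f (‖z‖) = kC * ∫⁻ r in Ioi (0 : ℝ), ENNReal.ofReal r * f r := by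
  have h0 : (∫⁻ x : ({(0 : ℂ)}ᶜ : Set ℂ), f (‖x.1‖)
        ∂((volume : Measure ℂ).comap (↑)))
      = ∫⁻ z : ℂ, f (‖z‖) := by
    rw [lintegral_subtype_comap (measurableSet_singleton (0 : ℂ)).compl
      (fun z : ℂ => f (‖z‖)), MeasureTheory.restrict_compl_singleton]
  have hmeas : Measurable fun p : sphere (0 : ℂ) 1 × Ioi (0 : ℝ) => f p.2.1 :=
    hf.comp (measurable_subtype_coe.comp measurable_snd)
  have h1 := ((volume : Measure ℂ).measurePreserving_homeomorphUnitSphereProd).lintegral_comp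
    hmeas
  have h2 : (∫⁻ x : ({(0 : ℂ)}ᶜ : Set ℂ),
        f ((homeomorphUnitSphereProd ℂ x).2 : ℝ) ∂((volume : Measure ℂ).comap (↑)))
      = ∫⁻ x : ({(0 : ℂ)}ᶜ : Set ℂ), f (‖x.1‖)
        ∂((volume : Measure ℂ).comap (↑)) := by
    refine lintegral_congr fun x => ?_
    simp
  rw [← h0, ← h2, h1]
  -- now : ∫⁻ p, f p.2.1 ∂(toSphere.prod (volumeIoiPow (dim - 1))) = kC * ...
  rw [lintegral_prod _ hmeas.aemeasurable]
  simp only [Complex.finrank_real_complex]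
  have h3 : (∫⁻ r : Ioi (0:ℝ), f r.1 ∂(Measure.volumeIoiPow (2 - 1)))
      = ∫⁻ r in Ioi (0 : ℝ), ENNReal.ofReal r * f r := by
    rw [Measure.volumeIoiPow,
      lintegral_withDensity_eq_lintegral_mul (g := fun r : Ioi (0:ℝ) => f r.1) _
        ((measurable_subtype_coe.pow_const _).ennreal_ofReal)
        (hf.comp measurable_subtype_coe)]
    have : (∫⁻ a : Ioi (0:ℝ), ((fun r : Ioi (0:ℝ) => ENNReal.ofReal (r.1 ^ (2 - 1))) *
        fun r : Ioi (0:ℝ) => f r.1) a ∂(Measure.comap Subtype.val volume))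
        = ∫⁻ a : Ioi (0:ℝ), (fun x : ℝ => ENNReal.ofReal x * f x) a.1
          ∂(Measure.comap Subtype.val volume) := by
      refine lintegral_congr fun a => ?_
      simp [pow_one]
    rw [this, lintegral_subtype_comap measurableSet_Ioi (fun x : ℝ => ENNReal.ofReal x * f x)]
  calc (∫⁻ s : sphere (0:ℂ) 1, ∫⁻ r : Ioi (0:ℝ), f r.1 ∂(Measure.volumeIoiPow (2-1))
        ∂(volume : Measure ℂ).toSphere)
      = ∫⁻ _ : sphere (0:ℂ) 1, (∫⁻ r in Ioi (0:ℝ), ENNReal.ofReal r * f r)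
        ∂(volume : Measure ℂ).toSphere := by rw [h3]
    _ = kC * ∫⁻ r in Ioi (0 : ℝ), ENNReal.ofReal r * f r := by
        rw [lintegral_const, kC, mul_comm]

lemma lintegral_comp_abs_ball (f : ℝ → ℝ≥0∞) (hf : Measurable f) :
    ∫⁻ z in {z : ℂ | ‖z‖ < 1}, f (‖z‖)
      = kC * ∫⁻ r in Ioo (0 : ℝ) 1, ENNReal.ofReal r * f r := by
  have hs : MeasurableSet {z : ℂ | ‖z‖ < 1} :=
    measurableSet_lt (continuous_norm.measurable) measurable_const
  have h1 : (∫⁻ z in {z : ℂ | ‖z‖ < 1}, f (‖z‖))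
      = ∫⁻ z : ℂ, ((Iio (1:ℝ)).indicator f) (‖z‖) := by
    rw [← lintegral_indicator hs]
    refine lintegral_congr fun z => ?_
    by_cases h : ‖z‖ < 1
    · simp [h, indicator_of_mem, mem_setOf_eq]
    · simp [h, indicator_of_notMem, mem_setOf_eq]
  rw [h1, lintegral_comp_abs _ (hf.indicator measurableSet_Iio)]
  congr 1
  have h2 : ∀ r : ℝ, ENNReal.ofReal r * (Iio (1:ℝ)).indicator f r
      = (Iio (1:ℝ)).indicator (fun r => ENNReal.ofReal r * f r) r := by
    intro r
    by_cases h : r ∈ Iio (1:ℝ) <;> simp [h]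
  calc (∫⁻ r in Ioi (0:ℝ), ENNReal.ofReal r * (Iio (1:ℝ)).indicator f r)
      = ∫⁻ r in Ioi (0:ℝ), (Iio (1:ℝ)).indicator (fun r => ENNReal.ofReal r * f r) r :=
        lintegral_congr fun r => h2 r
    _ = ∫⁻ r in Ioi (0:ℝ) ∩ Iio (1:ℝ), ENNReal.ofReal r * f r := by
        rw [lintegral_indicator measurableSet_Iio, Measure.restrict_restrict measurableSet_Iio,
          inter_comm]
    _ = ∫⁻ r in Ioo (0 : ℝ) 1, ENNReal.ofReal r * f r := by rw [Ioi_inter_Iio]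

lemma ennreal_mul_lt_top_iff {a b : ℝ≥0∞} (h0 : a ≠ 0) (ht : a ≠ ⊤) :
    a * b < ⊤ ↔ b < ⊤ := by
  constructor
  · intro h
    by_contra hb
    rw [not_lt, top_le_iff] at hb
    rw [hb, ENNReal.mul_top h0] at h
    exact (lt_irrefl _ h)
  · intro h
    exact ENNReal.mul_lt_top ht.lt_top h

lemma integrableOn_polydisc_iff (g : ℝ → ℝ → ℝ) (hg : Measurable (Function.uncurry g))
    (hpos : ∀ r s, 0 ≤ r → 0 ≤ s → 0 ≤ g r s) :
    IntegrableOn (fun z : ℂ × ℂ => g (‖z.1‖) (‖z.2‖))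
      {x : ℂ × ℂ | ‖x.1‖ < 1 ∧ ‖x.2‖ < 1} volume ↔
    (∫⁻ r in Ioo (0:ℝ) 1, ∫⁻ s in Ioo (0:ℝ) 1, ENNReal.ofReal (r * s * g r s)) < ⊤ := by
  set A : Set ℂ := {z : ℂ | ‖z‖ < 1} with hA
  have hAm : MeasurableSet A := measurableSet_lt (continuous_norm.measurable)
    measurable_const
  have hD : {x : ℂ × ℂ | ‖x.1‖ < 1 ∧ ‖x.2‖ < 1} = A ×ˢ A := rfl
  have hF : Measurable (fun z : ℂ × ℂ => g (‖z.1‖) (‖z.2‖)) :=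
    hg.comp ((continuous_norm.measurable.comp measurable_fst).prodMk
      (continuous_norm.measurable.comp measurable_snd))
  set H : ℝ → ℝ≥0∞ := fun r => ∫⁻ s in Ioo (0:ℝ) 1, ENNReal.ofReal s * ENNReal.ofReal (g r s)
    with hHdef
  have hHmeas : Measurable H := by
    apply Measurable.lintegral_prod_right (f := fun r s => ENNReal.ofReal s * ENNReal.ofReal (g r s))
    exact ((measurable_snd.ennreal_ofReal).mul (hg.ennreal_ofReal))
  have key : (∫⁻ z in A ×ˢ A, ENNReal.ofReal (g (‖z.1‖) (‖z.2‖)) ∂volume)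
      = kC * (kC * ∫⁻ r in Ioo (0:ℝ) 1, ∫⁻ s in Ioo (0:ℝ) 1,
          ENNReal.ofReal (r * s * g r s)) := by
    rw [MeasureTheory.Measure.volume_eq_prod, ← Measure.prod_restrict,
      lintegral_prod _ (hF.ennreal_ofReal.aemeasurable)]
    have inner : ∀ x : ℂ, (∫⁻ y in A, ENNReal.ofReal (g (‖x‖) (‖y‖)))
        = kC * H (‖x‖) := by
      intro x
      exact lintegral_comp_abs_ball (fun s => ENNReal.ofReal (g (‖x‖) s))
        ((hg.comp (measurable_const.prodMk measurable_id)).ennreal_ofReal)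
    calc (∫⁻ x in A, ∫⁻ y in A, ENNReal.ofReal (g (‖x‖) (‖y‖)))
        = ∫⁻ x in A, kC * H (‖x‖) := lintegral_congr fun x => inner x
      _ = kC * ∫⁻ x in A, H (‖x‖) := lintegral_const_mul' _ _ kC_ne_top
      _ = kC * (kC * ∫⁻ r in Ioo (0:ℝ) 1, ENNReal.ofReal r * H r) := by
          rw [lintegral_comp_abs_ball H hHmeas]
      _ = kC * (kC * ∫⁻ r in Ioo (0:ℝ) 1, ∫⁻ s in Ioo (0:ℝ) 1,
            ENNReal.ofReal (r * s * g r s)) := by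
          congr 1
          congr 1
          refine setLIntegral_congr_fun measurableSet_Ioo (fun r hr => ?_)
          rw [hHdef]
          rw [← lintegral_const_mul' _ _ ENNReal.ofReal_ne_top]
          refine setLIntegral_congr_fun measurableSet_Ioo (fun s hs => ?_)
          rw [ENNReal.ofReal_mul (mul_nonneg hr.1.le hs.1.le), ENNReal.ofReal_mul hr.1.le, mul_assoc]
  have h1 : IntegrableOn (fun z : ℂ × ℂ => g (‖z.1‖) (‖z.2‖))
      (A ×ˢ A) volume ↔
      (∫⁻ z in A ×ˢ A, ENNReal.ofReal (g (‖z.1‖) (‖z.2‖)) ∂volume) < ⊤ := by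
    constructor
    · intro h
      exact (hasFiniteIntegral_iff_ofReal (ae_of_all _ fun z =>
        hpos _ _ (norm_nonneg _) (norm_nonneg _))).1 h.2
    · intro h
      exact ⟨hF.aestronglyMeasurable, (hasFiniteIntegral_iff_ofReal
        (ae_of_all _ fun z => hpos _ _ (norm_nonneg _) (norm_nonneg _))).2 h⟩
  rw [hD, h1, key, ennreal_mul_lt_top_iff kC_ne_zero kC_ne_top,
    ennreal_mul_lt_top_iff kC_ne_zero kC_ne_top]

lemma fin1 {e : ℝ} (he : -1 < e) :
    (∫⁻ r in Ioo (0:ℝ) 1, ENNReal.ofReal (r ^ e)) < ⊤ := by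
  have hi : IntegrableOn (fun x : ℝ => x ^ e) (Ioo (0:ℝ) 1) :=
    (intervalIntegral.integrableOn_Ioo_rpow_iff one_pos).2 he
  refine lt_of_le_of_lt (lintegral_mono fun x => ?_) hi.2
  rw [Real.enorm_eq_ofReal_abs]
  exact ENNReal.ofReal_le_ofReal (le_abs_self _)

lemma inf1 {e : ℝ} (he : e ≤ -1) :
    (∫⁻ r in Ioo (0:ℝ) 1, ENNReal.ofReal (r ^ e)) = ⊤ := by
  by_contra h
  have hmeas : Measurable (fun x : ℝ => x ^ e) := by fun_prop
  have hfi : HasFiniteIntegral (fun x : ℝ => x ^ e) (volume.restrict (Ioo (0:ℝ) 1)) := by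
    refine (hasFiniteIntegral_iff_ofReal ?_).2 (lt_top_iff_ne_top.2 h)
    refine (ae_restrict_iff' measurableSet_Ioo).2 (ae_of_all _ fun x hx => ?_)
    exact Real.rpow_nonneg hx.1.le e
  have : IntegrableOn (fun x : ℝ => x ^ e) (Ioo (0:ℝ) 1) :=
    ⟨hmeas.aestronglyMeasurable, hfi⟩
  have := (intervalIntegral.integrableOn_Ioo_rpow_iff one_pos).1 this
  linarith

lemma lower_pow {c u : ℝ} (hc : 0 ≤ c) (hu : 0 < u) :
    ENNReal.ofReal ((u/2) ^ (c+1)) ≤ ∫⁻ s in Ioo (0:ℝ) u, ENNReal.ofReal (s ^ c) := by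
  have h1 : (∫⁻ s in Ioo (u/2) u, ENNReal.ofReal (s ^ c))
      ≤ ∫⁻ s in Ioo (0:ℝ) u, ENNReal.ofReal (s ^ c) :=
    lintegral_mono' (Measure.restrict_mono (Ioo_subset_Ioo (by linarith) le_rfl) le_rfl) le_rfl
  refine le_trans ?_ h1
  have h2 : (∫⁻ _ in Ioo (u/2) u, ENNReal.ofReal ((u/2) ^ c))
      ≤ ∫⁻ s in Ioo (u/2) u, ENNReal.ofReal (s ^ c) := by
    refine setLIntegral_mono (by fun_prop) fun s hs => ?_
    exact ENNReal.ofReal_le_ofReal (Real.rpow_le_rpow (by linarith) hs.1.le hc)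
  refine le_trans ?_ h2
  rw [setLIntegral_const, Real.volume_Ioo, show u - u/2 = u/2 by ring,
    Real.rpow_add (by linarith : (0:ℝ) < u/2), Real.rpow_one,
    ENNReal.ofReal_mul (Real.rpow_nonneg (by linarith) c)]

lemma key_ineq {A B a b : ℝ} (hA : 0 < A) (hB : 0 < B) (ha : 0 ≤ a) (hb : 0 ≤ b) :
    (A + B) ^ (-(a+b)) ≤ A ^ (-a) * B ^ (-b) := by
  have h1 : A ^ a * B ^ b ≤ (A+B) ^ (a+b) := by
    rw [Real.rpow_add (by positivity)]
    exact mul_le_mul (Real.rpow_le_rpow hA.le (by linarith) ha)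
      (Real.rpow_le_rpow hB.le (by linarith) hb) (by positivity) (by positivity)
  rw [Real.rpow_neg (by positivity : (0:ℝ) ≤ A+B), Real.rpow_neg hA.le, Real.rpow_neg hB.le,
    ← mul_inv]
  exact inv_anti₀ (by positivity) h1

lemma split {α p q t : ℝ} (hα : 0 < α) (hp : 0 ≤ p) (hq : 0 ≤ q) (ht : 0 < t)
    (hlt : t < (p+1)/α + (q+1)) :
    ∃ a b : ℝ, 0 ≤ a ∧ 0 ≤ b ∧ a + b = t ∧ α * a < p + 1 ∧ b < q + 1 := by
  rcases lt_or_ge t (q+1) with h | h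
  · refine ⟨0, t, le_rfl, ht.le, by ring, by nlinarith, h⟩
  · set ε := min (q+1) ((p+1)/α + (q+1) - t) / 2 with hε
    have hε1 : 0 < ε := by
      apply div_pos _ (by norm_num)
      exact lt_min (by linarith) (by linarith)
    have hεq : ε ≤ (q+1)/2 := by
      have := min_le_left (q+1) ((p+1)/α + (q+1) - t); rw [hε]; linarith
    have hεT : ε ≤ ((p+1)/α + (q+1) - t)/2 := by
      have := min_le_right (q+1) ((p+1)/α + (q+1) - t); rw [hε]; linarith
    refine ⟨t - (q+1) + ε, (q+1) - ε, by linarith, by linarith, by ring, ?_, by linarith⟩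
    have hT : t - (q+1) + ε < (p+1)/α := by linarith
    calc α * (t-(q+1)+ε) < α * ((p+1)/α) := mul_lt_mul_of_pos_left hT hα
      _ = p+1 := by field_simp

lemma real_iff {α p q t : ℝ} (hα : 0 < α) (hp : 0 ≤ p) (hq : 0 ≤ q) (ht : 0 < t) :
    (∫⁻ r in Ioo (0:ℝ) 1, ∫⁻ s in Ioo (0:ℝ) 1,
        ENNReal.ofReal (r * s * (r ^ (2*p) * s ^ (2*q) * (r ^ (2*α) + s ^ 2) ^ (-t)))) < ⊤
      ↔ t < (p+1)/α + (q+1) := by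
  constructor
  · -- not integrable if t ≥ threshold (contrapositive)
    intro hI
    by_contra hT
    push_neg at hT
    set C : ℝ := 2^(-t) * (1/2 : ℝ)^(2*q+1+1) with hCdef
    set E : ℝ := 2*p+1-2*α*t+2*(α*(q+1)) with hEdef
    have hC : 0 < C := by positivity
    have hE : E ≤ -1 := by
      have h2 : α * ((p+1)/α + (q+1)) ≤ α * t := mul_le_mul_of_nonneg_left hT hα.le
      rw [mul_add, mul_div_cancel₀ _ (ne_of_gt hα)] at h2
      rw [hEdef]; linarith
    have pointwise2 : ∀ r ∈ Ioo (0:ℝ) 1, ∀ s ∈ Ioo (0:ℝ) (r ^ α),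
        2^(-t) * r^(2*p+1-2*α*t) * s^(2*q+1)
          ≤ r * s * (r ^ (2*p) * s ^ (2*q) * (r ^ (2*α) + s ^ 2) ^ (-t)) := by
      intro r hr s hs
      have hr0 : 0 < r := hr.1
      have hs0 : 0 < s := hs.1
      have hrα : 0 < r ^ α := Real.rpow_pos_of_pos hr0 α
      have hs2 : s ^ 2 ≤ r ^ (2*α) := by
        have h5 : s ^ 2 ≤ (r^α)^2 := by nlinarith [hs.2, hs.1]
        have h6 : (r^α)^(2:ℕ) = r ^ (2*α) := by
          rw [← Real.rpow_natCast (r^α) 2, ← Real.rpow_mul hr0.le]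
          norm_num [mul_comm]
        calc s ^ 2 ≤ (r^α)^2 := h5
          _ = r ^ (2*α) := h6
      have hX : (2:ℝ)^(-t) * r^(-(2*α*t)) ≤ (r ^ (2*α) + s ^ 2) ^ (-t) := by
        have h3 : (r ^ (2*α) + s^2) ≤ 2 * r^(2*α) := by linarith
        have h4 : (2 * r^(2*α)) ^ (-t) ≤ (r ^ (2*α) + s ^ 2) ^ (-t) :=
          Real.rpow_le_rpow_of_nonpos (by positivity) h3 (by linarith)
        refine le_trans (le_of_eq ?_) h4
        rw [Real.mul_rpow (by norm_num) (Real.rpow_nonneg hr0.le _),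
          ← Real.rpow_mul hr0.le]
        ring_nf
      calc 2^(-t) * r^(2*p+1-2*α*t) * s^(2*q+1)
          = (r * r^(2*p) * (s * s^(2*q))) * (2^(-t) * r^(-(2*α*t))) := by
            rw [show (2*p+1-2*α*t) = 2*p + -(2*α*t) + 1 by ring,
              Real.rpow_add hr0, Real.rpow_add hr0, Real.rpow_one,
              Real.rpow_add hs0, Real.rpow_one]
            ring
        _ ≤ (r * r^(2*p) * (s * s^(2*q))) * ((r ^ (2*α) + s ^ 2) ^ (-t)) :=
            mul_le_mul_of_nonneg_left hX (by positivity)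
        _ = r * s * (r ^ (2*p) * s ^ (2*q) * (r ^ (2*α) + s ^ 2) ^ (-t)) := by ring
    have main : ∀ r ∈ Ioo (0:ℝ) 1, ENNReal.ofReal (C * r ^ E)
        ≤ ∫⁻ s in Ioo (0:ℝ) 1,
            ENNReal.ofReal (r * s * (r ^ (2*p) * s ^ (2*q) * (r ^ (2*α) + s ^ 2) ^ (-t))) := by
      intro r hr
      have hr0 : 0 < r := hr.1
      have hrα : 0 < r ^ α := Real.rpow_pos_of_pos hr0 α
      have hrα1 : r ^ α < 1 := Real.rpow_lt_one hr0.le hr.2 hα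
      have step0 : C * r ^ E = (2^(-t) * r^(2*p+1-2*α*t)) * ((r^α/2)^(2*q+1+1)) := by
        rw [show r^α/2 = r^α * (1/2) by ring,
          Real.mul_rpow hrα.le (by norm_num), ← Real.rpow_mul hr0.le,
          show α*(2*q+1+1) = 2*(α*(q+1)) by ring, hCdef, hEdef,
          show (2*p+1-2*α*t+2*(α*(q+1))) = (2*p+1-2*α*t) + 2*(α*(q+1)) by ring,
          Real.rpow_add hr0]
        ring
      calc ENNReal.ofReal (C * r ^ E)
          = ENNReal.ofReal (2^(-t) * r^(2*p+1-2*α*t))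
              * ENNReal.ofReal ((r^α/2)^(2*q+1+1)) := by
            rw [step0, ENNReal.ofReal_mul (by positivity)]
        _ ≤ ENNReal.ofReal (2^(-t) * r^(2*p+1-2*α*t))
              * ∫⁻ s in Ioo (0:ℝ) (r^α), ENNReal.ofReal (s^(2*q+1)) :=
            mul_le_mul_right (lower_pow (by linarith) hrα) _
        _ = ∫⁻ s in Ioo (0:ℝ) (r^α),
              ENNReal.ofReal (2^(-t) * r^(2*p+1-2*α*t)) * ENNReal.ofReal (s^(2*q+1)) :=
            (lintegral_const_mul' _ _ ENNReal.ofReal_ne_top).symm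
        _ ≤ ∫⁻ s in Ioo (0:ℝ) (r^α),
              ENNReal.ofReal (r * s * (r ^ (2*p) * s ^ (2*q) * (r ^ (2*α) + s ^ 2) ^ (-t))) := by
            refine setLIntegral_mono' measurableSet_Ioo fun s hs => ?_
            rw [← ENNReal.ofReal_mul (by positivity)]
            exact ENNReal.ofReal_le_ofReal (pointwise2 r hr s hs)
        _ ≤ ∫⁻ s in Ioo (0:ℝ) 1,
              ENNReal.ofReal (r * s * (r ^ (2*p) * s ^ (2*q) * (r ^ (2*α) + s ^ 2) ^ (-t))) :=
            lintegral_mono' (Measure.restrict_mono (Ioo_subset_Ioo le_rfl hrα1.le) le_rfl) le_rfl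
    have e1 : (∫⁻ r in Ioo (0:ℝ) 1, ENNReal.ofReal (C * r ^ E)) = ⊤ := by
      calc (∫⁻ r in Ioo (0:ℝ) 1, ENNReal.ofReal (C * r ^ E))
          = ∫⁻ r in Ioo (0:ℝ) 1, ENNReal.ofReal C * ENNReal.ofReal (r ^ E) := by
            refine setLIntegral_congr_fun measurableSet_Ioo (fun r hr => ?_)
            rw [ENNReal.ofReal_mul hC.le]
        _ = ENNReal.ofReal C * ∫⁻ r in Ioo (0:ℝ) 1, ENNReal.ofReal (r ^ E) :=
            lintegral_const_mul' _ _ ENNReal.ofReal_ne_top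
        _ = ⊤ := by rw [inf1 hE, ENNReal.mul_top ((ENNReal.ofReal_pos.2 hC).ne')]
    have : (⊤:ℝ≥0∞) ≤ ∫⁻ r in Ioo (0:ℝ) 1, ∫⁻ s in Ioo (0:ℝ) 1,
        ENNReal.ofReal (r * s * (r ^ (2*p) * s ^ (2*q) * (r ^ (2*α) + s ^ 2) ^ (-t))) := by
      rw [← e1]
      exact setLIntegral_mono' measurableSet_Ioo main
    exact absurd (lt_of_le_of_lt this hI) (lt_irrefl _)
  · intro hlt
    obtain ⟨a, b, ha, hb, hab, hpa, hqb⟩ := split hα hp hq ht hlt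
    have hpoint : ∀ r ∈ Ioo (0:ℝ) 1, ∀ s ∈ Ioo (0:ℝ) 1,
        r * s * (r ^ (2*p) * s ^ (2*q) * (r ^ (2*α) + s ^ 2) ^ (-t))
          ≤ r ^ (2*p+1-2*α*a) * s ^ (2*q+1-2*b) := by
      intro r hr s hs
      have hr0 : 0 < r := hr.1
      have hs0 : 0 < s := hs.1
      have hA : 0 < r ^ (2*α) := Real.rpow_pos_of_pos hr0 _
      have hB : (0:ℝ) < s ^ 2 := by positivity
      have h1 : (r ^ (2*α) + s ^ 2) ^ (-t) ≤ r ^ (-(2*α*a)) * s ^ (-(2*b)) := by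
        have h2 := key_ineq hA hB ha hb
        rw [hab] at h2
        refine h2.trans (le_of_eq ?_)
        rw [← Real.rpow_natCast s 2, ← Real.rpow_mul hr0.le, ← Real.rpow_mul hs0.le]
        congr 1
        · congr 1; ring
        · congr 1; push_cast; ring
      have c0 : (0:ℝ) ≤ r * r^(2*p) * (s * s^(2*q)) := by positivity
      calc r * s * (r ^ (2*p) * s ^ (2*q) * (r ^ (2*α) + s ^ 2) ^ (-t))
          = (r * r^(2*p) * (s * s^(2*q))) * ((r ^ (2*α) + s ^ 2) ^ (-t)) := by ring
        _ ≤ (r * r^(2*p) * (s * s^(2*q))) * (r ^ (-(2*α*a)) * s ^ (-(2*b))) :=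
            mul_le_mul_of_nonneg_left h1 c0
        _ = r ^ (2*p+1-2*α*a) * s ^ (2*q+1-2*b) := by
            rw [show (2*p+1-2*α*a) = 2*p + -(2*α*a) + 1 by ring,
              show (2*q+1-2*b) = 2*q + -(2*b) + 1 by ring,
              Real.rpow_add hr0, Real.rpow_add hr0, Real.rpow_add hs0, Real.rpow_add hs0,
              Real.rpow_one, Real.rpow_one]
            ring
    have K2 := fin1 (show (-1:ℝ) < 2*q+1-2*b by linarith)
    have K1 := fin1 (show (-1:ℝ) < 2*p+1-2*α*a by linarith)
    calc (∫⁻ r in Ioo (0:ℝ) 1, ∫⁻ s in Ioo (0:ℝ) 1,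
          ENNReal.ofReal (r * s * (r ^ (2*p) * s ^ (2*q) * (r ^ (2*α) + s ^ 2) ^ (-t))))
        ≤ ∫⁻ r in Ioo (0:ℝ) 1, ENNReal.ofReal (r ^ (2*p+1-2*α*a))
            * ∫⁻ s in Ioo (0:ℝ) 1, ENNReal.ofReal (s ^ (2*q+1-2*b)) := by
          refine setLIntegral_mono' measurableSet_Ioo fun r hr => ?_
          rw [← lintegral_const_mul' _ _ ENNReal.ofReal_ne_top]
          refine setLIntegral_mono' measurableSet_Ioo fun s hs => ?_
          rw [← ENNReal.ofReal_mul (Real.rpow_nonneg hr.1.le _)]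
          exact ENNReal.ofReal_le_ofReal (hpoint r hr s hs)
      _ = (∫⁻ r in Ioo (0:ℝ) 1, ENNReal.ofReal (r ^ (2*p+1-2*α*a)))
            * ∫⁻ s in Ioo (0:ℝ) 1, ENNReal.ofReal (s ^ (2*q+1-2*b)) :=
          lintegral_mul_const' _ _ K2.ne
      _ < ⊤ := ENNReal.mul_lt_top K1 K2

end Stmt15Aux


open Stmt15Aux Set Metric
open scoped ENNReal

/-- With `α = 1 − 2√6/5`, the function `(x,y) ↦ |x|^{2p}|y|^{2q}(|x|^{2α}+|y|²)^{-t}`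
is integrable on the open unit polydisc iff `t < (p+1)/α + (q+1)`; in particular the singularity
exponent of `log(|x|^{2α}+|y|²)` is `1 + 1/α`. -/
theorem stmt_15 :
    (∀ p q : ℕ, ∀ t : ℝ, 0 < t →
      (IntegrableOn
          (fun x : ℂ × ℂ =>
            ‖x.1‖ ^ (2 * (p : ℝ)) * ‖x.2‖ ^ (2 * (q : ℝ)) *
              (‖x.1‖ ^ (2 * (1 - 2 * Real.sqrt 6 / 5)) + ‖x.2‖ ^ 2) ^ (-t))
          {x : ℂ × ℂ | ‖x.1‖ < 1 ∧ ‖x.2‖ < 1} volume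
        ↔ t < ((p : ℝ) + 1) / (1 - 2 * Real.sqrt 6 / 5) + ((q : ℝ) + 1))) ∧
    sSup {t : ℝ | 0 < t ∧ IntegrableOn
        (fun x : ℂ × ℂ =>
          (‖x.1‖ ^ (2 * (1 - 2 * Real.sqrt 6 / 5)) + ‖x.2‖ ^ 2) ^ (-t))
        {x : ℂ × ℂ | ‖x.1‖ < 1 ∧ ‖x.2‖ < 1} volume}
      = 1 + 1 / (1 - 2 * Real.sqrt 6 / 5) := by
  have hα : 0 < 1 - 2 * Real.sqrt 6 / 5 := by
    have h6 : Real.sqrt 6 < 5/2 := by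
      rw [show (5/2:ℝ) = Real.sqrt ((5/2)^2) from (Real.sqrt_sq (by norm_num)).symm]
      exact Real.sqrt_lt_sqrt (by norm_num) (by norm_num)
    linarith
  have main : ∀ p q : ℕ, ∀ t : ℝ, 0 < t →
      (IntegrableOn
          (fun x : ℂ × ℂ =>
            ‖x.1‖ ^ (2 * (p : ℝ)) * ‖x.2‖ ^ (2 * (q : ℝ)) *
              (‖x.1‖ ^ (2 * (1 - 2 * Real.sqrt 6 / 5)) + ‖x.2‖ ^ 2) ^ (-t))
          {x : ℂ × ℂ | ‖x.1‖ < 1 ∧ ‖x.2‖ < 1} volume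
        ↔ t < ((p : ℝ) + 1) / (1 - 2 * Real.sqrt 6 / 5) + ((q : ℝ) + 1)) := by
    intro p q t ht
    have hb := integrableOn_polydisc_iff
      (fun r s : ℝ => r ^ (2 * (p:ℝ)) * s ^ (2 * (q:ℝ)) *
        (r ^ (2 * (1 - 2 * Real.sqrt 6 / 5)) + s ^ 2) ^ (-t))
      (by fun_prop)
      (fun r s hr hs => mul_nonneg (mul_nonneg (Real.rpow_nonneg hr _) (Real.rpow_nonneg hs _))
        (Real.rpow_nonneg (add_nonneg (Real.rpow_nonneg hr _) (sq_nonneg s)) _))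
    exact hb.trans (real_iff hα (Nat.cast_nonneg p) (Nat.cast_nonneg q) ht)
  refine ⟨main, ?_⟩
  have hfun : ∀ t : ℝ,
      (fun x : ℂ × ℂ =>
        (‖x.1‖ ^ (2 * (1 - 2 * Real.sqrt 6 / 5)) + ‖x.2‖ ^ 2) ^ (-t))
      = fun x : ℂ × ℂ =>
          ‖x.1‖ ^ (2 * ((0:ℕ) : ℝ)) * ‖x.2‖ ^ (2 * ((0:ℕ) : ℝ)) *
            (‖x.1‖ ^ (2 * (1 - 2 * Real.sqrt 6 / 5)) + ‖x.2‖ ^ 2) ^ (-t) := by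
    intro t; funext x; simp
  have hset : {t : ℝ | 0 < t ∧ IntegrableOn
        (fun x : ℂ × ℂ =>
          (‖x.1‖ ^ (2 * (1 - 2 * Real.sqrt 6 / 5)) + ‖x.2‖ ^ 2) ^ (-t))
        {x : ℂ × ℂ | ‖x.1‖ < 1 ∧ ‖x.2‖ < 1} volume}
      = Set.Ioo 0 (1 + 1 / (1 - 2 * Real.sqrt 6 / 5)) := by
    ext t
    simp only [Set.mem_setOf_eq, Set.mem_Ioo]
    constructor
    · rintro ⟨ht, hint⟩
      refine ⟨ht, ?_⟩
      rw [hfun t] at hint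
      have := (main 0 0 t ht).1 hint
      push_cast at this
      linarith
    · rintro ⟨ht, hlt⟩
      refine ⟨ht, ?_⟩
      rw [hfun t]
      refine (main 0 0 t ht).2 ?_
      push_cast
      linarith
  rw [hset]
  exact csSup_Ioo (by positivity)
end
end
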